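/- arXiv:2002.00985 — 5 statements merged into one kernel-verified Lean document; each statement's English description precedes it below -/
import Mathlib

section
/- For every n ≥ 1 and every quasi-Stirling permutation w of size n, the number of descents of w is at most n; that is, des(w) ≤ n for all w ∈ Q̄_n. -/
open Finset
open scoped Classical

section Aux
open List
variable {α : Type*} [LinearOrder α] [DecidableEq α]

/-- internal descents of a list -/
def idesAux : List α → ℕ
  | a :: b :: t => (if b < a then 1 else 0) + idesAux (b :: t)
  | _ => 0

lemma idesAux_cons_le (a : α) (l : List α) : idesAux (a :: l) ≤ 1 + idesAux l := by
  cases l with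
  | nil => simp [idesAux]
  | cons b t =>
    show (if b < a then 1 else 0) + idesAux (b :: t) ≤ 1 + idesAux (b :: t)
    have : (if b < a then 1 else 0) ≤ 1 := by split <;> omega
    omega

lemma idesAux_middle (x : α) (v : List α) :
    ∀ u : List α, idesAux (u ++ x :: x :: v) ≤ 1 + idesAux (u ++ v) := by
  intro u
  induction u with
  | nil =>
    show idesAux (x :: x :: v) ≤ 1 + idesAux v
    have h0 : idesAux (x :: x :: v) = idesAux (x :: v) := by
      show (if x < x then 1 else 0) + idesAux (x :: v) = idesAux (x :: v)
      simp
    rw [h0]; exact idesAux_cons_le x v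
  | cons c u' ih =>
    cases u' with
    | nil =>
      show idesAux (c :: x :: x :: v) ≤ 1 + idesAux (c :: v)
      have h1 : idesAux (c :: x :: x :: v)
          = (if x < c then 1 else 0) + idesAux (x :: v) := by
        show (if x < c then 1 else 0) + ((if x < x then 1 else 0) + idesAux (x :: v)) = _
        simp
      rw [h1]
      cases v with
      | nil =>
        show (if x < c then 1 else 0) + idesAux [x] ≤ 1 + idesAux [c]
        have : idesAux [x] = 0 := rfl
        have : idesAux [c] = 0 := rfl
        have hle : (if x < c then 1 else 0) ≤ 1 := by split <;> omega
        simp [idesAux] at *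
        omega
      | cons h t =>
        show (if x < c then 1 else 0) + ((if h < x then 1 else 0) + idesAux (h :: t))
            ≤ 1 + ((if h < c then 1 else 0) + idesAux (h :: t))
        have A : (if x < c then 1 else 0) + (if h < x then 1 else 0)
            ≤ 1 + (if h < c then 1 else 0) := by
          split_ifs <;>
            first
              | omega
              | exact absurd (lt_trans ‹h < x› ‹x < c›) ‹¬h < c›
        omega
    | cons d u'' =>
      have hstep : idesAux (c :: d :: u'' ++ x :: x :: v)
          = (if d < c then 1 else 0) + idesAux (d :: u'' ++ x :: x :: v) := rfl
      have hstep2 : idesAux (c :: d :: u'' ++ v)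
          = (if d < c then 1 else 0) + idesAux (d :: u'' ++ v) := rfl
      show idesAux (c :: d :: u'' ++ x :: x :: v) ≤ 1 + idesAux (c :: d :: u'' ++ v)
      rw [hstep, hstep2]
      have := ih
      simp only [List.cons_append] at this ⊢
      omega

/-- first-occurrence split -/
lemma exists_split_first {a : α} : ∀ {t : List α}, a ∈ t →
    ∃ u v : List α, t = u ++ a :: v ∧ a ∉ u := by
  intro t
  induction t with
  | nil => simp
  | cons b t' ih =>
    intro hmem
    by_cases hb : b = a
    · exact ⟨[], t', by simp [hb], by simp⟩
    · have : a ∈ t' := by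
        rcases List.mem_cons.mp hmem with h | h
        · exact absurd h.symm hb
        · exact h
      obtain ⟨u, v, h1, h2⟩ := ih this
      refine ⟨b :: u, v, by simp [h1], ?_⟩
      simp only [List.mem_cons, not_or]
      exact ⟨fun h => hb h.symm, h2⟩

/-- existence of an adjacent equal pair -/
lemma exists_adj_pair : ∀ (N : ℕ) (l : List α), l.length ≤ N →
    (∀ x : α, l.count x = 0 ∨ l.count x = 2) →
    (∀ a b : α, a ≠ b → ¬ ([a, b, a, b] <+ l)) →
    l ≠ [] →
    ∃ (u : List α) (x : α) (v : List α), l = u ++ x :: x :: v := by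
  intro N
  induction N with
  | zero =>
    intro l hl _ _ hne
    exact absurd (List.length_eq_zero_iff.mp (Nat.le_zero.mp hl)) hne
  | succ N ih =>
    intro l hl hcount hnc hne
    obtain ⟨a, t, rfl⟩ := List.exists_cons_of_ne_nil hne
    have hca : (a :: t).count a = 2 := by
      rcases hcount a with h | h
      · rw [List.count_cons_self] at h; omega
      · exact h
    have hat : a ∈ t := by
      rw [List.count_cons_self] at hca
      exact List.count_pos_iff.mp (by omega)
    obtain ⟨u, v, rfl, hau⟩ := exists_split_first hat
    cases u with
    | nil => exact ⟨[], a, v, by simp⟩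
    | cons c u₀ =>
      have hune : (c :: u₀ : List α) ≠ [] := by simp
      generalize hG : (c :: u₀ : List α) = u at *
      have hsubu : u <+ a :: (u ++ a :: v) :=
        (List.sublist_append_left u (a :: v)).cons a
      have hbal : ∀ x : α, u.count x = 0 ∨ u.count x = 2 := by
        intro x
        by_cases hx : x ∈ u
        · have hxa : x ≠ a := fun h => hau (h ▸ hx)
          have hxv : x ∉ v := by
            intro hxv
            apply hnc a x (fun h => hxa h.symm)
            have h1 : [x] <+ u := List.singleton_sublist.mpr hx
            have h2 : [x] <+ v := List.singleton_sublist.mpr hxv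
            have h3 : [x] ++ a :: [x] <+ u ++ a :: v :=
              List.Sublist.append h1 (h2.cons₂ a)
            have h4 : [x, a, x] <+ u ++ a :: v := by simpa using h3
            simpa using h4.cons₂ a
          have hcx := hcount x
          have e1 : (a :: (u ++ a :: v)).count x = u.count x := by
            have hax : ¬ (a = x) := fun h => hxa h.symm
            simp [List.count_cons, List.count_append,
              List.count_eq_zero_of_not_mem hxv, hax]
          rw [e1] at hcx
          have hpos : 0 < u.count x := List.count_pos_iff.mpr hx
          omega
        · left; exact List.count_eq_zero_of_not_mem hx
      have hncu : ∀ a' b' : α, a' ≠ b' → ¬ ([a', b', a', b'] <+ u) := by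
        intro a' b' hab h
        exact hnc a' b' hab (h.trans hsubu)
      have hlen : u.length ≤ N := by
        have : (a :: (u ++ a :: v)).length ≤ N + 1 := hl
        simp [List.length_append] at this ⊢
        omega
      obtain ⟨p, x, q, hpq⟩ := ih u hlen hbal hncu hune
      exact ⟨a :: p, x, q ++ a :: v, by simp [hpq]⟩

/-- main list lemma -/
lemma main_list : ∀ (N : ℕ) (l : List α), l.length ≤ N →
    (∀ x : α, l.count x = 0 ∨ l.count x = 2) →
    (∀ a b : α, a ≠ b → ¬ ([a, b, a, b] <+ l)) →
    l ≠ [] →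
    2 * idesAux l + 2 ≤ l.length := by
  intro N
  induction N with
  | zero =>
    intro l hl _ _ hne
    exact absurd (List.length_eq_zero_iff.mp (Nat.le_zero.mp hl)) hne
  | succ N ih =>
    intro l hl hcount hnc hne
    obtain ⟨u, x, v, rfl⟩ := exists_adj_pair (N + 1) l hl hcount hnc hne
    by_cases huv : u = [] ∧ v = []
    · obtain ⟨rfl, rfl⟩ := huv
      show 2 * idesAux [x, x] + 2 ≤ 2
      have : idesAux [x, x] = 0 := by simp [idesAux]
      omega
    · -- u ++ v is nonempty
      have hne' : u ++ v ≠ [] := by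
        intro h
        rcases List.append_eq_nil_iff.mp h with ⟨h1, h2⟩
        exact huv ⟨h1, h2⟩
      have hsub : u ++ v <+ u ++ x :: x :: v := by
        apply List.Sublist.append (List.Sublist.refl u)
        exact (List.sublist_cons_self x v).trans (List.sublist_cons_self x (x :: v))
      have hbal : ∀ y : α, (u ++ v).count y = 0 ∨ (u ++ v).count y = 2 := by
        intro y
        have h2 := hcount y
        rw [List.count_append, List.count_cons, List.count_cons] at h2
        rw [List.count_append]
        split_ifs at h2 <;> simp only [false_or, add_zero] at h2 <;> omega
      have hnc' : ∀ a b : α, a ≠ b → ¬ ([a, b, a, b] <+ u ++ v) := by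
        intro a b hab h
        exact hnc a b hab (h.trans hsub)
      have hlen' : (u ++ v).length ≤ N := by
        have := hl
        simp [List.length_append] at this ⊢
        omega
      have hih := ih (u ++ v) hlen' hbal hnc' hne'
      have hmid := idesAux_middle x v u
      simp only [List.length_append, List.length_cons] at *
      omega

end Aux

lemma count_ofFn' {α : Type*} [DecidableEq α] : ∀ (N : ℕ) (w : Fin N → α) (a : α),
    (List.ofFn w).count a = (univ.filter fun i : Fin N => w i = a).card := by
  intro N
  induction N with
  | zero => intro w a; simp
  | succ k ih =>
    intro w a
    rw [List.ofFn_succ, List.count_cons, ih (fun i => w i.succ) a]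
    rw [Finset.card_filter, Finset.card_filter, Fin.sum_univ_succ]
    rw [add_comm]
    congr 1
    · simp

lemma idesAux_ofFn {α : Type*} [LinearOrder α] :
    ∀ (N : ℕ) (w : Fin N → α),
    idesAux (List.ofFn w)
      = (univ.filter fun i : Fin N =>
          ∃ h : (i : ℕ) + 1 < N, w ⟨(i : ℕ) + 1, h⟩ < w i).card := by
  intro N
  induction N with
  | zero => intro w; simp [idesAux]
  | succ k ihk =>
    intro w
    cases k with
    | zero =>
      have h1 : List.ofFn w = [w 0] := by simp
      rw [h1]
      have h2 : idesAux [w 0] = 0 := rfl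
      rw [h2]
      symm
      rw [Finset.card_eq_zero, Finset.filter_eq_empty_iff]
      intro i _
      rintro ⟨h, -⟩
      omega
    | succ m =>
      set ws : Fin (m + 1) → α := fun i => w i.succ with hws
      have hofn : List.ofFn w = w 0 :: List.ofFn ws := by
        rw [List.ofFn_succ]
      have hofn2 : List.ofFn ws = ws 0 :: List.ofFn (fun i : Fin m => ws i.succ) := by
        rw [List.ofFn_succ]
      have hL : idesAux (List.ofFn w)
          = (if ws 0 < w 0 then 1 else 0) + idesAux (List.ofFn ws) := by
        rw [hofn, hofn2]; rfl
      have e0 : ∀ (h : ((0 : Fin (m + 2)) : ℕ) + 1 < m + 2),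
          w ⟨((0 : Fin (m + 2)) : ℕ) + 1, h⟩ = ws 0 := by
        intro h
        show _ = w (Fin.succ 0)
        congr 1
      have key0 : (∃ h : ((0 : Fin (m + 2)) : ℕ) + 1 < m + 2,
          w ⟨((0 : Fin (m + 2)) : ℕ) + 1, h⟩ < w 0) ↔ ws 0 < w 0 := by
        constructor
        · rintro ⟨h, hlt⟩
          rwa [e0 h] at hlt
        · intro hlt
          refine ⟨by simp, ?_⟩
          rw [e0]
          exact hlt
      have keyj : ∀ j : Fin (m + 1),
          (∃ h : ((j.succ : Fin (m + 2)) : ℕ) + 1 < m + 2,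
              w ⟨((j.succ : Fin (m + 2)) : ℕ) + 1, h⟩ < w j.succ)
            ↔ (∃ h : (j : ℕ) + 1 < m + 1, ws ⟨(j : ℕ) + 1, h⟩ < ws j) := by
        intro j
        have e1 : ∀ (h : ((j.succ : Fin (m + 2)) : ℕ) + 1 < m + 2),
            w ⟨((j.succ : Fin (m + 2)) : ℕ) + 1, h⟩ = ws ⟨(j : ℕ) + 1, by
              have h2 := h
              simp only [Fin.val_succ] at h2
              omega⟩ := by
          intro h
          show _ = w (Fin.succ _)
          congr 1
        have e2 : w j.succ = ws j := rfl
        constructor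
        · rintro ⟨h, hlt⟩
          rw [e1 h, e2] at hlt
          exact ⟨by simp only [Fin.val_succ] at h; omega, hlt⟩
        · rintro ⟨h, hlt⟩
          refine ⟨by simp only [Fin.val_succ]; omega, ?_⟩
          rw [e1, e2]
          exact hlt
      have hR : ((univ.filter fun i : Fin (m + 2) =>
            ∃ h : (i : ℕ) + 1 < m + 2, w ⟨(i : ℕ) + 1, h⟩ < w i).card)
          = (if ws 0 < w 0 then 1 else 0)
            + ((univ.filter fun j : Fin (m + 1) =>
                ∃ h : (j : ℕ) + 1 < m + 1, ws ⟨(j : ℕ) + 1, h⟩ < ws j).card) := by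
        rw [Finset.card_filter, Fin.sum_univ_succ, Finset.card_filter]
        congr 1
        · exact if_congr key0 rfl rfl
        · exact Finset.sum_congr rfl fun j _ => if_congr (keyj j) rfl rfl
      rw [hL, ihk ws, hR]

/-- Number of descents of a word `w` of length `N` over a linearly ordered
alphabet.  Positions are 0-indexed: a position `i` is a descent if it is the
last position or the letter at `i` is greater than the letter at `i + 1`. -/
noncomputable def desW {α : Type*} [LinearOrder α] {N : ℕ} (w : Fin N → α) : ℕ :=
  (univ.filter fun i : Fin N =>
    (i : ℕ) + 1 = N ∨ ∃ h : (i : ℕ) + 1 < N, w ⟨(i : ℕ) + 1, h⟩ < w i).card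

/-- The set of quasi-Stirling permutations of size `n`, encoded as words
`w : Fin (2 * n) → Fin n` (the letters `1, …, n` are encoded as the elements
of `Fin n`) in which every letter occurs exactly twice and there are no indices
`i < j < l < p` with `w i = w l`, `w j = w p` and `w i ≠ w j`. -/
noncomputable def quasiStirlingSet (n : ℕ) : Finset (Fin (2 * n) → Fin n) :=
  univ.filter fun w =>
    (∀ a : Fin n, (univ.filter fun i => w i = a).card = 2) ∧
    ∀ i j l p : Fin (2 * n), i < j → j < l → l < p →
      w i = w l → w j = w p → w i = w j

/-- Every quasi-Stirling permutation of size `n ≥ 1` has at most `n` descents. -/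
theorem des_le_of_quasiStirling (n : ℕ) (hn : 1 ≤ n)
    (w : Fin (2 * n) → Fin n) (hw : w ∈ quasiStirlingSet n) :
    desW w ≤ n := by
  rw [quasiStirlingSet, Finset.mem_filter] at hw
  obtain ⟨-, hcnt, hpat⟩ := hw
  have hlen : (List.ofFn w).length = 2 * n := List.length_ofFn
  -- balance
  have hbal : ∀ x : Fin n, (List.ofFn w).count x = 0 ∨ (List.ofFn w).count x = 2 :=
    fun x => Or.inr (by rw [count_ofFn']; exact hcnt x)
  -- noncrossing
  have hnc : ∀ a b : Fin n, a ≠ b → ¬ (List.Sublist [a, b, a, b] (List.ofFn w)) := by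
    intro a b hab hsub
    rw [List.sublist_iff_exists_fin_orderEmbedding_get_eq] at hsub
    obtain ⟨f, hf⟩ := hsub
    set g : Fin ([a, b, a, b].length) → Fin (2 * n) :=
      fun ix => Fin.cast hlen (f ix) with hg
    have hget : ∀ ix, w (g ix) = [a, b, a, b].get ix := by
      intro ix
      have := hf ix
      rw [List.get_ofFn] at this
      exact this.symm
    have hmono : ∀ ix iy : Fin ([a, b, a, b].length), ix < iy → g ix < g iy := by
      intro ix iy h
      have hflt : f ix < f iy := f.lt_iff_lt.mpr h
      show Fin.cast hlen (f ix) < Fin.cast hlen (f iy)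
      simp only [Fin.lt_def, Fin.coe_cast]
      exact hflt
    have h01 : g ⟨0, by norm_num⟩ < g ⟨1, by norm_num⟩ := hmono _ _ (by norm_num [Fin.lt_def])
    have h12 : g ⟨1, by norm_num⟩ < g ⟨2, by norm_num⟩ := hmono _ _ (by norm_num [Fin.lt_def])
    have h23 : g ⟨2, by norm_num⟩ < g ⟨3, by norm_num⟩ := hmono _ _ (by norm_num [Fin.lt_def])
    have hv0 : w (g ⟨0, by norm_num⟩) = a := hget _
    have hv1 : w (g ⟨1, by norm_num⟩) = b := hget _
    have hv2 : w (g ⟨2, by norm_num⟩) = a := hget _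
    have hv3 : w (g ⟨3, by norm_num⟩) = b := hget _
    apply hab
    have := hpat _ _ _ _ h01 h12 h23 (by rw [hv0, hv2]) (by rw [hv1, hv3])
    rw [hv0, hv1] at this
    exact this
  -- list is nonempty
  have hne : List.ofFn w ≠ [] := by
    apply List.ne_nil_of_length_pos
    rw [hlen]
    omega
  have hmain := main_list (2 * n) (List.ofFn w) (le_of_eq hlen) hbal hnc hne
  rw [hlen] at hmain
  -- compute desW
  have hdisj : Disjoint
      (univ.filter fun i : Fin (2 * n) => (i : ℕ) + 1 = 2 * n)
      (univ.filter fun i : Fin (2 * n) =>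
        ∃ h : (i : ℕ) + 1 < 2 * n, w ⟨(i : ℕ) + 1, h⟩ < w i) := by
    rw [Finset.disjoint_left]
    intro i h1 h2
    rw [Finset.mem_filter] at h1 h2
    obtain ⟨h, -⟩ := h2.2
    omega
  have hsplit : desW w
      = (univ.filter fun i : Fin (2 * n) => (i : ℕ) + 1 = 2 * n).card
        + (univ.filter fun i : Fin (2 * n) =>
            ∃ h : (i : ℕ) + 1 < 2 * n, w ⟨(i : ℕ) + 1, h⟩ < w i).card := by
    rw [desW, Finset.filter_or, Finset.card_union_of_disjoint hdisj]
  have hone : (univ.filter fun i : Fin (2 * n) => (i : ℕ) + 1 = 2 * n)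
      = {⟨2 * n - 1, by omega⟩} := by
    ext i
    simp only [Finset.mem_filter, Finset.mem_univ, true_and, Finset.mem_singleton,
      Fin.ext_iff]
    have := i.isLt
    omega
  have hcard1 : (univ.filter fun i : Fin (2 * n) => (i : ℕ) + 1 = 2 * n).card = 1 := by
    rw [hone]; simp
  have hides := idesAux_ofFn (2 * n) w
  rw [hsplit, hcard1, ← hides]
  omega
end

section
/- For every n ≥ 1 and k ≥ 1, the number of k-quasi-Stirling permutations of size n equals (kn)!/((k−1)n+1)!, which equals n! times the k-Catalan number C_{n,k} = (1/((k−1)n+1))·binom(kn, n). -/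
open Finset
open scoped Classical

/-- The set of `k`-quasi-Stirling permutations of size `n`, encoded as words
`w : Fin (k * n) → Fin n` (the letters `1, …, n` are encoded as the elements
of `Fin n`) in which every letter occurs exactly `k` times and there are no
indices `i < j < l < p` with `w i = w l`, `w j = w p` and `w i ≠ w j`. -/
noncomputable def kQuasiStirlingSet (k n : ℕ) : Finset (Fin (k * n) → Fin n) :=
  univ.filter fun w =>
    (∀ a : Fin n, (univ.filter fun i => w i = a).card = k) ∧
    ∀ i j l p : Fin (k * n), i < j → j < l → l < p →
      w i = w l → w j = w p → w i = w j

namespace QS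

open Fin.NatCast Fin.CommRing

variable (k K : ℕ)

noncomputable def wt (S : Finset (Fin (K+1))) (i : ℕ) : ℤ :=
  if ((i : Fin (K+1)) ∈ S) then (k : ℤ) - 1 else -1

noncomputable def psum (S : Finset (Fin (K+1))) (t : ℕ) : ℤ :=
  ∑ i ∈ Finset.range t, wt k K S i

def IsGood (S : Finset (Fin (K+1))) : Prop := ∀ t ≤ K, 0 ≤ psum k K S t

theorem wt_period (S : Finset (Fin (K+1))) (i : ℕ) :
    wt k K S (i + (K+1)) = wt k K S i := by
  unfold wt
  congr 1
  push_cast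
  simp

theorem psum_succ (S : Finset (Fin (K+1))) (t : ℕ) :
    psum k K S (t+1) = psum k K S t + wt k K S t := by
  unfold psum; rw [Finset.sum_range_succ]

theorem psum_total (S : Finset (Fin (K+1))) :
    psum k K S (K+1) = (k : ℤ) * S.card - (K+1) := by
  unfold psum wt
  rw [← Fin.sum_univ_eq_sum_range (fun i => if ((i : Fin (K+1)) ∈ S) then (k:ℤ)-1 else -1)]
  have : ∀ i : Fin (K+1), (if ((i.val : Fin (K+1)) ∈ S) then (k:ℤ)-1 else -1)
      = (if i ∈ S then (k:ℤ) else 0) - 1 := by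
    intro i
    rw [Fin.cast_val_eq_self]
    split <;> ring
  rw [Finset.sum_congr rfl (fun i _ => this i)]
  rw [Finset.sum_sub_distrib, Finset.sum_ite_mem]
  simp [Finset.univ_inter, mul_comm]

theorem psum_period (S : Finset (Fin (K+1))) (hS : k * S.card = K) (t : ℕ) :
    psum k K S (t + (K+1)) = psum k K S t - 1 := by
  induction t with
  | zero =>
    have h0 : psum k K S 0 = 0 := by simp [psum]
    rw [Nat.zero_add, psum_total, h0]
    have : (k : ℤ) * (S.card : ℤ) = (K : ℤ) := by exact_mod_cast hS
    rw [this]; ring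
  | succ t ih =>
    have : t + 1 + (K+1) = (t + (K+1)) + 1 := by omega
    rw [this, psum_succ, ih, wt_period, psum_succ]
    ring

noncomputable def rot (d : Fin (K+1)) (S : Finset (Fin (K+1))) : Finset (Fin (K+1)) :=
  S.image (fun x => x - d)

theorem mem_rot {d : Fin (K+1)} {S : Finset (Fin (K+1))} {x : Fin (K+1)} :
    x ∈ rot K d S ↔ x + d ∈ S := by
  unfold rot
  simp only [Finset.mem_image]
  constructor
  · rintro ⟨y, hy, rfl⟩; simpa [sub_add_cancel] using hy
  · intro h; exact ⟨x + d, h, by ring⟩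

theorem card_rot (d : Fin (K+1)) (S : Finset (Fin (K+1))) : (rot K d S).card = S.card :=
  Finset.card_image_of_injective _ (sub_left_injective)

theorem rot_rot (d e : Fin (K+1)) (S : Finset (Fin (K+1))) :
    rot K d (rot K e S) = rot K (e + d) S := by
  ext x
  rw [mem_rot, mem_rot, mem_rot]
  constructor <;> intro h
  · have e1 : x + (e + d) = x + d + e := by ring
    rw [e1]; exact h
  · have e1 : x + d + e = x + (e + d) := by ring
    rw [e1]; exact h

theorem rot_zero (S : Finset (Fin (K+1))) : rot K 0 S = S := by
  ext x; rw [mem_rot]; simp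

theorem wt_rot (d : Fin (K+1)) (S : Finset (Fin (K+1))) (i : ℕ) :
    wt k K (rot K d S) i = wt k K S (i + d.val) := by
  unfold wt
  congr 1
  rw [eq_iff_iff, mem_rot]
  constructor <;> intro h
  · convert h using 2; push_cast; rfl
  · convert h using 2; push_cast; rfl

theorem psum_rot (d : Fin (K+1)) (S : Finset (Fin (K+1))) (t : ℕ) :
    psum k K (rot K d S) t = psum k K S (d.val + t) - psum k K S d.val := by
  unfold psum
  rw [eq_sub_iff_add_eq]
  rw [Finset.sum_congr rfl (fun i _ => wt_rot k K d S i)]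
  rw [← Finset.sum_range_add_sum_Ico (wt k K S) (Nat.le_add_right d.val t)]
  rw [Finset.sum_Ico_eq_sum_range]
  simp only [Nat.add_sub_cancel_left]
  rw [add_comm]
  congr 1
  exact Finset.sum_congr rfl fun i _ => by rw [Nat.add_comm d.val i]


theorem raney (S : Finset (Fin (K+1))) (hS : k * S.card = K) :
    ∃! d : Fin (K+1), IsGood k K (rot K d S) := by
  have hper := psum_period k K S hS
  have hmin : ∃ u, u < K+1 ∧ ∀ v < K+1, psum k K S u ≤ psum k K S v := by
    obtain ⟨u, hu, hmin⟩ := Finset.exists_min_image (Finset.range (K+1)) (psum k K S)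
      ⟨0, Finset.mem_range.mpr (Nat.succ_pos K)⟩
    exact ⟨u, Finset.mem_range.mp hu, fun v hv => hmin v (Finset.mem_range.mpr hv)⟩
  set d := Nat.find hmin with hd
  obtain ⟨hdm, hdmin⟩ := Nat.find_spec hmin
  have hlt : ∀ u < d, psum k K S d < psum k K S u := by
    intro u hu
    have hnp := Nat.find_min hmin hu
    rcases lt_or_ge (psum k K S d) (psum k K S u) with h | h
    · exact h
    · exfalso
      apply hnp
      refine ⟨by omega, fun v hv => ?_⟩
      exact le_trans h (hdmin v hv)
  refine ⟨⟨d, hdm⟩, ?_, ?_⟩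
  · intro t ht
    rw [psum_rot]
    simp only
    by_cases h : d + t ≤ K
    · linarith [hdmin (d+t) (by omega)]
    · have he : d + t = (d + t - (K+1)) + (K+1) := by omega
      have h2 : d + t - (K+1) < d := by omega
      have := hper (d + t - (K+1))
      rw [he, this]
      linarith [hlt _ h2]
  · intro d' hgood
    by_contra hne
    have hd'K : d'.val < K + 1 := d'.isLt
    rcases lt_trichotomy d'.val d with h | h | h
    · have hgt := hgood (d - d'.val) (by omega)
      rw [psum_rot] at hgt
      have h1 : d'.val + (d - d'.val) = d := by omega
      rw [h1] at hgt
      have h2 := hdmin d'.val (by omega)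
      have h3 : psum k K S d'.val = psum k K S d := le_antisymm (by linarith) h2
      have : d ≤ d'.val := Nat.find_le ⟨by omega, fun v hv => h3 ▸ hdmin v hv⟩
      omega
    · exact hne (Fin.ext h)
    · have ht1 : 1 ≤ d + (K+1) - d'.val := by omega
      have ht2 : d + (K+1) - d'.val ≤ K := by omega
      have hgt := hgood (d + (K+1) - d'.val) ht2
      rw [psum_rot] at hgt
      have h1 : d'.val + (d + (K+1) - d'.val) = d + (K+1) := by omega
      rw [h1, hper d] at hgt
      have h2 := hdmin d'.val (by omega)
      linarith

noncomputable def GoodSet (n : ℕ) : Finset (Finset (Fin (K+1))) :=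
  (Finset.powersetCard n Finset.univ).filter (IsGood k K)

theorem card_goodSet_mul (n : ℕ) (hK : k * n = K) :
    (GoodSet k K n).card * (K+1) = (K+1).choose n := by
  classical
  have key : ((GoodSet k K n) ×ˢ (Finset.univ : Finset (Fin (K+1)))).card
      = (Finset.powersetCard n (Finset.univ : Finset (Fin (K+1)))).card := by
    apply Finset.card_bij (fun p _ => rot K p.2 p.1)
    · rintro ⟨S, e⟩ hp
      simp only [Finset.mem_product, GoodSet, Finset.mem_filter] at hp
      rw [Finset.mem_powersetCard_univ] at hp ⊢
      rw [card_rot]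
      exact hp.1.1
    · rintro ⟨S, e⟩ hp ⟨S', e'⟩ hp' heq
      simp only [Finset.mem_product, GoodSet, Finset.mem_filter,
        Finset.mem_powersetCard_univ] at hp hp'
      simp only at heq
      have hT : k * (rot K e S).card = K := by rw [card_rot, hp.1.1]; exact hK
      obtain ⟨d0, -, huniq⟩ := raney k K (rot K e S) hT
      have hS : S = rot K (-e) (rot K e S) := by
        rw [rot_rot, add_neg_cancel, rot_zero]
      have hS' : S' = rot K (-e') (rot K e S) := by
        rw [heq, rot_rot, add_neg_cancel, rot_zero]
      have g1 : IsGood k K (rot K (-e) (rot K e S)) := by rw [← hS]; exact hp.1.2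
      have g2 : IsGood k K (rot K (-e') (rot K e S)) := by rw [← hS']; exact hp'.1.2
      have := (huniq _ g1).trans (huniq _ g2).symm
      have hee : e = e' := by
        have := neg_injective this
        exact this
      refine Prod.ext ?_ hee
      · simp only
        rw [hS, hS', hee]
    · intro T hT
      rw [Finset.mem_powersetCard_univ] at hT
      have hTc : k * T.card = K := by rw [hT]; exact hK
      obtain ⟨d0, hgood, -⟩ := raney k K T hTc
      refine ⟨⟨rot K d0 T, -d0⟩, ?_, ?_⟩
      · simp only [Finset.mem_product, GoodSet, Finset.mem_filter,
          Finset.mem_powersetCard_univ, Finset.mem_univ, and_true]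
        exact ⟨card_rot K d0 T ▸ hT, hgood⟩
      · simp only
        rw [rot_rot, add_neg_cancel, rot_zero]
  rw [Finset.card_product, Finset.card_univ, Fintype.card_fin] at key
  rw [Finset.card_powersetCard, Finset.card_univ, Fintype.card_fin] at key
  exact key


def NC (u : List ℕ) : Prop := ∀ i j l p : ℕ, i < j → j < l → l < p → p < u.length →
  u.getD i 0 = u.getD l 0 → u.getD j 0 = u.getD p 0 → u.getD i 0 = u.getD j 0

theorem getD_mem {u : List ℕ} {i : ℕ} (h : i < u.length) : u.getD i 0 ∈ u := by
  rw [List.getD_eq_getElem u 0 h]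
  exact List.getElem_mem h

theorem nc_insert (x y : List ℕ) (c t : ℕ) (h : NC (x ++ y)) (hc : c ∉ x ++ y) :
    NC (x ++ (List.replicate t c ++ y)) := by
  set u := x ++ (List.replicate t c ++ y) with hu
  set w := x ++ y with hw
  have hulen : u.length = x.length + t + y.length := by simp [hu]; omega
  have hwlen : w.length = x.length + y.length := by simp [hw]
  -- value at position
  have hval1 : ∀ i, i < x.length → u.getD i 0 = w.getD i 0 := by
    intro i hi
    rw [hu, hw, List.getD_append _ _ _ _ hi, List.getD_append _ _ _ _ hi]
  have hval2 : ∀ i, x.length ≤ i → i < x.length + t → u.getD i 0 = c := by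
    intro i h1 h2
    rw [hu, List.getD_append_right _ _ _ _ h1, List.getD_append _ _ _ _ (by
      simp only [List.length_replicate]; omega)]
    rw [List.getD_eq_getElem _ _ (by simpa using (by omega : i - x.length < t))]
    simp
  have hval3 : ∀ i, x.length + t ≤ i → u.getD i 0 = w.getD (i - t) 0 := by
    intro i h1
    rw [hu, hw, List.getD_append_right _ _ _ _ (by omega),
      List.getD_append_right _ _ _ _ (by simp [List.length_replicate]; omega),
      List.getD_append_right _ _ _ _ (by omega)]
    congr 1
    simp only [List.length_replicate]
    omega
  have hnotc : ∀ i, i < w.length → w.getD i 0 ≠ c := by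
    intro i hi heq
    exact hc (heq ▸ getD_mem hi)
  -- c appears only in the block
  have hblock : ∀ i, i < u.length → u.getD i 0 = c → x.length ≤ i ∧ i < x.length + t := by
    intro i hi heq
    by_contra hcon
    rcases lt_or_ge i x.length with h1 | h1
    · exact hnotc i (by omega) ((hval1 i h1).symm.trans heq)
    · have h2 : x.length + t ≤ i := by omega
      exact hnotc (i - t) (by omega) (((hval3 i h2).symm.trans heq))
  intro i j l p hij hjl hlp hp hil hjp
  by_cases hcj : u.getD j 0 = c
  · -- j, p in block, so l in block, so u_i = c = u_j
    have hbj := hblock j (by omega) hcj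
    have hbp := hblock p hp (hjp ▸ hcj)
    have : u.getD l 0 = c := hval2 l (by omega) (by omega)
    rw [hil, this, hcj]
  by_cases hci : u.getD i 0 = c
  · -- i, l in block so j in block: contradiction with hcj
    have hbi := hblock i (by omega) hci
    have hbl := hblock l (by omega) (hil ▸ hci)
    exact absurd (hval2 j (by omega) (by omega)) hcj
  -- all four outside the block
  have houti := hblock i (by omega); have houtj := hblock j (by omega)
  have houtl := hblock l (by omega); have houtp := hblock p hp
  have hcl : u.getD l 0 ≠ c := fun e => hci (hil.trans e)
  have hcp : u.getD p 0 ≠ c := fun e => hcj (hjp.trans e)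
  -- position classification: none in [x.length, x.length+t)
  have hi' : i < x.length ∨ x.length + t ≤ i := by
    by_contra hcon; exact hci (hval2 i (by omega) (by omega))
  have hj' : j < x.length ∨ x.length + t ≤ j := by
    by_contra hcon; exact hcj (hval2 j (by omega) (by omega))
  have hl' : l < x.length ∨ x.length + t ≤ l := by
    by_contra hcon; exact hcl (hval2 l (by omega) (by omega))
  have hp' : p < x.length ∨ x.length + t ≤ p := by
    by_contra hcon; exact hcp (hval2 p (by omega) (by omega))
  set φ : ℕ → ℕ := fun i => if i < x.length then i else i - t with hφ
  have hvφ : ∀ i, i < x.length ∨ x.length + t ≤ i → u.getD i 0 = w.getD (φ i) 0 := by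
    intro i hi
    rcases hi with h1 | h1
    · rw [hφ]; simp only [if_pos h1]; exact hval1 i h1
    · rw [hφ]; simp only [if_neg (by omega : ¬ i < x.length)]; exact hval3 i h1
  have hmono : ∀ a b, a < b → (a < x.length ∨ x.length + t ≤ a) →
      (b < x.length ∨ x.length + t ≤ b) → φ a < φ b := by
    intro a b hab ha hb
    rcases ha with h1 | h1 <;> rcases hb with h2 | h2 <;>
      simp only [hφ] <;> split_ifs <;> omega
  have hres := h (φ i) (φ j) (φ l) (φ p) (hmono _ _ hij hi' hj') (hmono _ _ hjl hj' hl')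
    (hmono _ _ hlp hl' hp') (by
      rcases hp' with h1 | h1 <;> simp only [hφ] <;> split_ifs <;> omega)
    (by rw [← hvφ i hi', ← hvφ l hl']; exact hil)
    (by rw [← hvφ j hj', ← hvφ p hp']; exact hjp)
  rw [hvφ i hi', hvφ j hj']
  exact hres


def expandStack (st : List (ℕ × ℕ)) : List ℕ := st.flatMap fun p => List.replicate p.2 p.1

theorem expand_nil : expandStack [] = [] := rfl
theorem expand_cons (p : ℕ × ℕ) (st : List (ℕ × ℕ)) :
    expandStack (p :: st) = List.replicate p.2 p.1 ++ expandStack st := rfl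

theorem count_expand_zero (a : ℕ) (st : List (ℕ × ℕ)) (h : ∀ p ∈ st, p.1 ≠ a) :
    (expandStack st).count a = 0 := by
  induction st with
  | nil => rfl
  | cons p st ih =>
    rw [expand_cons, List.count_append, List.count_replicate,
      if_neg (by simpa using h p (by simp)), ih (fun q hq => h q (by simp [hq]))]

structure St where
  out : List ℕ
  stk : List (ℕ × ℕ)
  c : ℕ

def word (s : St) : List ℕ := s.out ++ expandStack s.stk

def step (k : ℕ) (s : St) : Bool → St
  | true => ⟨s.out ++ [s.c], if k ≤ 1 then s.stk else (s.c, k-1) :: s.stk, s.c + 1⟩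
  | false => ⟨s.out ++ [(s.stk.headD (0,0)).1],
      if (s.stk.headD (0,0)).2 ≤ 1 then s.stk.tail
        else ((s.stk.headD (0,0)).1, (s.stk.headD (0,0)).2 - 1) :: s.stk.tail,
      s.c⟩

def run (k : ℕ) (l : List Bool) : St := l.foldl (step k) ⟨[], [], 0⟩

theorem run_append (k : ℕ) (l : List Bool) (b : Bool) :
    run k (l ++ [b]) = step k (run k l) b := by
  unfold run
  rw [List.foldl_append]
  rfl

structure Inv (k : ℕ) (l : List Bool) (s : St) : Prop where
  len : s.out.length = l.length
  cnt : s.c = l.count true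
  rlow : ∀ p ∈ s.stk, 1 ≤ p.2
  rhigh : ∀ p ∈ s.stk, p.2 + 1 ≤ k
  lt_c : ∀ p ∈ s.stk, p.1 < s.c
  nodup : (s.stk.map Prod.fst).Nodup
  cword : ∀ a, (word s).count a = if a < s.c then k else 0
  ncw : NC (word s)
  ssum : s.out.length + (s.stk.map Prod.snd).sum = k * s.c
  firsts : ∀ i, i < l.length →
    ((∀ j < i, s.out.getD j 0 ≠ s.out.getD i 0) ↔ l.getD i false = true)

theorem out_lt {k : ℕ} {l : List Bool} {s : St} (h : Inv k l s) :
    ∀ a ∈ s.out, a < s.c := by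
  intro a ha
  have hmem : a ∈ word s := by unfold word; exact List.mem_append_left _ ha
  have := h.cword a
  by_contra hc
  rw [if_neg hc] at this
  exact (List.count_eq_zero.mp this) hmem

theorem word_step_true (k : ℕ) (hk : 1 ≤ k) (s : St) :
    word (step k s true) = s.out ++ (List.replicate k s.c ++ expandStack s.stk) := by
  unfold word step
  by_cases h : k ≤ 1
  · have hk1 : k = 1 := le_antisymm h hk
    simp only [if_pos h, hk1]
    simp [List.replicate]
  · simp only [if_neg h, expand_cons]
    have : List.replicate k s.c = s.c :: List.replicate (k-1) s.c := by
      have : k = (k-1) + 1 := by omega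
      rw [this, List.replicate_succ]
      congr 1 <;> omega
    rw [this]
    simp

theorem word_step_false (k : ℕ) (s : St) (a r : ℕ) (rest : List (ℕ × ℕ))
    (hs : s.stk = (a, r) :: rest) (hr : 1 ≤ r) :
    word (step k s false) = word s := by
  unfold word step
  simp only [hs, List.headD_cons, List.tail_cons]
  by_cases h : r ≤ 1
  · have : r = 1 := le_antisymm h hr
    simp only [if_pos h, expand_cons, this]
    simp [List.replicate]
  · simp only [if_neg h, expand_cons]
    have : List.replicate r a = a :: List.replicate (r-1) a := by
      have h2 : r = (r-1) + 1 := by omega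
      rw [h2, List.replicate_succ]
      congr 1 <;> omega
    rw [this]
    simp



theorem inv_nil (k : ℕ) : Inv k [] (run k []) := by
  have : run k [] = ⟨[], [], 0⟩ := rfl
  rw [this]
  constructor
  · rfl
  · rfl
  · intro p hp; simp at hp
  · intro p hp; simp at hp
  · intro p hp; simp at hp
  · simp
  · intro a; simp [word, expand_nil]
  · intro i j l p _ _ _ hp hil hjp
    simp [word, expand_nil] at hp
  · rfl
  · intro i hi; simp at hi

theorem inv_step_true (k : ℕ) (hk : 1 ≤ k) (l : List Bool) (s : St) (h : Inv k l s) :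
    Inv k (l ++ [true]) (step k s true) := by
  have hw := word_step_true k hk s
  have hstep : step k s true
      = ⟨s.out ++ [s.c], if k ≤ 1 then s.stk else (s.c, k-1) :: s.stk, s.c + 1⟩ := rfl
  rw [hstep] at hw ⊢
  have hfresh : s.c ∉ word s := by
    have := h.cword s.c
    rw [if_neg (lt_irrefl _)] at this
    exact List.count_eq_zero.mp this
  have hcount : ∀ a, (word (⟨s.out ++ [s.c], if k ≤ 1 then s.stk
        else (s.c, k-1) :: s.stk, s.c + 1⟩ : St)).count a
      = (word s).count a + (if s.c = a then k else 0) := by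
    intro a
    rw [hw]
    unfold word
    rw [List.count_append, List.count_append, List.count_append, List.count_replicate]
    simp only [beq_iff_eq]
    omega
  constructor
  · simp [h.len]
  · rw [List.count_append]
    simp [h.cnt]
  · intro p hp
    simp only at hp
    split at hp
    · exact h.rlow p hp
    · rcases List.mem_cons.mp hp with rfl | hp
      · simp only
        omega
      · exact h.rlow p hp
  · intro p hp
    simp only at hp
    split at hp
    · exact h.rhigh p hp
    · rcases List.mem_cons.mp hp with rfl | hp
      · simp only
        omega
      · exact h.rhigh p hp
  · intro p hp
    simp only at hp ⊢
    split at hp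
    · exact Nat.lt_succ_of_lt (h.lt_c p hp)
    · rcases List.mem_cons.mp hp with rfl | hp
      · simp
      · exact Nat.lt_succ_of_lt (h.lt_c p hp)
  · simp only
    split
    · exact h.nodup
    · rw [List.map_cons]
      refine List.nodup_cons.mpr ⟨?_, h.nodup⟩
      intro hmem
      obtain ⟨p, hp, hp2⟩ := List.mem_map.mp hmem
      exact absurd (hp2 ▸ h.lt_c p hp) (lt_irrefl _)
  · intro a
    rw [hcount a, h.cword a]
    simp only
    split_ifs <;> omega
  · rw [hw]
    exact nc_insert s.out (expandStack s.stk) s.c k h.ncw hfresh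
  · simp only [List.length_append, List.length_singleton]
    have hring : k * (s.c + 1) = k * s.c + k := by ring
    split
    · have := h.ssum
      rename_i hk1
      omega
    · rw [List.map_cons, List.sum_cons]
      have := h.ssum
      omega
  · intro i hi
    simp only at hi ⊢
    rw [List.length_append, List.length_singleton] at hi
    by_cases hii : i < l.length
    · have hgets : ∀ j ≤ i, (s.out ++ [s.c]).getD j 0 = s.out.getD j 0 := by
        intro j hj
        exact List.getD_append _ _ _ _ (by rw [h.len]; omega)
      have harr : (l ++ [true]).getD i false = l.getD i false :=
        List.getD_append _ _ _ _ hii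
      rw [harr]
      constructor
      · intro hf
        refine (h.firsts i hii).mp (fun j hj => ?_)
        rw [← hgets j hj.le, ← hgets i le_rfl]
        exact hf j hj
      · intro hb j hj
        rw [hgets j hj.le, hgets i le_rfl]
        exact (h.firsts i hii).mpr hb j hj
    · have hieq : i = l.length := by omega
      subst hieq
      have hgi : (s.out ++ [s.c]).getD l.length 0 = s.c := by
        rw [List.getD_append_right _ _ _ _ (by rw [h.len])]
        rw [h.len]
        simp
      have harr : (l ++ [true]).getD l.length false = true := by
        rw [List.getD_append_right _ _ _ _ le_rfl]
        simp
      refine ⟨fun _ => harr, fun _ j hj => ?_⟩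
      rw [hgi, List.getD_append _ _ _ _ (by rw [h.len]; omega)]
      intro heq
      have hmem : s.out.getD j 0 ∈ s.out := by
        rw [List.getD_eq_getElem _ _ (by rw [h.len]; omega)]
        exact List.getElem_mem _
      exact absurd (heq ▸ out_lt h _ hmem) (lt_irrefl _)

theorem inv_step_false (k : ℕ) (hk : 1 ≤ k) (l : List Bool) (s : St) (h : Inv k l s)
    (hcond : l.length + 1 ≤ k * l.count true) :
    Inv k (l ++ [false]) (step k s false) := by
  have hsum : 1 ≤ (s.stk.map Prod.snd).sum := by
    have := h.ssum
    rw [h.len, h.cnt] at this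
    omega
  obtain ⟨⟨a, r⟩, rest, hs⟩ : ∃ p rest, s.stk = p :: rest := by
    cases hstk : s.stk with
    | nil => rw [hstk] at hsum; simp at hsum
    | cons p rest => exact ⟨p, rest, rfl⟩
  have hr1 : 1 ≤ r := h.rlow (a, r) (hs ▸ List.mem_cons_self)
  have hrk : r + 1 ≤ k := h.rhigh (a, r) (hs ▸ List.mem_cons_self)
  have hac : a < s.c := h.lt_c (a, r) (hs ▸ List.mem_cons_self)
  have hw := word_step_false k s a r rest hs hr1
  have hstep : step k s false
      = ⟨s.out ++ [a], if r ≤ 1 then rest else (a, r-1) :: rest, s.c⟩ := by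
    simp only [step, hs, List.headD_cons, List.tail_cons]
  rw [hstep] at hw ⊢
  have hcnt_rest : (expandStack rest).count a = 0 := by
    apply count_expand_zero
    intro p hp heq
    have hnd := h.nodup
    rw [hs, List.map_cons, List.nodup_cons] at hnd
    have hmm : p.1 ∈ List.map Prod.fst rest := List.mem_map_of_mem (f := Prod.fst) hp
    rw [heq] at hmm
    exact hnd.1 hmm
  have hcout : s.out.count a + r = k := by
    have := h.cword a
    rw [if_pos hac] at this
    unfold word at this
    rw [hs, List.count_append, expand_cons, List.count_append, List.count_replicate,
      if_pos (by simp), hcnt_rest] at this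
    omega
  have hamem : a ∈ s.out := by
    rw [← List.count_pos_iff]
    omega
  have hmemstk : ∀ p ∈ (if r ≤ 1 then rest else (a, r-1) :: rest), p = (a, r-1) ∨ p ∈ rest := by
    intro p hp
    split at hp
    · exact Or.inr hp
    · rcases List.mem_cons.mp hp with rfl | hp
      · exact Or.inl rfl
      · exact Or.inr hp
  constructor
  · simp [h.len]
  · rw [List.count_append]
    simp [h.cnt]
  · intro p hp
    rcases hmemstk p hp with heq | hp2
    · rw [heq]
      simp only
      rcases Nat.lt_or_ge 1 r with hr2 | hr2
      · omega
      · exfalso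
        have hreq : r = 1 := by omega
        rw [if_pos (by omega)] at hp
        rw [heq, hreq] at hp
        have hnd := h.nodup
        rw [hs, List.map_cons, List.nodup_cons] at hnd
        exact hnd.1 (by simpa using List.mem_map_of_mem (f := Prod.fst) hp)
    · exact h.rlow p (hs ▸ List.mem_cons_of_mem _ hp2)
  · intro p hp
    rcases hmemstk p hp with heq | hp2
    · rw [heq]
      simp only
      omega
    · exact h.rhigh p (hs ▸ List.mem_cons_of_mem _ hp2)
  · intro p hp
    rcases hmemstk p hp with heq | hp2
    · rw [heq]
      simpa using hac
    · exact h.lt_c p (hs ▸ List.mem_cons_of_mem _ hp2)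
  · have hnd := h.nodup
    rw [hs, List.map_cons, List.nodup_cons] at hnd
    simp only
    split
    · exact hnd.2
    · rw [List.map_cons, List.nodup_cons]
      exact ⟨hnd.1, hnd.2⟩
  · intro x
    rw [hw]
    exact h.cword x
  · rw [hw]
    exact h.ncw
  · simp only [List.length_append, List.length_singleton]
    have hss := h.ssum
    rw [hs, List.map_cons, List.sum_cons] at hss
    split
    · omega
    · rw [List.map_cons, List.sum_cons]
      simp only
      omega
  · intro i hi
    simp only at hi ⊢
    rw [List.length_append, List.length_singleton] at hi
    by_cases hii : i < l.length
    · have hgets : ∀ j ≤ i, (s.out ++ [a]).getD j 0 = s.out.getD j 0 := by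
        intro j hj
        exact List.getD_append _ _ _ _ (by rw [h.len]; omega)
      have harr : (l ++ [false]).getD i false = l.getD i false :=
        List.getD_append _ _ _ _ hii
      rw [harr]
      constructor
      · intro hf
        refine (h.firsts i hii).mp (fun j hj => ?_)
        rw [← hgets j hj.le, ← hgets i le_rfl]
        exact hf j hj
      · intro hb j hj
        rw [hgets j hj.le, hgets i le_rfl]
        exact (h.firsts i hii).mpr hb j hj
    · have hieq : i = l.length := by omega
      subst hieq
      have hgi : (s.out ++ [a]).getD l.length 0 = a := by
        rw [List.getD_append_right _ _ _ _ (by rw [h.len])]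
        rw [h.len]
        simp
      have harr : (l ++ [false]).getD l.length false = false := by
        rw [List.getD_append_right _ _ _ _ le_rfl]
        simp
      rw [hgi, harr]
      constructor
      · intro hf
        exfalso
        obtain ⟨jj, hjj, hje⟩ := List.mem_iff_getElem.mp hamem
        refine hf jj (by rw [← h.len]; exact hjj) ?_
        rw [List.getD_append _ _ _ _ hjj, List.getD_eq_getElem _ _ hjj, hje]
      · intro hb
        exact absurd hb (by simp)

theorem inv_run (k : ℕ) (hk : 1 ≤ k) (l : List Bool)
    (hD : ∀ v ≤ l.length, v ≤ k * ((l.take v).count true)) : Inv k l (run k l) := by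
  induction l using List.reverseRecOn with
  | nil => exact inv_nil k
  | append_singleton l b ih =>
    have hpre : ∀ v ≤ l.length, v ≤ k * ((l.take v).count true) := by
      intro v hv
      have := hD v (by simp; omega)
      rwa [List.take_append_of_le_length hv] at this
    have hInv := ih hpre
    rw [run_append]
    cases b
    · apply inv_step_false k hk l _ hInv
      have := hD (l.length + 1) (by simp)
      rw [List.take_of_length_le (by simp)] at this
      simpa [List.count_append] using this
    · exact inv_step_true k hk l _ hInv

theorem stk_run_nil (k n : ℕ) (hk : 1 ≤ k) (l : List Bool) (hlen : l.length = k * n)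
    (hcnt : l.count true = n) (hD : ∀ v ≤ l.length, v ≤ k * ((l.take v).count true)) :
    word (run k l) = (run k l).out := by
  have h := inv_run k hk l hD
  have hsum := h.ssum
  rw [h.len, h.cnt, hlen, hcnt] at hsum
  have hzero : (List.map Prod.snd (run k l).stk).sum = 0 := by omega
  have hnil : (run k l).stk = [] := by
    cases hstk : (run k l).stk with
    | nil => rfl
    | cons p rest =>
      exfalso
      have := h.rlow p (hstk ▸ List.mem_cons_self)
      rw [hstk, List.map_cons, List.sum_cons] at hzero
      omega
  unfold word
  rw [hnil, expand_nil, List.append_nil]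


theorem countP_take_ofFn {α : Type*} {N : ℕ} (f : Fin N → α) (q : α → Bool) (v : ℕ) :
    ((List.ofFn f).take v).countP q
      = ((Finset.univ : Finset (Fin N)).filter fun i => i.val < v ∧ q (f i) = true).card := by
  induction v with
  | zero => simp
  | succ v ih =>
    by_cases hv : v < N
    · have htake : (List.ofFn f).take (v+1) = (List.ofFn f).take v ++ [f ⟨v, hv⟩] := by
        rw [List.take_succ]
        congr 1
        rw [List.getElem?_eq_getElem (by simpa using hv)]
        simp
      rw [htake, List.countP_append, ih]
      have hsplit : ((Finset.univ : Finset (Fin N)).filter fun i => i.val < v+1 ∧ q (f i) = true)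
          = ((Finset.univ : Finset (Fin N)).filter fun i => i.val < v ∧ q (f i) = true)
            ∪ ((Finset.univ : Finset (Fin N)).filter fun i => i.val = v ∧ q (f i) = true) := by
      -- split
        ext i
        simp only [Finset.mem_filter, Finset.mem_union, Finset.mem_univ, true_and]
        constructor
        · rintro ⟨h1, h2⟩
          rcases Nat.lt_or_ge i.val v with h3 | h3
          · exact Or.inl ⟨h3, h2⟩
          · exact Or.inr ⟨by omega, h2⟩
        · rintro (⟨h1, h2⟩ | ⟨h1, h2⟩) <;> exact ⟨by omega, h2⟩
      rw [hsplit, Finset.card_union_of_disjoint]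
      · congr 1
        by_cases hq : q (f ⟨v, hv⟩) = true
        · have : ((Finset.univ : Finset (Fin N)).filter fun i => i.val = v ∧ q (f i) = true)
              = {⟨v, hv⟩} := by
            ext i
            simp only [Finset.mem_filter, Finset.mem_univ, true_and, Finset.mem_singleton]
            constructor
            · rintro ⟨h1, h2⟩
              exact Fin.ext h1
            · rintro rfl
              exact ⟨rfl, hq⟩
          rw [this]
          simp [List.countP_cons, hq]
        · have : ((Finset.univ : Finset (Fin N)).filter fun i => i.val = v ∧ q (f i) = true)
              = ∅ := by
            ext i
            simp only [Finset.mem_filter, Finset.mem_univ, true_and, Finset.notMem_empty,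
              iff_false, not_and]
            intro h1
            have : i = ⟨v, hv⟩ := Fin.ext h1
            rw [this]
            exact fun hh => hq hh
          rw [this]
          simp [List.countP_cons, hq]
      · rw [Finset.disjoint_filter]
        intro i _ h1 h2
        omega
    · have htake1 : (List.ofFn f).take (v+1) = (List.ofFn f).take v := by
        rw [List.take_of_length_le (by simp; omega), List.take_of_length_le (by simp; omega)]
      rw [htake1, ih]
      congr 1
      apply Finset.filter_congr
      intro i _
      have : i.val < N := i.isLt
      constructor
      · rintro ⟨h1, h2⟩; exact ⟨by omega, h2⟩
      · rintro ⟨h1, h2⟩; exact ⟨by omega, h2⟩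

theorem ofFn_getD (u : List ℕ) {K : ℕ} (hK : u.length = K) :
    List.ofFn (fun i : Fin K => u.getD i.val 0) = u := by
  apply List.ext_getElem
  · simp [hK]
  · intro i h1 h2
    rw [List.getElem_ofFn]
    exact List.getD_eq_getElem u 0 h2

theorem count_eq_card_filter_getD (u : List ℕ) {K : ℕ} (hK : u.length = K) (a : ℕ) :
    ((Finset.univ : Finset (Fin K)).filter fun i => u.getD i.val 0 = a).card = u.count a := by
  have := countP_take_ofFn (fun i : Fin K => u.getD i.val 0) (fun x => x == a) K
  rw [List.take_of_length_le (by simp), ofFn_getD u hK] at this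
  rw [List.count, this]
  congr 1
  apply Finset.filter_congr
  intro i _
  simp [i.isLt]

theorem count_true_take_ofFn {K : ℕ} (b : Fin K → Bool) (v : ℕ) :
    ((List.ofFn b).take v).count true
      = ((Finset.univ : Finset (Fin K)).filter fun i => i.val < v ∧ b i = true).card := by
  rw [List.count, countP_take_ofFn]
  congr 1
  apply Finset.filter_congr
  intro i _
  simp


variable {K n k : ℕ}

/-- first occurrence indicator -/
def FirstOcc (w : Fin K → Fin n) (i : Fin K) : Prop := ∀ j, j < i → w j ≠ w i

theorem card_val_lt (v : ℕ) (hv : v ≤ K) :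
    ((Finset.univ : Finset (Fin K)).filter fun i => i.val < v).card = v := by
  have hq : ((Finset.univ : Finset (Fin K)).filter fun i => i.val < v).card
      = (Finset.range v).card := by
    apply Finset.card_bij (fun i _ => i.val)
    · intro i hi
      simp only [Finset.mem_filter] at hi
      exact Finset.mem_range.mpr hi.2
    · intro i _ j _ h
      exact Fin.ext h
    · intro j hj
      rw [Finset.mem_range] at hj
      exact ⟨⟨j, by omega⟩, by simp [hj], rfl⟩
  rw [hq, Finset.card_range]

theorem card_firstocc_eq_card_image (w : Fin K → Fin n) (v : ℕ) :
    ((Finset.univ : Finset (Fin K)).filter fun i => i.val < v ∧ FirstOcc w i).card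
      = (((Finset.univ : Finset (Fin K)).filter fun i => i.val < v).image w).card := by
  apply Finset.card_bij (fun i _ => w i)
  · intro i hi
    simp only [Finset.mem_filter] at hi
    exact Finset.mem_image_of_mem w (by simp [hi.2.1])
  · intro i hi j hj h
    simp only [Finset.mem_filter] at hi hj
    rcases lt_trichotomy i j with h1 | h1 | h1
    · exact absurd h (hj.2.2 i h1)
    · exact h1
    · exact absurd h.symm (hi.2.2 j h1)
  · intro a ha
    rw [Finset.mem_image] at ha
    obtain ⟨t, ht, hta⟩ := ha
    simp only [Finset.mem_filter] at ht
    have hne : ((Finset.univ : Finset (Fin K)).filter fun j => w j = a).Nonempty :=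
      ⟨t, by simp [hta]⟩
    set F := (Finset.univ : Finset (Fin K)).filter fun j => w j = a with hF
    set j0 := F.min' hne with hj0
    have hj0m : j0 ∈ F := F.min'_mem hne
    have hj0a : w j0 = a := (Finset.mem_filter.mp hj0m).2
    refine ⟨j0, ?_, hj0a⟩
    simp only [Finset.mem_filter, Finset.mem_univ, true_and]
    refine ⟨?_, ?_⟩
    · have hle : j0 ≤ t := F.min'_le t (by simp [hF, hta])
      rw [Fin.le_def] at hle
      have := ht.2
      omega
    · intro j hj heq
      have hjF : j ∈ F := by simp [hF, heq.trans hj0a]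
      exact absurd (lt_of_le_of_lt (F.min'_le j hjF) hj) (lt_irrefl _)

theorem prefix_bound (w : Fin K → Fin n)
    (hc : ∀ a, ((Finset.univ : Finset (Fin K)).filter fun i => w i = a).card = k)
    (v : ℕ) (hv : v ≤ K) :
    v ≤ k * ((Finset.univ : Finset (Fin K)).filter fun i => i.val < v ∧ FirstOcc w i).card := by
  set s := (Finset.univ : Finset (Fin K)).filter fun i => i.val < v with hs
  have h1 : s.card = v := card_val_lt v hv
  have h2 := Finset.card_eq_sum_card_image w s
  have heach : ∀ a ∈ s.image w, (s.filter fun i => w i = a).card ≤ k := by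
    intro a _
    calc (s.filter fun i => w i = a).card
        ≤ ((Finset.univ : Finset (Fin K)).filter fun i => w i = a).card :=
          Finset.card_le_card (Finset.filter_subset_filter _ (Finset.subset_univ s))
      _ = k := hc a
  have h3 := Finset.sum_le_card_nsmul (s.image w) _ k heach
  rw [card_firstocc_eq_card_image, ← hs]
  rw [smul_eq_mul, mul_comm] at h3
  omega

theorem image_univ_of_surj (w : Fin K → Fin n) (hk : 1 ≤ k)
    (hc : ∀ a, ((Finset.univ : Finset (Fin K)).filter fun i => w i = a).card = k) :
    (Finset.univ : Finset (Fin K)).image w = Finset.univ := by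
  apply Finset.eq_univ_of_forall
  intro a
  have : ((Finset.univ : Finset (Fin K)).filter fun i => w i = a).Nonempty := by
    rw [← Finset.card_pos, hc a]
    omega
  obtain ⟨i, hi⟩ := this
  simp only [Finset.mem_filter] at hi
  exact hi.2 ▸ Finset.mem_image_of_mem w (Finset.mem_univ i)

theorem firstocc_total (w : Fin K → Fin n) (hk : 1 ≤ k)
    (hc : ∀ a, ((Finset.univ : Finset (Fin K)).filter fun i => w i = a).card = k) :
    ((Finset.univ : Finset (Fin K)).filter fun i => i.val < K ∧ FirstOcc w i).card = n := by
  rw [card_firstocc_eq_card_image]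
  have : ((Finset.univ : Finset (Fin K)).filter fun i => i.val < K) = Finset.univ := by
    apply Finset.eq_univ_of_forall
    intro i
    simp [i.isLt]
  rw [this, image_univ_of_surj w hk hc, Finset.card_univ, Fintype.card_fin]

/-- prefix-incomplete positions before `j` -/
noncomputable def preJ (k : ℕ) (w : Fin K → Fin n) (j : Fin K) : Finset (Fin K) :=
  Finset.univ.filter fun t => t < j ∧
    ((Finset.univ.filter fun s => s < j ∧ w s = w t).card < k)

theorem prefix_fiber_lt (w : Fin K → Fin n)
    (hc : ∀ a, ((Finset.univ : Finset (Fin K)).filter fun i => w i = a).card = k)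
    (j t : Fin K) (h : w t = w j) :
    ((Finset.univ : Finset (Fin K)).filter fun s => s < j ∧ w s = w t).card < k := by
  have hk1 : 1 ≤ k := by
    rw [← hc (w j)]
    exact Finset.card_pos.mpr ⟨j, by simp⟩
  have hsub : ((Finset.univ : Finset (Fin K)).filter fun s => s < j ∧ w s = w t)
      ⊆ ((Finset.univ : Finset (Fin K)).filter fun s => w s = w t).erase j := by
    intro s hs
    simp only [Finset.mem_filter, Finset.mem_univ, true_and] at hs
    exact Finset.mem_erase.mpr ⟨ne_of_lt hs.1, by simp [hs.2]⟩
  have hcard := Finset.card_le_card hsub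
  have herase : (((Finset.univ : Finset (Fin K)).filter fun s => w s = w t).erase j).card
      = k - 1 := by
    rw [Finset.card_erase_of_mem (by simp [h.symm]), hc (w t)]
  omega

theorem preJ_nonempty (w : Fin K → Fin n)
    (hc : ∀ a, ((Finset.univ : Finset (Fin K)).filter fun i => w i = a).card = k)
    (j : Fin K) (hnf : ¬ FirstOcc w j) : (preJ k w j).Nonempty := by
  unfold FirstOcc at hnf
  push_neg at hnf
  obtain ⟨t, htj, hwt⟩ := hnf
  exact ⟨t, by
    simp only [preJ, Finset.mem_filter, Finset.mem_univ, true_and]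
    exact ⟨htj, prefix_fiber_lt w hc j t hwt⟩⟩

theorem repeat_eq (w : Fin K → Fin n)
    (hc : ∀ a, ((Finset.univ : Finset (Fin K)).filter fun i => w i = a).card = k)
    (hnc : ∀ i j l p : Fin K, i < j → j < l → l < p → w i = w l → w j = w p → w i = w j)
    (j : Fin K) (hnf : ¬ FirstOcc w j) (hne : (preJ k w j).Nonempty) :
    w j = w ((preJ k w j).max' hne) := by
  set js := (preJ k w j).max' hne with hjs
  have hjsm : js ∈ preJ k w j := (preJ k w j).max'_mem hne
  simp only [preJ, Finset.mem_filter, Finset.mem_univ, true_and] at hjsm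
  by_contra hneq
  -- last occurrence of w j before j
  have hnf' := hnf
  unfold FirstOcc at hnf'
  push_neg at hnf'
  obtain ⟨t0, ht0j, ht0⟩ := hnf'
  have hJne : ((Finset.univ : Finset (Fin K)).filter fun t => t < j ∧ w t = w j).Nonempty :=
    ⟨t0, by simp [ht0j, ht0]⟩
  set j0 := (((Finset.univ : Finset (Fin K)).filter fun t => t < j ∧ w t = w j).max' hJne)
    with hj0
  have hj0m := (((Finset.univ : Finset (Fin K)).filter fun t => t < j ∧ w t = w j)).max'_mem hJne
  simp only [Finset.mem_filter, Finset.mem_univ, true_and] at hj0m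
  obtain ⟨hj0j, hj0w⟩ := hj0m
  -- j0 is in preJ
  have hj0J : j0 ∈ preJ k w j := by
    simp only [preJ, Finset.mem_filter, Finset.mem_univ, true_and]
    refine ⟨hj0j, ?_⟩
    have : ((Finset.univ : Finset (Fin K)).filter fun s => s < j ∧ w s = w j0).card < k := by
      apply prefix_fiber_lt w hc j j0 hj0w
    exact this
  have hj0le : j0 ≤ js := (preJ k w j).le_max' j0 hj0J
  have hj0ne : j0 ≠ js := by
    intro heq
    exact hneq (by rw [← heq]; exact hj0w.symm)
  have hj0lt : j0 < js := lt_of_le_of_ne hj0le hj0ne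
  -- js has an occurrence p ≥ j, in fact p > j
  have hp : ∃ p : Fin K, w p = w js ∧ j < p := by
    by_contra hcon
    push_neg at hcon
    have hsub : ((Finset.univ : Finset (Fin K)).filter fun s => w s = w js)
        ⊆ ((Finset.univ : Finset (Fin K)).filter fun s => s < j ∧ w s = w js) := by
      intro s hs
      simp only [Finset.mem_filter, Finset.mem_univ, true_and] at hs ⊢
      refine ⟨?_, hs⟩
      have hle := hcon s hs
      rcases lt_or_eq_of_le hle with h1 | h1
      · exact h1
      · exfalso
        rw [h1] at hs
        exact hneq hs
    have h1 := Finset.card_le_card hsub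
    rw [hc (w js)] at h1
    exact absurd (lt_of_le_of_lt h1 hjsm.2) (lt_irrefl _)
  obtain ⟨p, hpw, hjp⟩ := hp
  -- crossing pattern j0 < js < j < p
  have := hnc j0 js j p hj0lt hjsm.1 hjp hj0w hpw.symm
  exact hneq (hj0w.symm.trans this)

theorem determinism (w w' : Fin K → Fin n)
    (hc : ∀ a, ((Finset.univ : Finset (Fin K)).filter fun i => w i = a).card = k)
    (hc' : ∀ a, ((Finset.univ : Finset (Fin K)).filter fun i => w' i = a).card = k)
    (hnc : ∀ i j l p : Fin K, i < j → j < l → l < p → w i = w l → w j = w p → w i = w j)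
    (hnc' : ∀ i j l p : Fin K, i < j → j < l → l < p → w' i = w' l → w' j = w' p → w' i = w' j)
    (hfo : ∀ i, FirstOcc w i ↔ FirstOcc w' i) :
    ∀ i j : Fin K, w i = w j ↔ w' i = w' j := by
  suffices h : ∀ m, ∀ i j : Fin K, i.val < m → j.val < m → (w i = w j ↔ w' i = w' j) by
    intro i j
    exact h K i j i.isLt j.isLt
  intro m
  induction m with
  | zero => intro i j hi hj; omega
  | succ m IH =>
    -- key: handle pairs i < j with j.val = m
    have key : ∀ i j : Fin K, i < j → j.val = m → (w i = w j ↔ w' i = w' j) := by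
      intro i j hij hjm
      by_cases hf : FirstOcc w j
      · have hf' := (hfo j).mp hf
        constructor
        · intro h; exact absurd h (hf i hij)
        · intro h; exact absurd h (hf' i hij)
      · have hnf' : ¬ FirstOcc w' j := fun h => hf ((hfo j).mpr h)
        -- preJ sets agree
        have hJeq : preJ k w j = preJ k w' j := by
          unfold preJ
          apply Finset.filter_congr
          intro t _
          constructor
          · rintro ⟨h1, h2⟩
            refine ⟨h1, ?_⟩
            have hset : ((Finset.univ : Finset (Fin K)).filter fun s => s < j ∧ w s = w t)
                = ((Finset.univ : Finset (Fin K)).filter fun s => s < j ∧ w' s = w' t) := by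
              apply Finset.filter_congr
              intro s _
              constructor
              · rintro ⟨hs1, hs2⟩
                exact ⟨hs1, (IH s t (by rw [Fin.lt_def] at hs1; omega)
                  (by rw [Fin.lt_def] at h1; omega)).mp hs2⟩
              · rintro ⟨hs1, hs2⟩
                exact ⟨hs1, (IH s t (by rw [Fin.lt_def] at hs1; omega)
                  (by rw [Fin.lt_def] at h1; omega)).mpr hs2⟩
            rwa [← hset]
          · rintro ⟨h1, h2⟩
            refine ⟨h1, ?_⟩
            have hset : ((Finset.univ : Finset (Fin K)).filter fun s => s < j ∧ w s = w t)
                = ((Finset.univ : Finset (Fin K)).filter fun s => s < j ∧ w' s = w' t) := by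
              apply Finset.filter_congr
              intro s _
              constructor
              · rintro ⟨hs1, hs2⟩
                exact ⟨hs1, (IH s t (by rw [Fin.lt_def] at hs1; omega)
                  (by rw [Fin.lt_def] at h1; omega)).mp hs2⟩
              · rintro ⟨hs1, hs2⟩
                exact ⟨hs1, (IH s t (by rw [Fin.lt_def] at hs1; omega)
                  (by rw [Fin.lt_def] at h1; omega)).mpr hs2⟩
            rwa [hset]
        have hne := preJ_nonempty w hc j hf
        have hne' : (preJ k w' j).Nonempty := hJeq ▸ hne
        have hrep := repeat_eq w hc hnc j hf hne
        have hrep' := repeat_eq w' hc' hnc' j hnf' hne'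
        have hmax : (preJ k w j).max' hne = (preJ k w' j).max' hne' := by
          congr 1
        set js := (preJ k w j).max' hne with hjsdef
        have hjsm := (preJ k w j).max'_mem hne
        simp only [preJ, Finset.mem_filter, Finset.mem_univ, true_and] at hjsm
        have hjslt : js.val < m := by
          have h1 : js < j := by
            have h2 := (preJ k w j).max'_mem hne
            simp only [preJ, Finset.mem_filter, Finset.mem_univ, true_and] at h2
            exact h2.1
          rw [Fin.lt_def] at h1
          omega
        have hilt : i.val < m := by
          rw [Fin.lt_def] at hij
          omega
        rw [← hmax] at hrep'
        constructor
        · intro h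
          rw [hrep']
          rw [hrep] at h
          exact (IH i js hilt hjslt).mp h
        · intro h
          rw [hrep]
          rw [hrep'] at h
          exact (IH i js hilt hjslt).mpr h
    intro i j hi hj
    rcases lt_trichotomy i j with hij | hij | hij
    · by_cases hjm : j.val = m
      · exact key i j hij hjm
      · exact IH i j (by omega) (by rw [Fin.lt_def] at hij; omega)
    · rw [hij]
      simp
    · rw [eq_comm, show (w' i = w' j) ↔ (w' j = w' i) from eq_comm]
      by_cases him : i.val = m
      · exact key j i hij him
      · exact IH j i (by rw [Fin.lt_def] at hij; omega) (by omega)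


noncomputable def SbSet (K : ℕ) (P : Fin K → Prop) : Finset (Fin (K+1)) :=
  (Finset.univ.filter P).image Fin.castSucc

theorem castSucc_mem_SbSet {K : ℕ} {P : Fin K → Prop} {i : Fin K} :
    Fin.castSucc i ∈ SbSet K P ↔ P i := by
  unfold SbSet
  simp only [Finset.mem_image, Finset.mem_filter, Finset.mem_univ, true_and]
  constructor
  · rintro ⟨j, hj, hji⟩
    rwa [← Fin.castSucc_injective K hji]
  · intro h
    exact ⟨i, h, rfl⟩

theorem last_not_mem_SbSet {K : ℕ} {P : Fin K → Prop} : Fin.last K ∉ SbSet K P := by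
  unfold SbSet
  simp only [Finset.mem_image, Finset.mem_filter, Finset.mem_univ, true_and, not_exists]
  intro j
  intro hj
  exact (Fin.castSucc_lt_last j).ne hj.2

theorem card_SbSet {K : ℕ} (P : Fin K → Prop) :
    (SbSet K P).card = (Finset.univ.filter P).card :=
  Finset.card_image_of_injective _ (Fin.castSucc_injective K)

theorem SbSet_eq_self {K : ℕ} (S : Finset (Fin (K+1))) (hlast : Fin.last K ∉ S) :
    SbSet K (fun i => Fin.castSucc i ∈ S) = S := by
  ext x
  by_cases hx : x = Fin.last K
  · subst hx
    simp [last_not_mem_SbSet, hlast]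
  · obtain ⟨y, rfl⟩ := Fin.exists_castSucc_eq.mpr hx
    rw [castSucc_mem_SbSet]

theorem Tcnt_succ {K : ℕ} (P : Fin K → Prop) (v : ℕ) (hv : v < K) :
    ((Finset.univ : Finset (Fin K)).filter fun i => i.val < v+1 ∧ P i).card
      = ((Finset.univ : Finset (Fin K)).filter fun i => i.val < v ∧ P i).card
        + (if P ⟨v, hv⟩ then 1 else 0) := by
  have hsplit : ((Finset.univ : Finset (Fin K)).filter fun i => i.val < v+1 ∧ P i)
      = ((Finset.univ : Finset (Fin K)).filter fun i => i.val < v ∧ P i)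
        ∪ ((Finset.univ : Finset (Fin K)).filter fun i => i.val = v ∧ P i) := by
    ext i
    simp only [Finset.mem_filter, Finset.mem_union, Finset.mem_univ, true_and]
    constructor
    · rintro ⟨h1, h2⟩
      rcases Nat.lt_or_ge i.val v with h3 | h3
      · exact Or.inl ⟨h3, h2⟩
      · exact Or.inr ⟨by omega, h2⟩
    · rintro (⟨h1, h2⟩ | ⟨h1, h2⟩) <;> exact ⟨by omega, h2⟩
  rw [hsplit, Finset.card_union_of_disjoint (by
    rw [Finset.disjoint_filter]
    intro i _ h1 h2
    omega)]
  congr 1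
  by_cases hP : P ⟨v, hv⟩
  · rw [if_pos hP]
    rw [show ((Finset.univ : Finset (Fin K)).filter fun i => i.val = v ∧ P i) = {⟨v, hv⟩} from ?_]
    · simp
    ext i
    simp only [Finset.mem_filter, Finset.mem_univ, true_and, Finset.mem_singleton]
    constructor
    · rintro ⟨h1, _⟩; exact Fin.ext h1
    · rintro rfl; exact ⟨rfl, hP⟩
  · rw [if_neg hP]
    rw [show ((Finset.univ : Finset (Fin K)).filter fun i => i.val = v ∧ P i) = ∅ from ?_]
    · simp
    ext i
    simp only [Finset.mem_filter, Finset.mem_univ, true_and, Finset.notMem_empty, iff_false,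
      not_and]
    intro h1 h2
    exact hP (by rwa [show (⟨v, hv⟩ : Fin K) = i from Fin.ext h1.symm])

theorem psum_SbSet (k K : ℕ) (P : Fin K → Prop) (v : ℕ) (hv : v ≤ K) :
    psum k K (SbSet K P) v
      = k * (((Finset.univ : Finset (Fin K)).filter fun i => i.val < v ∧ P i).card : ℤ) - v := by
  induction v with
  | zero =>
    have : ((Finset.univ : Finset (Fin K)).filter fun i => i.val < 0 ∧ P i) = ∅ := by
      ext i; simp
    simp [psum, this]
  | succ v ih =>
    have hvK : v < K := hv
    rw [psum_succ, ih (by omega)]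
    have hwt : wt k K (SbSet K P) v = if P ⟨v, hvK⟩ then (k : ℤ) - 1 else -1 := by
      unfold wt
      congr 1
      rw [eq_iff_iff]
      have hcast : ((v : ℕ) : Fin (K+1)) = Fin.castSucc ⟨v, hvK⟩ := by
        apply Fin.ext
        rw [Fin.val_cast_of_lt (by omega)]
        rfl
      rw [hcast, castSucc_mem_SbSet]
    rw [hwt, Tcnt_succ P v hvK]
    push_cast
    split <;> ring

theorem isGood_SbSet_iff (k K : ℕ) (P : Fin K → Prop) :
    IsGood k K (SbSet K P) ↔ ∀ v ≤ K,
      v ≤ k * ((Finset.univ : Finset (Fin K)).filter fun i => i.val < v ∧ P i).card := by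
  unfold IsGood
  constructor
  · intro h v hv
    have := h v hv
    rw [psum_SbSet k K P v hv] at this
    have h2 : (v : ℤ) ≤ k * (((Finset.univ : Finset (Fin K)).filter
        fun i => i.val < v ∧ P i).card : ℤ) := by linarith
    exact_mod_cast h2
  · intro h v hv
    rw [psum_SbSet k K P v hv]
    have := h v hv
    have h2 : (v : ℤ) ≤ k * (((Finset.univ : Finset (Fin K)).filter
        fun i => i.val < v ∧ P i).card : ℤ) := by exact_mod_cast this
    linarith

theorem last_not_mem_of_good (k K n : ℕ) (hk : 1 ≤ k) (hK : k * n = K)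
    (S : Finset (Fin (K+1))) (hcard : S.card = n) (hgood : IsGood k K S) :
    Fin.last K ∉ S := by
  intro hmem
  have h1 := psum_period k K S (by rw [hcard]; exact hK) 0
  have h0 : psum k K S 0 = 0 := by simp [psum]
  rw [Nat.zero_add, h0] at h1
  have h2 : psum k K S (K+1) = psum k K S K + wt k K S K := psum_succ k K S K
  have hwt : wt k K S K = (k : ℤ) - 1 := by
    unfold wt
    rw [if_pos]
    have : ((K : ℕ) : Fin (K+1)) = Fin.last K := by
      apply Fin.ext
      rw [Fin.val_cast_of_lt (by omega)]
      rfl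
    rwa [this]
  have h3 := hgood K le_rfl
  rw [h1, hwt] at h2
  have : (1 : ℤ) ≤ k := by exact_mod_cast hk
  linarith


theorem build (k n : ℕ) (hk : 1 ≤ k) (b : Fin (k*n) → Bool)
    (htot : ((Finset.univ : Finset (Fin (k*n))).filter fun i => b i = true).card = n)
    (hpre : ∀ v ≤ k*n, v ≤ k *
      ((Finset.univ : Finset (Fin (k*n))).filter fun i => i.val < v ∧ b i = true).card) :
    ∃ w : Fin (k*n) → Fin n,
      (∀ a : Fin n, ((Finset.univ : Finset (Fin (k*n))).filter fun i => w i = a).card = k) ∧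
      (∀ i j l p : Fin (k*n), i < j → j < l → l < p → w i = w l → w j = w p → w i = w j) ∧
      (∀ i, FirstOcc w i ↔ b i = true) := by
  set l := List.ofFn b with hl
  have hlen : l.length = k * n := by simp [hl]
  have hcounttrue : ∀ v, (l.take v).count true
      = ((Finset.univ : Finset (Fin (k*n))).filter fun i => i.val < v ∧ b i = true).card :=
    count_true_take_ofFn b
  have hD : ∀ v ≤ l.length, v ≤ k * ((l.take v).count true) := by
    intro v hv
    rw [hcounttrue v]
    exact hpre v (by omega)
  have hInv := inv_run k hk l hD
  have hcnt : l.count true = n := by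
    have h1 := hcounttrue (k*n)
    rw [List.take_of_length_le (by omega)] at h1
    rw [h1]
    rw [show ((Finset.univ : Finset (Fin (k*n))).filter fun i => i.val < k*n ∧ b i = true)
        = ((Finset.univ : Finset (Fin (k*n))).filter fun i => b i = true) from
      Finset.filter_congr (fun i _ => by simp [i.isLt])]
    exact htot
  have hword : word (run k l) = (run k l).out := stk_run_nil k n hk l hlen hcnt hD
  set u := (run k l).out with hu
  have hulen : u.length = k * n := by rw [← hu] at *; rw [hInv.len, hlen]
  have hc : (run k l).c = n := by rw [hInv.cnt, hcnt]
  have hcountu : ∀ a : ℕ, u.count a = if a < n then k else 0 := by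
    intro a
    have := hInv.cword a
    rwa [hword, hc] at this
  have hval : ∀ i : Fin (k*n), u.getD i.val 0 < n := by
    intro i
    have hmem : u.getD i.val 0 ∈ u := getD_mem (by omega)
    have := hcountu (u.getD i.val 0)
    by_contra hcon
    rw [if_neg hcon] at this
    exact (List.count_eq_zero.mp this) hmem
  refine ⟨fun i => ⟨u.getD i.val 0, hval i⟩, ?_, ?_, ?_⟩
  · intro a
    have h1 := count_eq_card_filter_getD u hulen a.val
    have hfe : ((Finset.univ : Finset (Fin (k*n))).filter
          fun i => (⟨u.getD i.val 0, hval i⟩ : Fin n) = a)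
        = ((Finset.univ : Finset (Fin (k*n))).filter fun i => u.getD i.val 0 = a.val) := by
      apply Finset.filter_congr
      intro i _
      rw [Fin.ext_iff]
    rw [hfe, h1, hcountu, if_pos a.isLt]
  · intro i j l' p hij hjl hlp hil hjp
    have hnc := hInv.ncw
    rw [hword] at hnc
    have := hnc i.val j.val l'.val p.val hij hjl hlp (by omega)
      (by rwa [Fin.ext_iff] at hil) (by rwa [Fin.ext_iff] at hjp)
    exact Fin.ext this
  · intro i
    have hfi := hInv.firsts i.val (by rw [hlen]; exact i.isLt)
    have hgd : l.getD i.val false = b i := by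
      rw [List.getD_eq_getElem l false (by rw [hlen]; exact i.isLt)]
      simp [hl]
    rw [hgd] at hfi
    rw [← hfi]
    constructor
    · intro hfo j hj heq
      exact (hfo ⟨j, by omega⟩ (by rw [Fin.lt_def]; exact hj)) (Fin.ext heq)
    · intro hfl j hj heq
      exact (hfl j.val (by rw [Fin.lt_def] at hj; exact hj)) (by rwa [Fin.ext_iff] at heq)

theorem surj_of_counts {K n k : ℕ} (hk : 1 ≤ k) (w : Fin K → Fin n)
    (hc : ∀ a, ((Finset.univ : Finset (Fin K)).filter fun i => w i = a).card = k) :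
    Function.Surjective w := by
  intro a
  have hne : ((Finset.univ : Finset (Fin K)).filter fun i => w i = a).Nonempty := by
    rw [← Finset.card_pos, hc a]
    omega
  obtain ⟨i, hi⟩ := hne
  exact ⟨i, (Finset.mem_filter.mp hi).2⟩

theorem exists_perm {K n : ℕ} (w w' : Fin K → Fin n)
    (hsurj : Function.Surjective w) (hsurj' : Function.Surjective w')
    (hiff : ∀ i j, w i = w j ↔ w' i = w' j) :
    ∃ σ : Equiv.Perm (Fin n), w' = σ ∘ w := by
  classical
  set ri := Function.surjInv hsurj with hri
  set g := fun a => w' (ri a) with hg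
  have hgw : ∀ i, g (w i) = w' i := by
    intro i
    apply (hiff (ri (w i)) i).mp
    exact Function.surjInv_eq hsurj (w i)
  have hgsurj : Function.Surjective g := by
    intro a'
    obtain ⟨i, hi⟩ := hsurj' a'
    exact ⟨w i, by rw [hgw i, hi]⟩
  have hgbij : Function.Bijective g := Finite.surjective_iff_bijective.mp hgsurj
  exact ⟨Equiv.ofBijective g hgbij, by funext i; exact (hgw i).symm⟩

noncomputable def Phi (k n : ℕ) (w : Fin (k*n) → Fin n) : Finset (Fin (k*n+1)) :=
  SbSet (k*n) (FirstOcc w)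

theorem Phi_mem_goodSet (k n : ℕ) (hk : 1 ≤ k) (w : Fin (k*n) → Fin n)
    (hc : ∀ a : Fin n, ((Finset.univ : Finset (Fin (k*n))).filter fun i => w i = a).card = k) :
    Phi k n w ∈ GoodSet k (k*n) n := by
  simp only [GoodSet, Finset.mem_filter, Finset.mem_powersetCard_univ]
  constructor
  · rw [Phi, card_SbSet]
    have h1 := firstocc_total w hk hc
    rw [show (Finset.univ.filter (FirstOcc w))
        = ((Finset.univ : Finset (Fin (k*n))).filter fun i => i.val < k*n ∧ FirstOcc w i) from
      Finset.filter_congr (fun i _ => by simp [i.isLt])]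
    exact h1
  · rw [Phi, isGood_SbSet_iff]
    intro v hv
    exact prefix_bound w hc v hv

theorem fiber_card (k n : ℕ) (hk : 1 ≤ k) (S : Finset (Fin (k*n+1)))
    (hS : S ∈ GoodSet k (k*n) n) :
    ((kQuasiStirlingSet k n).filter fun w => Phi k n w = S).card = n.factorial := by
  simp only [GoodSet, Finset.mem_filter, Finset.mem_powersetCard_univ] at hS
  obtain ⟨hcard, hgood⟩ := hS
  have hlast : Fin.last (k*n) ∉ S := last_not_mem_of_good k (k*n) n hk rfl S hcard hgood
  obtain ⟨P, hP⟩ : ∃ P : Fin (k*n) → Prop, P = fun i => Fin.castSucc i ∈ S := ⟨_, rfl⟩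
  have hSb : SbSet (k*n) P = S := by
    rw [hP]
    exact SbSet_eq_self S hlast
  obtain ⟨b, hPb⟩ : ∃ b : Fin (k*n) → Bool, ∀ i, b i = true ↔ P i :=
    ⟨fun i => decide (P i), fun i => by simp⟩
  have htot : ((Finset.univ : Finset (Fin (k*n))).filter fun i => b i = true).card = n := by
    have h1 : ((Finset.univ : Finset (Fin (k*n))).filter fun i => b i = true)
        = (Finset.univ.filter P) := Finset.filter_congr (fun i _ => hPb i)
    rw [h1, ← card_SbSet P, hSb, hcard]
  have hpre : ∀ v ≤ k*n, v ≤ k * ((Finset.univ : Finset (Fin (k*n))).filter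
      fun i => i.val < v ∧ b i = true).card := by
    intro v hv
    have h1 : ((Finset.univ : Finset (Fin (k*n))).filter fun i => i.val < v ∧ b i = true)
        = (Finset.univ.filter fun i => i.val < v ∧ P i) :=
      Finset.filter_congr (fun i _ => by rw [hPb i])
    rw [h1]
    exact (isGood_SbSet_iff k (k*n) P).mp (by rwa [hSb]) v hv
  obtain ⟨w0, hw0c, hw0nc, hw0f⟩ := build k n hk b htot hpre
  have hw0fo : ∀ i, FirstOcc w0 i ↔ P i := fun i => (hw0f i).trans (hPb i)
  have hPhiw0 : Phi k n w0 = S := by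
    rw [Phi, ← hSb]
    unfold SbSet
    congr 1
    exact Finset.filter_congr (fun i _ => hw0fo i)
  have hw0surj : Function.Surjective w0 := surj_of_counts hk w0 hw0c
  have hbij : ((Finset.univ : Finset (Equiv.Perm (Fin n)))).card
      = ((kQuasiStirlingSet k n).filter fun w => Phi k n w = S).card := by
    apply Finset.card_bij
      (fun (σ : Equiv.Perm (Fin n)) (_ : σ ∈ (Finset.univ : Finset (Equiv.Perm (Fin n)))) =>
        ((σ : Fin n → Fin n) ∘ w0 : Fin (k*n) → Fin n))
    · intro σ _
      rw [Finset.mem_filter]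
      constructor
      · rw [kQuasiStirlingSet, Finset.mem_filter]
        refine ⟨Finset.mem_univ _, ?_, ?_⟩
        · intro a
          have h1 : ((Finset.univ : Finset (Fin (k*n))).filter fun i => (σ ∘ w0) i = a)
              = (Finset.univ.filter fun i => w0 i = σ.symm a) := by
            apply Finset.filter_congr
            intro i _
            simp only [Function.comp_apply]
            constructor
            · intro h; rw [← h]; simp
            · intro h; rw [h]; simp
          rw [h1]
          exact hw0c (σ.symm a)
        · intro i j l p h1 h2 h3 h4 h5
          simp only [Function.comp_apply] at h4 h5 ⊢
          rw [EmbeddingLike.apply_eq_iff_eq] at h4 h5 ⊢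
          exact hw0nc i j l p h1 h2 h3 h4 h5
      · rw [← hPhiw0, Phi, Phi]
        unfold SbSet
        congr 1
        apply Finset.filter_congr
        intro i _
        unfold FirstOcc
        constructor
        · intro h j hj heq
          refine h j hj ?_
          simp only [Function.comp_apply]
          rw [heq]
        · intro h j hj heq
          simp only [Function.comp_apply] at heq
          rw [EmbeddingLike.apply_eq_iff_eq] at heq
          exact h j hj heq
    · intro σ _ σ' _ h
      apply Equiv.ext
      intro a
      obtain ⟨i, rfl⟩ := hw0surj a
      exact congrFun h i
    · intro w hw
      rw [Finset.mem_filter] at hw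
      obtain ⟨hwmem, hwPhi⟩ := hw
      rw [kQuasiStirlingSet, Finset.mem_filter] at hwmem
      obtain ⟨-, hwc, hwnc⟩ := hwmem
      have hwsurj : Function.Surjective w := surj_of_counts hk w hwc
      have hfoeq : ∀ i, FirstOcc w0 i ↔ FirstOcc w i := by
        have h1 : SbSet (k*n) (FirstOcc w) = SbSet (k*n) (FirstOcc w0) := by
          show Phi k n w = Phi k n w0
          rw [hwPhi, hPhiw0]
        intro i
        rw [← castSucc_mem_SbSet (P := FirstOcc w0) (i := i), ← h1,
          castSucc_mem_SbSet]
      have hiff := determinism w0 w hw0c hwc hw0nc hwnc hfoeq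
      obtain ⟨σ, hσ⟩ := exists_perm w0 w hw0surj hwsurj hiff
      exact ⟨σ, Finset.mem_univ σ, hσ.symm⟩
  rw [← hbij, Finset.card_univ, Fintype.card_perm, Fintype.card_fin]

theorem card_qset (k n : ℕ) (hk : 1 ≤ k) :
    (kQuasiStirlingSet k n).card = n.factorial * (GoodSet k (k*n) n).card := by
  have hmaps : ∀ w ∈ kQuasiStirlingSet k n, Phi k n w ∈ GoodSet k (k*n) n := by
    intro w hw
    rw [kQuasiStirlingSet, Finset.mem_filter] at hw
    exact Phi_mem_goodSet k n hk w hw.2.1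
  rw [Finset.card_eq_sum_card_fiberwise hmaps,
    Finset.sum_congr rfl (fun S hS => fiber_card k n hk S hS),
    Finset.sum_const, smul_eq_mul, mul_comm]

end QS

/-- The number of `k`-quasi-Stirling permutations of size `n` equals
`(k*n)! / ((k-1)*n + 1)!`, which equals `n!` times the `k`-Catalan number
`C_{n,k} = (1/((k-1)*n+1)) * choose (k*n) n`. -/
theorem card_kQuasiStirling (k n : ℕ) (hk : 1 ≤ k) (hn : 1 ≤ n) :
    (((kQuasiStirlingSet k n).card : ℚ)
        = (k * n).factorial / ((k - 1) * n + 1).factorial) ∧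
    (((kQuasiStirlingSet k n).card : ℚ)
        = n.factorial * ((k * n).choose n) / ((k - 1) * n + 1)) := by
  have hG := QS.card_goodSet_mul k (k*n) n rfl
  have hcardeq := QS.card_qset k n hk
  set G := (QS.GoodSet k (k*n) n).card with hGdef
  set N := (kQuasiStirlingSet k n).card with hNdef
  set M := (k-1)*n + 1 with hM
  have hKn : k*n + 1 = n + M := by
    obtain ⟨k', rfl⟩ : ∃ k', k = k' + 1 := ⟨k-1, by omega⟩
    simp only [hM, Nat.add_sub_cancel]
    ring
  have hM1 : 1 ≤ M := by omega
  -- main ℕ identity: N * (k*n+1) = n! * (k*n+1).choose n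
  have hmain : N * (k*n+1) = n.factorial * (k*n+1).choose n := by
    rw [hcardeq, mul_assoc, hG]
  have hch1 : (k*n+1).choose n * n.factorial * M.factorial = (k*n+1).factorial := by
    have := Nat.choose_mul_factorial_mul_factorial (n := k*n+1) (k := n) (by omega)
    rwa [show k*n+1 - n = M by omega] at this
  have hch2 : (k*n).choose n * (k*n+1) = (k*n+1).choose n * M := by
    have := Nat.choose_mul_succ_eq (k*n) n
    rwa [show k*n+1 - n = M by omega] at this
  have hpos : (0:ℚ) < (k*n+1 : ℕ) := by positivity
  constructor
  · rw [eq_div_iff (by positivity)]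
    -- N * M! = (k*n)!
    have hnat : N * M.factorial * (k*n+1) = (k*n).factorial * (k*n+1) := by
      calc N * M.factorial * (k*n+1) = (N * (k*n+1)) * M.factorial := by ring
        _ = n.factorial * (k*n+1).choose n * M.factorial := by rw [hmain]
        _ = (k*n+1).choose n * n.factorial * M.factorial := by ring
        _ = (k*n+1).factorial := hch1
        _ = (k*n+1) * (k*n).factorial := Nat.factorial_succ (k*n)
        _ = (k*n).factorial * (k*n+1) := by ring
    have hnat2 : N * M.factorial = (k*n).factorial :=
      Nat.eq_of_mul_eq_mul_right (by omega) hnat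
    exact_mod_cast hnat2
  · have hMQ : ((k:ℚ) - 1) * (n:ℚ) + 1 = (M:ℚ) := by
      rw [hM]
      push_cast [Nat.cast_sub hk]
      ring
    rw [show ((k:ℚ) - 1) * (n:ℚ) + 1 = (M:ℚ) from hMQ]
    rw [eq_div_iff (by exact_mod_cast (by omega : M ≠ 0) : ((M:ℕ):ℚ) ≠ 0)]
    have hnat : N * M * (k*n+1) = n.factorial * (k*n).choose n * (k*n+1) := by
      calc N * M * (k*n+1) = (N * (k*n+1)) * M := by ring
        _ = n.factorial * (k*n+1).choose n * M := by rw [hmain]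
        _ = n.factorial * ((k*n+1).choose n * M) := by ring
        _ = n.factorial * ((k*n).choose n * (k*n+1)) := by rw [← hch2]
        _ = n.factorial * (k*n).choose n * (k*n+1) := by ring
    have hnat2 : N * M = n.factorial * (k*n).choose n :=
      Nat.eq_of_mul_eq_mul_right (by omega) hnat
    exact_mod_cast hnat2
end

section
/- For every 1 ≤ r ≤ n, the polynomial J_{n,r}(t), which has degree n−r, has only real, distinct, and nonpositive roots: there exist real numbers y_1 < y_2 < ⋯ < y_{n−r} ≤ 0 and a positive constant c such that J_{n,r}(t) = c·∏_{i=1}^{n−r} (t − y_i) as polynomials over ℝ. -/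
open Finset
open scoped Classical

/-- Number of excedances of a function `f` from `{1, …, s}` to `{1, …, n}`
(0-indexed encoding): positions `i` with `f i > i`. -/
noncomputable def excCount {s n : ℕ} (f : Fin s → Fin n) : ℕ :=
  (univ.filter fun i : Fin s => (i : ℕ) < (f i : ℕ)).card

/-- `J_{n,r}(t) = ∑_f t^exc(f)`, summing over all injections
`f : {1, …, n-r} → {1, …, n}`, as a polynomial over `ℝ`. -/
noncomputable def Jpoly (n r : ℕ) : Polynomial ℝ :=
  ∑ f ∈ univ.filter (fun f : Fin (n - r) → Fin n => Function.Injective f),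
    Polynomial.X ^ excCount f

open Polynomial

section Comb

variable {s n : ℕ}

/-- The insertion map: from an injection `g : Fin s → Fin n` and a choice `c : Fin (n+1)`,
build an injection `Fin (s+1) → Fin (n+1)`. -/
noncomputable def Fmap (g : Fin s → Fin n) (c : Fin (n + 1)) : Fin (s + 1) → Fin (n + 1) :=
  Fin.lastCases c (fun i => if (g i).castSucc = c then Fin.last n else (g i).castSucc)

@[simp] lemma Fmap_last (g : Fin s → Fin n) (c : Fin (n + 1)) : Fmap g c (Fin.last s) = c :=
  Fin.lastCases_last ..

@[simp] lemma Fmap_castSucc (g : Fin s → Fin n) (c : Fin (n + 1)) (i : Fin s) :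
    Fmap g c i.castSucc = if (g i).castSucc = c then Fin.last n else (g i).castSucc :=
  Fin.lastCases_castSucc ..

lemma Fmap_injective {g : Fin s → Fin n} (hg : Function.Injective g) (c : Fin (n + 1)) :
    Function.Injective (Fmap g c) := by
  intro a b hab
  induction a using Fin.lastCases with
  | last =>
    induction b using Fin.lastCases with
    | last => rfl
    | cast j =>
      simp only [Fmap_last, Fmap_castSucc] at hab
      split at hab
      · exact absurd (hab ▸ ‹(g j).castSucc = c›) (Fin.castSucc_lt_last (g j)).ne
      · exact absurd hab.symm ‹¬ _›
  | cast i =>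
    induction b using Fin.lastCases with
    | last =>
      simp only [Fmap_last, Fmap_castSucc] at hab
      split at hab
      · exact absurd (hab ▸ ‹(g i).castSucc = c›) (Fin.castSucc_lt_last (g i)).ne
      · exact absurd hab ‹¬ _›
    | cast j =>
      simp only [Fmap_castSucc] at hab
      split at hab <;> split at hab
      · congr 1
        exact hg (Fin.castSucc_injective _ (‹(g i).castSucc = c›.trans ‹(g j).castSucc = c›.symm))
      · exact absurd hab.symm (Fin.castSucc_lt_last (g j)).ne
      · exact absurd hab (Fin.castSucc_lt_last (g i)).ne
      · exact congrArg Fin.castSucc (hg (Fin.castSucc_injective _ hab))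

lemma sum_ite_unique {α : Type*} [Fintype α] (Q : α → Prop) [DecidablePred Q]
    [Decidable (∃ a, Q a)] (huniq : ∀ a b, Q a → Q b → a = b) :
    (∑ a : α, if Q a then (1 : ℕ) else 0) = if ∃ a, Q a then 1 else 0 := by
  by_cases hex : ∃ a, Q a
  · obtain ⟨a0, ha0⟩ := hex
    rw [if_pos ⟨a0, ha0⟩, Finset.sum_eq_single a0]
    · simp [ha0]
    · exact fun b _ hb => if_neg fun hQ => hb (huniq b a0 hQ ha0)
    · simp
  · simp only [if_neg hex]
    push_neg at hex
    exact Finset.sum_eq_zero fun a _ => if_neg (hex a)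

lemma excCount_Fmap {g : Fin s → Fin n} (hg : Function.Injective g) (c : Fin (n + 1)) :
    excCount (Fmap g c) = excCount g +
      (if s < (c : ℕ) ∨ (∃ i, (g i).castSucc = c ∧ (g i : ℕ) ≤ (i : ℕ)) then 1 else 0) := by
  have hsn : s ≤ n := Fintype.card_fin s ▸ Fintype.card_fin n ▸ Fintype.card_le_of_injective g hg
  have hterm : ∀ i : Fin s, (if ((i.castSucc : ℕ) < (Fmap g c i.castSucc : ℕ)) then 1 else 0 : ℕ)
      = (if (i : ℕ) < (g i : ℕ) then 1 else 0)
        + (if (g i).castSucc = c ∧ (g i : ℕ) ≤ (i : ℕ) then 1 else 0) := by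
    intro i
    by_cases hc : (g i).castSucc = c
    · rw [Fmap_castSucc, if_pos hc]
      have hin : (i : ℕ) < n := lt_of_lt_of_le i.isLt hsn
      simp only [Fin.coe_castSucc, Fin.val_last]
      by_cases hlt : (i : ℕ) < (g i : ℕ)
      · rw [if_pos hin, if_pos hlt, if_neg (fun h => absurd h.2 (not_le.2 hlt)), add_zero]
      · rw [if_pos hin, if_neg hlt, if_pos ⟨hc, not_lt.1 hlt⟩]
    · simp [Fmap_castSucc, hc]
  have hE_not_S : (∃ i, (g i).castSucc = c ∧ (g i : ℕ) ≤ (i : ℕ)) → ¬ s < (c : ℕ) := by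
    rintro ⟨i, hic, hile⟩
    have hcv : (c : ℕ) = (g i : ℕ) := by rw [← hic]; rfl
    omega
  have hk : excCount g = ∑ i : Fin s, (if (i : ℕ) < (g i : ℕ) then 1 else 0 : ℕ) :=
    Finset.card_filter _ _
  rw [excCount, Finset.card_filter, Fin.sum_univ_castSucc]
  simp only [hterm, Finset.sum_add_distrib, ← hk, Fmap_last, Fin.val_last]
  rw [sum_ite_unique _ (fun a b ha hb => hg (Fin.castSucc_injective _ (ha.1.trans hb.1.symm)))]
  by_cases hE : ∃ i, (g i).castSucc = c ∧ (g i : ℕ) ≤ (i : ℕ)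
  · rw [if_pos hE, if_neg (hE_not_S hE), if_pos (Or.inr hE)]
  · by_cases hS : s < (c : ℕ)
    · rw [if_neg hE, if_pos hS, if_pos (Or.inl hS)]
    · rw [if_neg hE, if_neg hS, if_neg (by rintro (h | h) <;> [exact hS h; exact hE h])]

lemma card_filter_val_lt (hsn : s ≤ n) :
    (univ.filter fun c : Fin (n + 1) => s < (c : ℕ)).card = n - s := by
  have : (univ.filter fun c : Fin (n + 1) => s < (c : ℕ)) = Finset.Ioi (⟨s, by omega⟩ : Fin (n + 1)) := by
    ext c
    simp [Fin.lt_def]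
  rw [this, Fin.card_Ioi]
  simp

lemma innerSumJ {g : Fin s → Fin n} (hg : Function.Injective g) :
    ∑ c : Fin (n + 1), (X : Polynomial ℝ) ^ excCount (Fmap g c)
      = (excCount g + 1) • (X : Polynomial ℝ) ^ excCount g
        + (n - excCount g) • (X : Polynomial ℝ) ^ (excCount g + 1) := by
  have hsn : s ≤ n := Fintype.card_fin s ▸ Fintype.card_fin n ▸ Fintype.card_le_of_injective g hg
  have hks : excCount g ≤ s := by
    have := Finset.card_filter_le (univ : Finset (Fin s)) (fun i => (i : ℕ) < (g i : ℕ))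
    simpa [excCount] using this
  set k := excCount g with hk
  have hstep : ∀ c : Fin (n + 1), (X : Polynomial ℝ) ^ excCount (Fmap g c)
      = if (s < (c : ℕ) ∨ ∃ i, (g i).castSucc = c ∧ (g i : ℕ) ≤ (i : ℕ))
          then (X : Polynomial ℝ) ^ (k + 1) else (X : Polynomial ℝ) ^ k := by
    intro c
    rw [excCount_Fmap hg]
    by_cases h : s < (c : ℕ) ∨ ∃ i, (g i).castSucc = c ∧ (g i : ℕ) ≤ (i : ℕ)
    · rw [if_pos h, if_pos h]
    · rw [if_neg h, if_neg h, add_zero]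
  rw [Finset.sum_congr rfl fun c _ => hstep c, Finset.sum_ite, Finset.sum_const, Finset.sum_const]
  have hcardE : (univ.filter fun c : Fin (n + 1) =>
      ∃ i, (g i).castSucc = c ∧ (g i : ℕ) ≤ (i : ℕ)).card = s - k := by
    have himg : (univ.filter fun c : Fin (n + 1) =>
        ∃ i, (g i).castSucc = c ∧ (g i : ℕ) ≤ (i : ℕ))
        = (univ.filter fun i : Fin s => (g i : ℕ) ≤ (i : ℕ)).image
            (fun i => (g i).castSucc) := by
      ext c
      simp only [Finset.mem_filter, Finset.mem_univ, true_and, Finset.mem_image]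
      constructor
      · rintro ⟨i, h1, h2⟩; exact ⟨i, h2, h1⟩
      · rintro ⟨i, h2, h1⟩; exact ⟨i, h1, h2⟩
    rw [himg, Finset.card_image_of_injective _
      (fun a b hab => hg (Fin.castSucc_injective _ hab))]
    have hsplit := Finset.card_filter_add_card_filter_not
      (s := (univ : Finset (Fin s))) (p := fun i : Fin s => (i : ℕ) < (g i : ℕ))
    have : (univ.filter fun i : Fin s => ¬ ((i : ℕ) < (g i : ℕ)))
        = univ.filter fun i : Fin s => (g i : ℕ) ≤ (i : ℕ) := by
      apply Finset.filter_congr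
      intro i _
      simp [not_lt]
    rw [this] at hsplit
    have : k + (univ.filter fun i : Fin s => (g i : ℕ) ≤ (i : ℕ)).card = s := by
      simpa [hk, excCount] using hsplit
    omega
  have hcardD : (univ.filter fun c : Fin (n + 1) =>
      s < (c : ℕ) ∨ ∃ i, (g i).castSucc = c ∧ (g i : ℕ) ≤ (i : ℕ)).card = n - k := by
    rw [Finset.filter_or, Finset.card_union_of_disjoint, card_filter_val_lt hsn, hcardE]
    · omega
    · rw [Finset.disjoint_left]
      intro c hc1 hc2
      simp only [Finset.mem_filter, Finset.mem_univ, true_and] at hc1 hc2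
      obtain ⟨i, hic, hile⟩ := hc2
      have : (c : ℕ) = (g i : ℕ) := by rw [← hic]; rfl
      omega
  have hcardND : (univ.filter fun c : Fin (n + 1) =>
      ¬ (s < (c : ℕ) ∨ ∃ i, (g i).castSucc = c ∧ (g i : ℕ) ≤ (i : ℕ))).card = k + 1 := by
    have hsplit := Finset.card_filter_add_card_filter_not
      (s := (univ : Finset (Fin (n + 1))))
      (p := fun c : Fin (n + 1) => s < (c : ℕ) ∨ ∃ i, (g i).castSucc = c ∧ (g i : ℕ) ≤ (i : ℕ))
    rw [hcardD] at hsplit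
    simp only [Finset.card_univ, Fintype.card_fin] at hsplit
    omega
  rw [hcardD, hcardND, add_comm]

lemma Fmap_eq_iff {g g' : Fin s → Fin n} {c c' : Fin (n + 1)} (hg : Function.Injective g)
    (h : Fmap g c = Fmap g' c') : g = g' ∧ c = c' := by
  have hc : c = c' := by
    have := congrFun h (Fin.last s)
    simpa using this
  subst hc
  refine ⟨funext fun j => ?_, rfl⟩
  have hj := congrFun h j.castSucc
  simp only [Fmap_castSucc] at hj
  split at hj <;> split at hj
  · exact Fin.castSucc_injective _ (‹(g j).castSucc = c›.trans ‹(g' j).castSucc = c›.symm)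
  · exact absurd hj.symm (Fin.castSucc_lt_last (g' j)).ne
  · exact absurd hj (Fin.castSucc_lt_last (g j)).ne
  · exact Fin.castSucc_injective _ hj

lemma Fmap_surj {f : Fin (s + 1) → Fin (n + 1)} (hf : Function.Injective f) :
    ∃ g : Fin s → Fin n, Function.Injective g ∧ ∃ c, Fmap g c = f := by
  have hval : ∀ j : Fin s,
      ((if f j.castSucc = Fin.last n then f (Fin.last s) else f j.castSucc) : Fin (n + 1)).1 < n := by
    intro j
    split
    · apply Fin.val_lt_last
      intro h
      exact (Fin.castSucc_lt_last j).ne (hf (by rw [‹f j.castSucc = Fin.last n›, h]))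
    · exact Fin.val_lt_last ‹¬ _›
  set g : Fin s → Fin n := fun j => ⟨_, hval j⟩ with hgdef
  have hgcast : ∀ j : Fin s,
      (g j).castSucc = if f j.castSucc = Fin.last n then f (Fin.last s) else f j.castSucc := by
    intro j
    apply Fin.ext
    rfl
  refine ⟨g, ?_, f (Fin.last s), ?_⟩
  · intro a b hab
    have h2 : (if f a.castSucc = Fin.last n then f (Fin.last s) else f a.castSucc)
        = (if f b.castSucc = Fin.last n then f (Fin.last s) else f b.castSucc) := by
      rw [← hgcast, ← hgcast, hab]
    split at h2 <;> split at h2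
    · exact Fin.castSucc_injective _ (hf (by rw [‹f a.castSucc = Fin.last n›, ‹f b.castSucc = Fin.last n›]))
    · exact absurd (hf h2.symm) (by simp [Fin.ext_iff]; omega)
    · exact absurd (hf h2) (by simp [Fin.ext_iff]; omega)
    · exact Fin.castSucc_injective _ (hf h2)
  · funext j
    induction j using Fin.lastCases with
    | last => simp
    | cast j =>
      rw [Fmap_castSucc, hgcast j]
      by_cases hjl : f j.castSucc = Fin.last n
      · rw [if_pos hjl, if_pos rfl, hjl]
      · rw [if_neg hjl, if_neg fun hcon => (Fin.castSucc_lt_last j).ne (hf hcon)]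

lemma sum_rec (s n : ℕ) :
    ∑ f ∈ univ.filter (fun f : Fin (s + 1) → Fin (n + 1) => Function.Injective f),
        (X : Polynomial ℝ) ^ excCount f
      = ∑ g ∈ univ.filter (fun g : Fin s → Fin n => Function.Injective g),
          ((excCount g + 1) • (X : Polynomial ℝ) ^ excCount g
            + (n - excCount g) • (X : Polynomial ℝ) ^ (excCount g + 1)) := by
  rw [Finset.sum_congr rfl (fun g hg => (innerSumJ (Finset.mem_filter.1 hg).2).symm)]
  rw [← Finset.sum_product']
  refine (Finset.sum_bij (fun (p : (Fin s → Fin n) × Fin (n + 1)) _ => Fmap p.1 p.2) ?_ ?_ ?_ ?_).symm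
  · intro p hp
    simp only [Finset.mem_product, Finset.mem_filter, Finset.mem_univ, true_and] at hp ⊢
    exact Fmap_injective hp.1 p.2
  · intro p hp q hq hpq
    simp only [Finset.mem_product, Finset.mem_filter, Finset.mem_univ, true_and] at hp hq
    obtain ⟨h1, h2⟩ := Fmap_eq_iff hp.1 hpq
    exact Prod.ext h1 h2
  · intro f hfm
    obtain ⟨g, hg, c, hc⟩ := Fmap_surj (Finset.mem_filter.1 hfm).2
    exact ⟨(g, c), by simp [hg], hc⟩
  · intro p hp
    rfl

end Comb

lemma Jpoly_self (r : ℕ) : Jpoly r r = 1 := by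
  rw [Jpoly, Nat.sub_self]
  have hfil : (univ.filter fun f : Fin 0 → Fin r => Function.Injective f) = univ :=
    Finset.filter_true_of_mem (fun f _ => fun a b _ => Subsingleton.elim a b)
  rw [hfil]
  have : ∀ f : Fin 0 → Fin r, excCount f = 0 := by
    intro f
    simp [excCount]
  rw [Finset.sum_congr rfl fun f _ => by rw [this f, pow_zero]]
  rw [Finset.sum_const]
  simp

lemma Jpoly_rec (n r : ℕ) (h : r ≤ n) :
    Jpoly (n + 1) r = (1 + Polynomial.C (n : ℝ) * X) * Jpoly n r
      + (X - X ^ 2) * (Jpoly n r).derivative := by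
  have hsub : n + 1 - r = (n - r) + 1 := by omega
  rw [Jpoly, Jpoly, hsub, sum_rec (n - r) n]
  rw [derivative_sum, Finset.mul_sum, Finset.mul_sum, ← Finset.sum_add_distrib]
  apply Finset.sum_congr rfl
  intro g hg
  have hkn : excCount g ≤ n := by
    have h1 : excCount g ≤ n - r := by
      have := Finset.card_filter_le (univ : Finset (Fin (n - r))) (fun i => (i : ℕ) < (g i : ℕ))
      simpa [excCount] using this
    omega
  rw [derivative_X_pow]
  rcases Nat.eq_zero_or_pos (excCount g) with hk0 | hk1
  · rw [hk0]
    simp only [pow_zero, Nat.sub_zero, zero_add, Nat.cast_zero, map_zero, zero_mul, mul_zero,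
      add_zero, one_smul, mul_one, nsmul_eq_mul]
    push_cast
    simp only [map_natCast, map_add, map_one]
    ring
  · obtain ⟨m, hm⟩ : ∃ m, excCount g = m + 1 := ⟨excCount g - 1, by omega⟩
    rw [hm] at hkn ⊢
    rw [nsmul_eq_mul, nsmul_eq_mul, Nat.cast_sub hkn]
    simp only [Nat.add_sub_cancel]
    push_cast
    simp only [map_natCast, map_add, map_one]
    ring

section Analytic

open Filter

lemma prod_neg_factors {α : Type*} (s : Finset α) (f : α → ℝ) :
    ∏ j ∈ s, (-(f j)) = (-1) ^ s.card * ∏ j ∈ s, f j := by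
  rw [← Finset.prod_const (-1 : ℝ), ← Finset.prod_mul_distrib]
  simp

lemma step_poly (m s : ℕ) (hs : s < m) {c : ℝ} (hc : 0 < c) {y : Fin s → ℝ}
    (hy : StrictMono y) (hneg : ∀ i, y i < 0) :
    ∃ z : Fin (s + 1) → ℝ, ∃ c' : ℝ, StrictMono z ∧ (∀ i, z i < 0) ∧ 0 < c' ∧
      (1 + Polynomial.C (m : ℝ) * X) * (Polynomial.C c * ∏ i, (X - Polynomial.C (y i)))
        + (X - X ^ 2) * (Polynomial.C c * ∏ i, (X - Polynomial.C (y i))).derivative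
      = Polynomial.C c' * ∏ i, (X - Polynomial.C (z i)) := by
  set P : Polynomial ℝ := ∏ i, (X - Polynomial.C (y i)) with hP
  set p : Polynomial ℝ := Polynomial.C c * P with hp
  set q : Polynomial ℝ := (1 + Polynomial.C (m : ℝ) * X) * p + (X - X ^ 2) * p.derivative with hq
  have hPmonic : P.Monic := monic_prod_of_monic _ _ fun i _ => monic_X_sub_C (y i)
  have hPdeg : P.natDegree = s := by
    rw [hP, natDegree_prod_of_monic _ _ fun i _ => monic_X_sub_C (y i)]
    simp [natDegree_X_sub_C]
  have hpdeg : p.natDegree = s := by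
    rw [hp, natDegree_C_mul hc.ne', hPdeg]
  have hpcoeff : p.coeff s = c := by
    rw [hp, coeff_C_mul, ← hPdeg, hPmonic.coeff_natDegree, mul_one]
  -- the coefficient of degree s+1 in q
  have hc' : 0 < ((m : ℝ) - s) * c := by
    have : (s : ℝ) < m := by exact_mod_cast hs
    nlinarith
  have hqcoeff : q.coeff (s + 1) = ((m : ℝ) - s) * c := by
    have hqexp : q = p + Polynomial.C (m : ℝ) * (X * p)
        + p.derivative * X - p.derivative * X ^ 2 := by
      rw [hq]; ring
    have h1 : p.coeff (s + 1) = 0 := coeff_eq_zero_of_natDegree_lt (by rw [hpdeg]; omega)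
    have h2 : p.derivative.coeff s = 0 := by
      rw [coeff_derivative, h1, zero_mul]
    have h3 : (p.derivative * X ^ 2).coeff (s + 1) = (s : ℝ) * c := by
      rw [coeff_mul_X_pow']
      rcases Nat.eq_zero_or_pos s with h0 | hpos
      · subst h0; simp
      · rw [if_pos (by omega)]
        have he : s + 1 - 2 = s - 1 := by omega
        rw [he, coeff_derivative]
        have h4 : s - 1 + 1 = s := by omega
        rw [h4, hpcoeff, Nat.cast_sub hpos]
        push_cast
        ring
    rw [hqexp, coeff_sub, coeff_add, coeff_add, h1, coeff_C_mul, coeff_X_mul, coeff_mul_X,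
      h2, h3, hpcoeff]
    ring
  have hqdeg : q.natDegree = s + 1 := by
    have hqdegle : q.natDegree ≤ s + 1 := by
      apply le_trans (natDegree_add_le _ _)
      apply max_le
      · apply le_trans natDegree_mul_le
        have e1 : (1 + Polynomial.C (m : ℝ) * X).natDegree ≤ 1 := by
          apply le_trans (natDegree_add_le _ _)
          apply max_le (by simp)
          exact le_trans (natDegree_C_mul_le _ _) (le_of_eq natDegree_X)
        omega
      · rcases eq_or_ne p.derivative 0 with hd | hd
        · simp [hd]
        · apply le_trans natDegree_mul_le
          have e2 : (X - X ^ 2 : Polynomial ℝ).natDegree ≤ 2 := by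
            compute_degree
          have e3 : p.derivative.natDegree ≤ s - 1 := hpdeg ▸ natDegree_derivative_le p
          have hs1 : 1 ≤ s := by
            by_contra hcon
            have hs0 : s = 0 := by omega
            have : p = Polynomial.C (p.coeff 0) :=
              eq_C_of_natDegree_eq_zero (by rw [hpdeg, hs0])
            exact hd (by rw [this, derivative_C])
          omega
    exact le_antisymm hqdegle (le_natDegree_of_ne_zero (by rw [hqcoeff]; exact hc'.ne'))
  have hlead : q.leadingCoeff = ((m : ℝ) - s) * c := by
    rw [leadingCoeff, hqdeg, hqcoeff]
  have hqne : q ≠ 0 := leadingCoeff_ne_zero.1 (by rw [hlead]; exact hc'.ne')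
  -- evaluations
  have hpeval : ∀ t, p.eval t = c * ∏ i, (t - y i) := by
    intro t
    rw [hp, hP]
    simp [eval_prod]
  have hq0pos : 0 < q.eval 0 := by
    have h0 : q.eval 0 = c * ∏ i, (0 - y i) := by
      rw [hq]
      simp [hpeval 0]
    rw [h0]
    apply mul_pos hc (Finset.prod_pos fun i _ => by have := hneg i; linarith)
  have hpd : ∀ i : Fin s, p.derivative.eval (y i) = c * ∏ j ∈ univ.erase i, (y i - y j) := by
    intro i
    rw [hp, derivative_C_mul, eval_mul, eval_C]
    congr 1
    have hPm : P = (Multiset.map (fun a => X - Polynomial.C a) (univ.val.map y)).prod := by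
      rw [hP, Finset.prod_eq_multiset_prod, Multiset.map_map]
      rfl
    rw [hPm, eval_multiset_prod_X_sub_C_derivative
      (Multiset.mem_map.2 ⟨i, Finset.mem_univ_val i, rfl⟩)]
    rw [← Multiset.map_erase y hy.injective i univ.val, Multiset.map_map,
      ← Finset.erase_val, Finset.prod_eq_multiset_prod]
    rfl
  have hsign : ∀ i : Fin s, 0 < (-1 : ℝ) ^ (s + (i : ℕ)) * q.eval (y i) := by
    intro i
    have hp0 : p.eval (y i) = 0 := by
      rw [hpeval]
      exact mul_eq_zero_of_right _ (Finset.prod_eq_zero (Finset.mem_univ i) (by ring))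
    have hval : q.eval (y i)
        = (y i - (y i) ^ 2) * (c * ∏ j ∈ univ.erase i, (y i - y j)) := by
      rw [hq, eval_add, eval_mul, hp0, mul_zero, zero_add, eval_mul, eval_sub, eval_pow,
        eval_X, hpd i]
    have hsplit : (univ : Finset (Fin s)).erase i = Finset.Iio i ∪ Finset.Ioi i := by
      ext j
      simp only [Finset.mem_erase, Finset.mem_univ, and_true, Finset.mem_union,
        Finset.mem_Iio, Finset.mem_Ioi]
      exact ne_iff_lt_or_gt
    have hdisj : Disjoint (Finset.Iio i) (Finset.Ioi i) := by
      rw [Finset.disjoint_left]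
      intro a ha hb
      exact absurd ((Finset.mem_Iio.1 ha).trans (Finset.mem_Ioi.1 hb)) (lt_irrefl a)
    have hprodsplit : ∏ j ∈ univ.erase i, (y i - y j)
        = (∏ j ∈ Finset.Iio i, (y i - y j)) * ∏ j ∈ Finset.Ioi i, (y i - y j) := by
      rw [hsplit, Finset.prod_union hdisj]
    have hA : 0 < ∏ j ∈ Finset.Iio i, (y i - y j) :=
      Finset.prod_pos fun j hj => sub_pos.2 (hy (Finset.mem_Iio.1 hj))
    have hBeq : ∏ j ∈ Finset.Ioi i, (y i - y j)
        = (-1 : ℝ) ^ (s - 1 - (i : ℕ)) * ∏ j ∈ Finset.Ioi i, (y j - y i) := by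
      rw [← Fin.card_Ioi, ← prod_neg_factors]
      exact Finset.prod_congr rfl fun j _ => by ring
    have hB : 0 < ∏ j ∈ Finset.Ioi i, (y j - y i) :=
      Finset.prod_pos fun j hj => sub_pos.2 (hy (Finset.mem_Ioi.1 hj))
    have hw : y i - (y i) ^ 2 < 0 := by nlinarith [hneg i, sq_nonneg (y i)]
    have hpow : (-1 : ℝ) ^ (s + (i : ℕ)) * (-1) ^ (s - 1 - (i : ℕ)) = -1 := by
      rw [← pow_add]
      have h2 : s + (i : ℕ) + (s - 1 - (i : ℕ)) = 2 * (s - 1 - (i : ℕ) + (i : ℕ)) + 1 := by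
        have := i.isLt
        omega
      rw [h2, pow_succ, pow_mul]
      simp
    rw [hval, hprodsplit, hBeq]
    have hre : (-1 : ℝ) ^ (s + (i : ℕ)) * ((y i - (y i) ^ 2)
          * (c * ((∏ j ∈ Finset.Iio i, (y i - y j))
            * ((-1 : ℝ) ^ (s - 1 - (i : ℕ)) * ∏ j ∈ Finset.Ioi i, (y j - y i)))))
        = ((-1 : ℝ) ^ (s + (i : ℕ)) * (-1) ^ (s - 1 - (i : ℕ)))
          * ((y i - (y i) ^ 2) * (c * ((∏ j ∈ Finset.Iio i, (y i - y j))
            * ∏ j ∈ Finset.Ioi i, (y j - y i)))) := by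
      ring
    rw [hre, hpow]
    have hfin : 0 < (-(y i - (y i) ^ 2)) * (c * ((∏ j ∈ Finset.Iio i, (y i - y j))
        * ∏ j ∈ Finset.Ioi i, (y j - y i))) :=
      mul_pos (neg_pos.2 hw) (mul_pos hc (mul_pos hA hB))
    nlinarith [hfin]
  -- a point far to the left
  obtain ⟨t₀, ht0sign, ht0lt, ht0neg⟩ :
      ∃ t₀ : ℝ, 0 < (-1 : ℝ) ^ (s + 1) * q.eval t₀ ∧ (∀ i, t₀ < y i) ∧ t₀ < 0 := by
    set q2 : Polynomial ℝ := Polynomial.C ((-1 : ℝ) ^ (s + 1)) * q.comp (-X) with hq2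
    have hnXdeg : (-X : Polynomial ℝ).natDegree = 1 := by
      rw [natDegree_neg, natDegree_X]
    have hcompdeg : (q.comp (-X)).natDegree = s + 1 := by
      rw [natDegree_comp, hnXdeg, hqdeg, mul_one]
    have hcomplead : (q.comp (-X)).leadingCoeff = ((m : ℝ) - s) * c * (-1) ^ (s + 1) := by
      rw [leadingCoeff_comp (by rw [hnXdeg]; omega), hlead, hqdeg]
      congr 1
      rw [leadingCoeff_neg, leadingCoeff_X]
    have hq2lead : q2.leadingCoeff = ((m : ℝ) - s) * c := by
      rw [hq2, leadingCoeff_mul, leadingCoeff_C, hcomplead]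
      have he : ((-1 : ℝ) ^ (s + 1)) * ((-1 : ℝ) ^ (s + 1)) = 1 := by
        rw [← pow_add]
        exact Even.neg_one_pow ⟨s + 1, rfl⟩
      calc (-1 : ℝ) ^ (s + 1) * (((m : ℝ) - s) * c * (-1) ^ (s + 1))
          = (((m : ℝ) - s) * c) * (((-1 : ℝ) ^ (s + 1)) * ((-1 : ℝ) ^ (s + 1))) := by ring
        _ = ((m : ℝ) - s) * c := by rw [he, mul_one]
    have hq2deg : q2.natDegree = s + 1 := by
      rw [hq2, natDegree_C_mul (pow_ne_zero _ (by norm_num : (-1 : ℝ) ≠ 0)), hcompdeg]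
    have hq2degpos : 0 < q2.degree := by
      rw [← natDegree_pos_iff_degree_pos, hq2deg]
      omega
    have htend := Polynomial.tendsto_atTop_of_leadingCoeff_nonneg q2 hq2degpos
      (by rw [hq2lead]; exact hc'.le)
    have h1 : ∀ᶠ T in atTop, 1 ≤ q2.eval T := htend.eventually_ge_atTop 1
    have h2 : ∀ᶠ T : ℝ in atTop, ∀ i : Fin s, -T < y i :=
      (Filter.eventually_all).2 fun i => (eventually_gt_atTop (-(y i))).mono
        fun T hT => by linarith
    have h3 : ∀ᶠ T : ℝ in atTop, (0 : ℝ) < T := eventually_gt_atTop 0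
    obtain ⟨T, hT1, hT2, hT3⟩ := (h1.and (h2.and h3)).exists
    refine ⟨-T, ?_, hT2, by linarith⟩
    have heval : q2.eval T = (-1 : ℝ) ^ (s + 1) * q.eval (-T) := by
      rw [hq2, eval_mul, eval_C, eval_comp, eval_neg, eval_X]
    rw [← heval]
    linarith [hT1]
  -- the sequence of sample points
  set x : Fin (s + 2) → ℝ := Fin.snoc (Fin.cons t₀ y) 0 with hx
  have hxcast : ∀ j : Fin (s + 1), x j.castSucc = (Fin.cons t₀ y : Fin (s+1) → ℝ) j := by
    intro j
    rw [hx]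
    exact Fin.snoc_castSucc _ _ _
  have hxlast : x (Fin.last (s + 1)) = 0 := Fin.snoc_last _ _
  have hxsign : ∀ j : Fin (s + 2), 0 < (-1 : ℝ) ^ (s + 1 + (j : ℕ)) * q.eval (x j) := by
    intro j
    induction j using Fin.lastCases with
    | last =>
      rw [hxlast, Fin.val_last]
      have he : (-1 : ℝ) ^ (s + 1 + (s + 1)) = 1 := Even.neg_one_pow ⟨s + 1, rfl⟩
      rw [he, one_mul]
      exact hq0pos
    | cast j =>
      rw [hxcast j]
      induction j using Fin.cases with
      | zero =>
        have hv : (((0 : Fin (s + 1)).castSucc : Fin (s + 2)) : ℕ) = 0 := rfl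
        rw [hv, Fin.cons_zero, add_zero]
        exact ht0sign
      | succ i =>
        rw [Fin.cons_succ]
        have hv : ((i.succ.castSucc : Fin (s + 2)) : ℕ) = (i : ℕ) + 1 := by simp
        have he : s + 1 + ((i.succ.castSucc : Fin (s + 2)) : ℕ) = (s + (i : ℕ)) + 2 := by
          rw [hv]; omega
        rw [he, pow_add]
        have h1 : ((-1 : ℝ) ^ 2) = 1 := by norm_num
        rw [h1, mul_one]
        exact hsign i
  have hcons0 : ∀ j : Fin (s + 1), (Fin.cons t₀ y : Fin (s + 1) → ℝ) j < 0 := by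
    intro j
    rcases Fin.eq_zero_or_eq_succ j with h0 | ⟨i, hi⟩
    · rw [h0, Fin.cons_zero]; exact ht0neg
    · rw [hi, Fin.cons_succ]; exact hneg i
  have hadj : ∀ j : Fin (s + 1), x j.castSucc < x j.succ := by
    intro j
    rw [hxcast j]
    induction j using Fin.lastCases with
    | last =>
      have hsucc : (Fin.last s).succ = Fin.last (s + 1) := rfl
      rw [hsucc, hxlast]
      exact hcons0 _
    | cast i =>
      rw [Fin.succ_castSucc, hxcast i.succ, Fin.cons_succ]
      rcases Fin.eq_zero_or_eq_succ i.castSucc with h0 | ⟨i', hi'⟩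
      · rw [h0, Fin.cons_zero]
        exact ht0lt i
      · rw [hi', Fin.cons_succ]
        apply hy
        have hvv : (i' : ℕ) + 1 = (i : ℕ) := by
          have := congrArg Fin.val hi'
          simpa using this.symm
        exact Fin.lt_def.2 (by omega)
  have hxle : ∀ j : Fin (s + 2), x j ≤ 0 := by
    intro j
    induction j using Fin.lastCases with
    | last => rw [hxlast]
    | cast a =>
      rw [hxcast a]
      exact (hcons0 a).le
  -- roots via the intermediate value theorem
  have hivt : ∀ j : Fin (s + 1), ∃ t ∈ Set.Ioo (x j.castSucc) (x j.succ), q.eval t = 0 := by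
    intro j
    have hle : x j.castSucc ≤ x j.succ := (hadj j).le
    have hcont : ContinuousOn (fun t => q.eval t) (Set.Icc (x j.castSucc) (x j.succ)) :=
      (Polynomial.continuous q).continuousOn
    have s1 := hxsign j.castSucc
    have s2 := hxsign j.succ
    rw [Fin.coe_castSucc] at s1
    rw [Fin.val_succ] at s2
    have he2 : s + 1 + ((j : ℕ) + 1) = (s + 1 + (j : ℕ)) + 1 := by omega
    rw [he2, pow_succ] at s2
    rcases Nat.even_or_odd (s + 1 + (j : ℕ)) with he | ho
    · rw [he.neg_one_pow, one_mul] at s1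
      rw [he.neg_one_pow, one_mul] at s2
      have hneg2 : q.eval (x j.succ) < 0 := by linarith
      have h0mem : (0 : ℝ) ∈ Set.Ioo (q.eval (x j.succ)) (q.eval (x j.castSucc)) :=
        ⟨hneg2, s1⟩
      obtain ⟨t, ht, hteq⟩ := intermediate_value_Ioo' hle hcont h0mem
      exact ⟨t, ht, hteq⟩
    · rw [ho.neg_one_pow] at s1
      rw [ho.neg_one_pow] at s2
      have hneg1 : q.eval (x j.castSucc) < 0 := by linarith
      have hpos2 : 0 < q.eval (x j.succ) := by nlinarith
      have h0mem : (0 : ℝ) ∈ Set.Ioo (q.eval (x j.castSucc)) (q.eval (x j.succ)) :=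
        ⟨hneg1, hpos2⟩
      obtain ⟨t, ht, hteq⟩ := intermediate_value_Ioo hle hcont h0mem
      exact ⟨t, ht, hteq⟩
  choose z hzmem hzroot using hivt
  have hzmono : StrictMono z := by
    rw [Fin.strictMono_iff_lt_succ]
    intro i
    have h1 := (hzmem i.castSucc).2
    have h2 := (hzmem i.succ).1
    rw [Fin.succ_castSucc] at h1
    exact h1.trans_le (le_of_lt (lt_of_le_of_lt (le_refl _) h2))
  have hzneg : ∀ j, z j < 0 := fun j => lt_of_lt_of_le (hzmem j).2 (hxle j.succ)
  -- conclude the factorization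
  refine ⟨z, ((m : ℝ) - s) * c, hzmono, hzneg, hc', ?_⟩
  have hroots : q.roots = (univ.val : Multiset (Fin (s + 1))).map z := by
    have hMle : (univ.val : Multiset (Fin (s + 1))).map z ≤ q.roots := by
      rw [Multiset.le_iff_count]
      intro a
      by_cases ha : ∃ j, z j = a
      · obtain ⟨j, rfl⟩ := ha
        rw [Multiset.count_map_eq_count' _ _ hzmono.injective, count_roots]
        rw [Multiset.count_univ]
        exact (rootMultiplicity_pos hqne).2 (hzroot j)
      · rw [Multiset.count_eq_zero.2 fun hmem => ha (by
          obtain ⟨j, _, hj⟩ := Multiset.mem_map.1 hmem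
          exact ⟨j, hj⟩)]
        exact Nat.zero_le _
    refine (Multiset.eq_of_le_of_card_le hMle ?_).symm
    rw [Multiset.card_map]
    have : Multiset.card (univ.val : Multiset (Fin (s + 1))) = s + 1 := by simp
    rw [this]
    calc Multiset.card q.roots ≤ q.natDegree := card_roots' q
      _ = s + 1 := hqdeg
  have hfact := C_leadingCoeff_mul_prod_multiset_X_sub_C (p := q)
    (by rw [hroots, Multiset.card_map]; simp [hqdeg])
  rw [← hfact, hlead, hroots, Multiset.map_map]
  congr 1

end Analytic

lemma Jpoly_key (r : ℕ) (hr : 1 ≤ r) (s : ℕ) :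
    ∃ (y : Fin s → ℝ) (c : ℝ), StrictMono y ∧ (∀ i, y i < 0) ∧ 0 < c ∧
      Jpoly (s + r) r = Polynomial.C c * ∏ i, (X - Polynomial.C (y i)) := by
  induction s with
  | zero =>
    refine ⟨Fin.elim0, 1, ?_, ?_, one_pos, ?_⟩
    · intro a
      exact a.elim0
    · intro i
      exact i.elim0
    · rw [zero_add, Jpoly_self]
      simp
  | succ s ih =>
    obtain ⟨y, c, hy, hneg, hc, heq⟩ := ih
    have hrec := Jpoly_rec (s + r) r (by omega)
    rw [heq] at hrec
    obtain ⟨z, c', hz, hzneg, hc', heq'⟩ := step_poly (s + r) s (by omega) hc hy hneg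
    refine ⟨z, c', hz, hzneg, hc', ?_⟩
    have hn : s + 1 + r = (s + r) + 1 := by omega
    rw [hn, hrec, heq']

/-- For `1 ≤ r ≤ n`, the polynomial `J_{n,r}(t)` has only real, distinct,
nonpositive roots: `J_{n,r}(t) = c · ∏_{i=1}^{n-r} (t - y_i)` with
`y_1 < ⋯ < y_{n-r} ≤ 0` and `c > 0`. -/
theorem Jpoly_real_roots (n r : ℕ) (hr : 1 ≤ r) (hrn : r ≤ n) :
    ∃ (y : Fin (n - r) → ℝ) (c : ℝ), StrictMono y ∧ (∀ i, y i ≤ 0) ∧ 0 < c ∧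
      Jpoly n r
        = Polynomial.C c * ∏ i : Fin (n - r), (Polynomial.X - Polynomial.C (y i)) := by
  obtain ⟨y, c, hy, hneg, hc, heq⟩ := Jpoly_key r hr (n - r)
  have hn : (n - r) + r = n := by omega
  rw [hn] at heq
  exact ⟨y, c, hy, fun i => (hneg i).le, hc, heq⟩
end

section
/- For every 1 ≤ r ≤ n, the r-Eulerian polynomial A_{n,r}(t), which has degree n−r, has only real, distinct, and nonpositive roots: it factors over ℝ as a positive constant times a product of n−r distinct linear factors (t − x_i) with all x_i ≤ 0. -/
open Finset
open scoped Classical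

/-- The `r`-Eulerian polynomial `A_{n,r}(t) = ∑_{π ∈ S_n} t^{exc_r(π)}`, where
`exc_r(π)` is the number of indices `i` with `π(i) ≥ i + r` (1-indexed, which
in the 0-indexed encoding reads `(π i : ℕ) ≥ (i : ℕ) + r`). -/
noncomputable def rEulerianPoly (n r : ℕ) : Polynomial ℝ :=
  ∑ π : Equiv.Perm (Fin n),
    Polynomial.X ^ (univ.filter fun i : Fin n => (i : ℕ) + r ≤ (π i : ℕ)).card

open Polynomial Equiv

namespace REu

variable {n r : ℕ}

def exc (n r : ℕ) (π : Equiv.Perm (Fin n)) : ℕ :=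
  (univ.filter fun i : Fin n => (i : ℕ) + r ≤ (π i : ℕ)).card

lemma rEulerianPoly_eq (n r : ℕ) :
    rEulerianPoly n r = ∑ π : Equiv.Perm (Fin n), (X : ℝ[X]) ^ exc n r π := rfl

lemma card_val_lt (d m : ℕ) (h : m ≤ d) :
    (univ.filter fun k : Fin d => (k : ℕ) < m).card = m := by
  have : (univ.filter fun k : Fin d => (k : ℕ) < m).card = (Finset.range m).card := by
    refine Finset.card_bij (fun k _ => (k : ℕ)) ?_ ?_ ?_
    · intro a ha
      simp only [mem_filter] at ha
      simpa using ha.2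
    · intro a ha b hb hab
      exact Fin.val_injective hab
    · intro b hb
      simp only [Finset.mem_range] at hb
      exact ⟨⟨b, lt_of_lt_of_le hb h⟩, by simp [hb], rfl⟩
  simpa using this

lemma card_lt_val (d : ℕ) (j : Fin d) :
    (univ.filter fun k : Fin d => (j : ℕ) < (k : ℕ)).card = d - ((j : ℕ) + 1) := by
  have h1 := Finset.card_filter_add_card_filter_not
    (s := (univ : Finset (Fin d))) (p := fun k : Fin d => (j : ℕ) < (k : ℕ))
  have h2 : (univ.filter fun k : Fin d => ¬ (j : ℕ) < (k : ℕ)).card = (j : ℕ) + 1 := by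
    have : (univ.filter fun k : Fin d => ¬ (j : ℕ) < (k : ℕ))
        = (univ.filter fun k : Fin d => (k : ℕ) < (j : ℕ) + 1) := by
      apply Finset.filter_congr; intro k _; simp
    rw [this, card_val_lt d _ (by omega)]
  simp only [Finset.card_univ, Fintype.card_fin] at h1
  omega

lemma exc_le (n r : ℕ) (π : Equiv.Perm (Fin n)) : exc n r π ≤ n - r := by
  unfold exc
  calc (univ.filter fun i : Fin n => (i : ℕ) + r ≤ (π i : ℕ)).card
      ≤ (univ.filter fun i : Fin n => (i : ℕ) < n - r).card := by
        apply Finset.card_le_card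
        intro i hi
        simp only [mem_filter, mem_univ, true_and] at *
        have := (π i).isLt
        omega
    _ = n - r := card_val_lt _ _ (Nat.sub_le _ _)

lemma exc_eq_sum (n r : ℕ) (π : Equiv.Perm (Fin n)) :
    exc n r π = ∑ i : Fin n, if (i : ℕ) + r ≤ (π i : ℕ) then 1 else 0 := by
  unfold exc; rw [Finset.card_filter]

lemma exc_zero_ins (hr : 1 ≤ r) (π : Equiv.Perm (Fin n)) :
    exc (n+1) r (Equiv.Perm.decomposeFin.symm (0, π)) = exc n r π := by
  rw [exc_eq_sum, exc_eq_sum, Fin.sum_univ_succ]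
  simp only [Equiv.Perm.decomposeFin_symm_apply_zero, Equiv.Perm.decomposeFin_symm_apply_succ]
  rw [if_neg (by simp only [Fin.val_zero]; omega), zero_add]
  apply Finset.sum_congr rfl
  intro i _
  congr 1
  simp only [Equiv.swap_self, Equiv.refl_apply, Fin.val_succ, Fin.val_zero]
  exact propext (by omega)

lemma exc_succ_ins (hr : 1 ≤ r) (π : Equiv.Perm (Fin n)) (j : Fin n) :
    exc (n+1) r (Equiv.Perm.decomposeFin.symm ((π j).succ, π)) =
      if (j : ℕ) + r ≤ (π j : ℕ) then exc n r π
      else if r ≤ (π j : ℕ) + 1 then exc n r π + 1 else exc n r π := by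
  have hterm : ∀ i : Fin n,
      (if ((i.succ : Fin (n+1)) : ℕ) + r ≤ ((Equiv.swap 0 (π j).succ) (π i).succ : ℕ) then 1 else 0)
      = if i = j then 0 else (if (i : ℕ) + r ≤ (π i : ℕ) then 1 else 0) := by
    intro i
    by_cases h : i = j
    · subst h
      rw [Equiv.swap_apply_right, if_pos rfl,
        if_neg (by simp only [Fin.val_succ, Fin.val_zero]; omega)]
    · have hne : ((π i).succ : Fin (n+1)) ≠ (π j).succ := by
        simp only [ne_eq, Fin.succ_inj, EmbeddingLike.apply_eq_iff_eq]
        exact h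
      rw [Equiv.swap_apply_of_ne_of_ne (Fin.succ_ne_zero _) hne, if_neg h]
      congr 1
      simp only [Fin.val_succ]
      exact propext (by omega)
  have key : (∑ i : Fin n, if i = j then 0 else (if (i : ℕ) + r ≤ (π i : ℕ) then 1 else 0))
      = ∑ i ∈ univ.erase j, (if (i : ℕ) + r ≤ (π i : ℕ) then 1 else 0) := by
    rw [← Finset.add_sum_erase _
      (fun i => if i = j then 0 else (if (i : ℕ) + r ≤ (π i : ℕ) then 1 else 0))
      (Finset.mem_univ j), if_pos rfl, zero_add]
    exact Finset.sum_congr rfl fun i hi => if_neg (Finset.ne_of_mem_erase hi)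
  have hexc : exc n r π = (if (j : ℕ) + r ≤ ((π j : ℕ)) then 1 else 0)
      + ∑ i ∈ univ.erase j, (if (i : ℕ) + r ≤ (π i : ℕ) then 1 else 0) := by
    rw [exc_eq_sum, ← Finset.add_sum_erase _ _ (Finset.mem_univ j)]
  rw [exc_eq_sum, Fin.sum_univ_succ]
  simp only [Equiv.Perm.decomposeFin_symm_apply_zero, Equiv.Perm.decomposeFin_symm_apply_succ]
  rw [Finset.sum_congr rfl fun i _ => hterm i, key]
  have h0 : (((0 : Fin (n+1)) : ℕ) + r ≤ ((π j).succ : ℕ)) ↔ r ≤ (π j : ℕ) + 1 := by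
    simp only [Fin.val_zero, Fin.val_succ]; omega
  by_cases hA : (j : ℕ) + r ≤ (π j : ℕ)
  · have hB : r ≤ (π j : ℕ) + 1 := by omega
    rw [if_pos (h0.mpr hB), if_pos hA, hexc, if_pos hA]
  · by_cases hB : r ≤ (π j : ℕ) + 1
    · rw [if_pos (h0.mpr hB), if_neg hA, if_pos hB, hexc, if_neg hA, zero_add]
      omega
    · rw [if_neg (fun hc => hB (h0.mp hc)), if_neg hA, if_neg hB, hexc, if_neg hA]

lemma card_notB (hrn : r ≤ n) (π : Equiv.Perm (Fin n)) :
    (univ.filter fun j : Fin n => (π j : ℕ) + 1 < r).card = r - 1 := by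
  have h : (univ.filter fun j : Fin n => (π j : ℕ) + 1 < r).card
      = (univ.filter fun v : Fin n => (v : ℕ) + 1 < r).card := by
    refine Finset.card_bij (fun j _ => π j) ?_ ?_ ?_
    · intro a ha
      simp only [mem_filter, mem_univ, true_and] at ha ⊢
      exact ha
    · intro a _ b _ hab; exact π.injective hab
    · intro b hb
      exact ⟨π.symm b, by simpa using (by simpa using hb : (b : ℕ) + 1 < r), by simp⟩
  rw [h]
  have h2 : (univ.filter fun v : Fin n => (v : ℕ) + 1 < r)
      = (univ.filter fun v : Fin n => (v : ℕ) < r - 1) := by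
    apply Finset.filter_congr; intro v _
    constructor <;> (intro h; omega)
  rw [h2, card_val_lt n (r-1) (by omega)]

lemma sum_p (hr : 1 ≤ r) (hrn : r ≤ n) (π : Equiv.Perm (Fin n)) :
    (∑ p : Fin (n+1), (X : ℝ[X]) ^ exc (n+1) r (Equiv.Perm.decomposeFin.symm (p, π)))
    = (exc n r π + r) • (X : ℝ[X]) ^ exc n r π
      + (n + 1 - r - exc n r π) • (X : ℝ[X]) ^ (exc n r π + 1) := by
  set k := exc n r π with hk
  rw [Fin.sum_univ_succ, exc_zero_ins hr]
  have hre : (∑ v : Fin n, (X : ℝ[X]) ^ exc (n+1) r (Equiv.Perm.decomposeFin.symm (v.succ, π)))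
      = ∑ j : Fin n, (X : ℝ[X]) ^ exc (n+1) r (Equiv.Perm.decomposeFin.symm ((π j).succ, π)) :=
    (Equiv.sum_comp π fun v => (X : ℝ[X]) ^ exc (n+1) r
      (Equiv.Perm.decomposeFin.symm (v.succ, π))).symm
  rw [hre]
  have hterm : ∀ j : Fin n, (X : ℝ[X]) ^ exc (n+1) r (Equiv.Perm.decomposeFin.symm ((π j).succ, π))
      = if ((j : ℕ) + r ≤ (π j : ℕ) ∨ (π j : ℕ) + 1 < r) then (X : ℝ[X]) ^ k
        else (X : ℝ[X]) ^ (k + 1) := by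
    intro j
    rw [exc_succ_ins hr π j]
    by_cases hA : (j : ℕ) + r ≤ (π j : ℕ)
    · rw [if_pos hA, if_pos (Or.inl hA)]
    · by_cases hB : r ≤ (π j : ℕ) + 1
      · rw [if_neg hA, if_pos hB, if_neg (by push_neg; exact ⟨by omega, by omega⟩)]
      · rw [if_neg hA, if_neg hB, if_pos (Or.inr (by omega))]
  rw [Finset.sum_congr rfl fun j _ => hterm j, Finset.sum_ite, Finset.sum_const,
    Finset.sum_const]
  have hcard1 : (univ.filter fun j : Fin n =>
      ((j : ℕ) + r ≤ (π j : ℕ) ∨ (π j : ℕ) + 1 < r)).card = k + (r - 1) := by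
    have hsplit : (univ.filter fun j : Fin n => ((j : ℕ) + r ≤ (π j : ℕ) ∨ (π j : ℕ) + 1 < r))
        = (univ.filter fun j : Fin n => (j : ℕ) + r ≤ (π j : ℕ))
          ∪ (univ.filter fun j : Fin n => (π j : ℕ) + 1 < r) := by
      rw [← Finset.filter_or]
    rw [hsplit, Finset.card_union_of_disjoint, card_notB hrn π]
    · rfl
    · rw [Finset.disjoint_filter]
      intro j _ hj
      omega
  have hcard2 : (univ.filter fun j : Fin n =>
      ¬((j : ℕ) + r ≤ (π j : ℕ) ∨ (π j : ℕ) + 1 < r)).card = n - (k + (r - 1)) := by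
    have := Finset.card_filter_add_card_filter_not
      (s := (univ : Finset (Fin n)))
      (p := fun j : Fin n => ((j : ℕ) + r ≤ (π j : ℕ) ∨ (π j : ℕ) + 1 < r))
    rw [hcard1] at this
    simp only [Finset.card_univ, Fintype.card_fin] at this
    omega
  rw [hcard1, hcard2]
  have hkle : k ≤ n - r := exc_le n r π
  have h1 : n - (k + (r - 1)) = n + 1 - r - k := by omega
  rw [h1]
  rw [← add_assoc, ← succ_nsmul' ((X : ℝ[X]) ^ k) (k + (r-1))]
  congr 2
  omega

lemma poly_id (n r k : ℕ) (hr : 1 ≤ r) (hrn : r ≤ n) (hk : k ≤ n - r) :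
    ((k + r) • (X : ℝ[X]) ^ k + (n + 1 - r - k) • (X : ℝ[X]) ^ (k + 1))
      = (C ((n + 1 - r : ℕ) : ℝ) * X + C (r : ℝ)) * X ^ k
        + X * (1 - X) * Polynomial.derivative (X ^ k) := by
  have e1 : ((k + r : ℕ) : ℝ) = (k : ℝ) + r := by push_cast; ring
  have e2 : ((n + 1 - r : ℕ) : ℝ) = (n : ℝ) + 1 - r := by
    rw [Nat.cast_sub (by omega)]; push_cast; ring
  have e3 : ((n + 1 - r - k : ℕ) : ℝ) = (n : ℝ) + 1 - r - k := by
    have h : n + 1 - r - k = n + 1 - (r + k) := by omega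
    rw [h, Nat.cast_sub (by omega)]; push_cast; ring
  rw [← Nat.cast_smul_eq_nsmul ℝ, ← Nat.cast_smul_eq_nsmul ℝ, smul_eq_C_mul, smul_eq_C_mul,
    e1, e2, e3]
  rcases k with _ | k'
  · simp only [pow_zero, derivative_one, mul_zero, mul_one, Nat.cast_zero, map_sub, map_add,
      map_one, C_0, add_zero, sub_zero, pow_one]
    ring
  · rw [derivative_X_pow]
    simp only [Nat.add_sub_cancel, Nat.cast_add, Nat.cast_one, map_sub, map_add, map_one]
    ring

lemma recurrence (hr : 1 ≤ r) (hrn : r ≤ n) :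
    rEulerianPoly (n+1) r
      = (C ((n + 1 - r : ℕ) : ℝ) * X + C (r : ℝ)) * rEulerianPoly n r
        + X * (1 - X) * Polynomial.derivative (rEulerianPoly n r) := by
  rw [rEulerianPoly_eq, rEulerianPoly_eq]
  rw [← Equiv.sum_comp (Equiv.Perm.decomposeFin.symm :
        (Fin (n+1) × Equiv.Perm (Fin n)) ≃ Equiv.Perm (Fin (n+1)))
      (fun σ => (X : ℝ[X]) ^ exc (n+1) r σ)]
  rw [Fintype.sum_prod_type, Finset.sum_comm]
  rw [Polynomial.derivative_sum, Finset.mul_sum, Finset.mul_sum, ← Finset.sum_add_distrib]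
  apply Finset.sum_congr rfl
  intro π _
  rw [sum_p hr hrn π, poly_id n r (exc n r π) hr hrn (exc_le n r π)]
lemma prod_sub_comm {ι : Type*} (s : Finset ι) (f : ι → ℝ) (a : ℝ) :
    ∏ k ∈ s, (a - f k) = (-1 : ℝ) ^ s.card * ∏ k ∈ s, (f k - a) := by
  rw [← Finset.prod_const (-1 : ℝ), ← Finset.prod_mul_distrib]
  exact Finset.prod_congr rfl fun k _ => by ring

set_option maxHeartbeats 1000000 in
lemma step {n r d : ℕ} (hr : 1 ≤ r) (hrn : r ≤ n) (hd : n = r + d)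
    (x : Fin d → ℝ) (c : ℝ) (hx : StrictMono x) (hneg : ∀ i, x i < 0) (hc : 0 < c)
    (hP : rEulerianPoly n r = C c * ∏ i, (X - C (x i))) :
    ∃ y : Fin (d+1) → ℝ, StrictMono y ∧ (∀ i, y i < 0) ∧
      rEulerianPoly (n+1) r = C c * ∏ i, (X - C (y i)) := by
  set P := rEulerianPoly n r with hPdef
  set Q := rEulerianPoly (n+1) r with hQdef
  have hcast : ((n + 1 - r : ℕ) : ℝ) = (d : ℝ) + 1 := by
    have : n + 1 - r = d + 1 := by omega
    rw [this]; push_cast; ring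
  have hrec : Q = (C ((d : ℝ) + 1) * X + C (r : ℝ)) * P
      + X * (1 - X) * Polynomial.derivative P := by
    rw [hQdef, recurrence hr hrn, hcast]
  -- degree facts for P
  have hmon : ∀ i : Fin d, (X - C (x i)).Monic := fun i => monic_X_sub_C (x i)
  have hPideg : (∏ i, (X - C (x i)) : ℝ[X]).natDegree = d := by
    rw [natDegree_prod_of_monic _ _ fun i _ => hmon i]
    simp [natDegree_X_sub_C]
  have hPd : P.natDegree = d := by
    rw [hP, natDegree_C_mul hc.ne', hPideg]
  have hPcd : P.coeff d = c := by
    have h1 : (∏ i, (X - C (x i)) : ℝ[X]).coeff d = 1 := by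
      have hm := (monic_prod_of_monic univ _ fun i _ => hmon i).coeff_natDegree
      rwa [hPideg] at hm
    rw [hP, coeff_C_mul, h1, mul_one]
  have hPc1 : P.coeff (d+1) = 0 :=
    coeff_eq_zero_of_natDegree_lt (by omega)
  -- the X(1-X)P' term
  have hT : (X * (1 - X) * Polynomial.derivative P).coeff (d+1) = -((d : ℝ) * c)
      ∧ (X * (1 - X) * Polynomial.derivative P).natDegree ≤ d + 1 := by
    rcases Nat.eq_zero_or_pos d with hd0 | hd1
    · have hder0 : Polynomial.derivative P = 0 := by
        have := Polynomial.eq_C_of_natDegree_eq_zero (hd0 ▸ hPd)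
        rw [this]; exact derivative_C
      subst hd0
      simp [hder0]
    · obtain ⟨e, rfl⟩ : ∃ e, d = e + 1 := ⟨d - 1, by omega⟩
      constructor
      · have hXX : (X : ℝ[X]) * (1 - X) * Polynomial.derivative P
            = X * Polynomial.derivative P - X * (X * Polynomial.derivative P) := by ring
        rw [hXX, Polynomial.coeff_sub]
        have c1 : ((X : ℝ[X]) * Polynomial.derivative P).coeff (e + 1 + 1)
            = (Polynomial.derivative P).coeff (e + 1) := Polynomial.coeff_X_mul _ _
        have c2 : ((X : ℝ[X]) * (X * Polynomial.derivative P)).coeff (e + 1 + 1)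
            = (Polynomial.derivative P).coeff e := by
          rw [Polynomial.coeff_X_mul, Polynomial.coeff_X_mul]
        rw [c1, c2, Polynomial.coeff_derivative, Polynomial.coeff_derivative]
        have h1 : P.coeff (e + 1 + 1) = 0 := hPc1
        have h2 : P.coeff (e + 1) = c := hPcd
        rw [h1, h2]
        push_cast; ring
      · calc ((X : ℝ[X]) * (1 - X) * Polynomial.derivative P).natDegree
            ≤ ((X : ℝ[X]) * (1 - X)).natDegree + (Polynomial.derivative P).natDegree :=
              natDegree_mul_le
          _ ≤ 2 + e := by
              apply add_le_add
              · compute_degree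
              · exact le_trans (natDegree_derivative_le P) (by omega)
          _ ≤ e + 1 + 1 := by omega
  have hQc : Q.coeff (d+1) = c := by
    rw [hrec, Polynomial.coeff_add, add_mul, Polynomial.coeff_add, mul_assoc,
      coeff_C_mul, Polynomial.coeff_X_mul, coeff_C_mul, hPcd, hPc1, hT.1]
    push_cast; ring
  have hQdegle : Q.natDegree ≤ d + 1 := by
    rw [hrec]
    apply le_trans (natDegree_add_le _ _)
    apply max_le
    · apply le_trans natDegree_mul_le
      have h1 : (C ((d : ℝ) + 1) * X + C (r : ℝ)).natDegree ≤ 1 := by compute_degree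
      omega
    · exact hT.2
  have hQdeg : Q.natDegree = d + 1 :=
    le_antisymm hQdegle (le_natDegree_of_ne_zero (by rw [hQc]; exact hc.ne'))
  have hQ0 : Q ≠ 0 := fun h => hc.ne' (by rw [← hQc, h, Polynomial.coeff_zero])
  -- evaluation facts
  have hPev : ∀ t : ℝ, P.eval t = c * ∏ i, (t - x i) := by
    intro t; rw [hP]; simp [eval_prod]
  have hQev : ∀ t : ℝ, Q.eval t = (((d : ℝ) + 1) * t + (r : ℝ)) * P.eval t
      + t * (1 - t) * (Polynomial.derivative P).eval t := by
    intro t; rw [hrec]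
    simp only [eval_add, eval_mul, eval_sub, eval_C, eval_X, eval_one]
  have hder : ∀ i : Fin d, (Polynomial.derivative P).eval (x i)
      = c * ∏ k ∈ univ.erase i, (x i - x k) := by
    intro i
    have hsplit : P = C c * ((X - C (x i)) * ∏ k ∈ univ.erase i, (X - C (x k))) := by
      rw [hP]
      congr 1
      exact (Finset.mul_prod_erase _ _ (Finset.mem_univ i)).symm
    rw [hsplit, derivative_C_mul, derivative_mul, derivative_X_sub_C]
    simp [eval_prod]
  -- sign of P' at x i
  have hNsign : ∀ i : Fin d,
      0 < (-1 : ℝ) ^ (d - 1 - (i : ℕ)) * (Polynomial.derivative P).eval (x i) := by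
    intro i
    have hsplit : (univ.erase i : Finset (Fin d))
        = (univ.filter fun k : Fin d => (k : ℕ) < (i : ℕ))
          ∪ (univ.filter fun k : Fin d => (i : ℕ) < (k : ℕ)) := by
      ext k
      simp only [Finset.mem_erase, Finset.mem_union, Finset.mem_filter, Finset.mem_univ,
        true_and, and_true, ne_eq]
      constructor
      · intro h
        rcases lt_or_gt_of_ne (fun hv => h (Fin.val_injective hv) : (k : ℕ) ≠ (i : ℕ)) with h' | h'
        · exact Or.inl h'
        · exact Or.inr h'
      · intro h hk
        subst hk
        rcases h with h | h <;> omega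
    have hdisj : Disjoint (univ.filter fun k : Fin d => (k : ℕ) < (i : ℕ))
        (univ.filter fun k : Fin d => (i : ℕ) < (k : ℕ)) := by
      rw [Finset.disjoint_filter]
      intro k _ h1
      omega
    have hprod : ∏ k ∈ univ.erase i, (x i - x k)
        = (∏ k ∈ univ.filter (fun k : Fin d => (k : ℕ) < (i : ℕ)), (x i - x k))
          * ((-1 : ℝ) ^ (d - 1 - (i : ℕ))
            * ∏ k ∈ univ.filter (fun k : Fin d => (i : ℕ) < (k : ℕ)), (x k - x i)) := by
      rw [hsplit, Finset.prod_union hdisj]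
      have h2 : (∏ k ∈ univ.filter (fun k : Fin d => (i : ℕ) < (k : ℕ)), (x i - x k))
          = (-1 : ℝ) ^ (d - 1 - (i : ℕ))
            * ∏ k ∈ univ.filter (fun k : Fin d => (i : ℕ) < (k : ℕ)), (x k - x i) := by
        rw [prod_sub_comm, card_lt_val]
        have h3 : d - ((i : ℕ) + 1) = d - 1 - (i : ℕ) := by omega
        rw [h3]
      rw [h2]
    have hp1 : 0 < ∏ k ∈ univ.filter (fun k : Fin d => (k : ℕ) < (i : ℕ)), (x i - x k) := by
      apply Finset.prod_pos
      intro k hk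
      simp only [Finset.mem_filter] at hk
      have : k < i := hk.2
      have := hx this
      linarith
    have hp2 : 0 < ∏ k ∈ univ.filter (fun k : Fin d => (i : ℕ) < (k : ℕ)), (x k - x i) := by
      apply Finset.prod_pos
      intro k hk
      simp only [Finset.mem_filter] at hk
      have : i < k := hk.2
      have := hx this
      linarith
    have ht : ((-1 : ℝ) ^ (d - 1 - (i : ℕ))) * ((-1 : ℝ) ^ (d - 1 - (i : ℕ))) = 1 := by
      rw [← mul_pow]; norm_num
    have heq : (-1 : ℝ) ^ (d - 1 - (i : ℕ)) * (Polynomial.derivative P).eval (x i)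
        = ((-1 : ℝ) ^ (d - 1 - (i : ℕ)) * (-1 : ℝ) ^ (d - 1 - (i : ℕ)))
          * (c * ((∏ k ∈ univ.filter (fun k : Fin d => (k : ℕ) < (i : ℕ)), (x i - x k))
            * (∏ k ∈ univ.filter (fun k : Fin d => (i : ℕ) < (k : ℕ)), (x k - x i)))) := by
      rw [hder i, hprod]; ring
    rw [heq, ht, one_mul]
    positivity
  -- the z points
  set z : Fin (d+1) → ℝ := fun i => if h : (i : ℕ) < d then x ⟨(i : ℕ), h⟩ else 0 with hzdef
  have hzmono : StrictMono z := by
    intro a b hab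
    by_cases hb : (b : ℕ) < d
    · have ha : (a : ℕ) < d := by
        have := (Fin.lt_def.mp hab); omega
      simp only [hzdef, dif_pos ha, dif_pos hb]
      exact hx (Fin.mk_lt_mk.mpr (Fin.lt_def.mp hab))
    · have ha : (a : ℕ) < d := by
        have h1 := (Fin.lt_def.mp hab)
        have := b.isLt; omega
      simp only [hzdef, dif_pos ha, dif_neg hb]
      exact hneg _
  have hzlast : z (Fin.last d) = 0 := by
    simp [hzdef]
  have hzle0 : ∀ i : Fin (d+1), z i ≤ 0 := by
    intro i
    rw [← hzlast]
    exact hzmono.monotone (Fin.le_last i)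
  -- signs of Q at z points
  have hQz : ∀ i : Fin (d+1), 0 < (-1 : ℝ) ^ (d - (i : ℕ)) * Q.eval (z i) := by
    intro i
    by_cases hi : (i : ℕ) < d
    · have hzi : z i = x ⟨(i : ℕ), hi⟩ := by simp [hzdef, dif_pos hi]
      have hPz : P.eval (z i) = 0 := by
        rw [hzi, hPev]
        have : (∏ k, (x ⟨(i : ℕ), hi⟩ - x k)) = 0 :=
          Finset.prod_eq_zero (Finset.mem_univ ⟨(i : ℕ), hi⟩) (sub_self _)
        rw [this, mul_zero]
      have hxi := hneg ⟨(i : ℕ), hi⟩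
      have hsp : d - (i : ℕ) = (d - 1 - (i : ℕ)) + 1 := by omega
      have heq : (-1 : ℝ) ^ (d - (i : ℕ)) * Q.eval (z i)
          = (-(x ⟨(i : ℕ), hi⟩ * (1 - x ⟨(i : ℕ), hi⟩)))
            * ((-1 : ℝ) ^ (d - 1 - (i : ℕ))
              * (Polynomial.derivative P).eval (x ⟨(i : ℕ), hi⟩)) := by
        rw [hsp, pow_succ, hQev, hPz, hzi]; ring
      rw [heq]
      apply mul_pos
      · nlinarith
      · simpa using hNsign ⟨(i : ℕ), hi⟩
    · have hid : (i : ℕ) = d := by have := i.isLt; omega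
      have hzi : z i = 0 := by
        simp only [hzdef]
        rw [dif_neg (by omega)]
      have hP0 : 0 < P.eval 0 := by
        rw [hPev]
        apply mul_pos hc
        apply Finset.prod_pos
        intro k _
        have := hneg k
        linarith
      have heq : (-1 : ℝ) ^ (d - (i : ℕ)) * Q.eval (z i) = (r : ℝ) * P.eval 0 := by
        rw [hid, Nat.sub_self, pow_zero, one_mul, hzi, hQev]; ring
      rw [heq]
      apply mul_pos _ hP0
      have : (1 : ℝ) ≤ (r : ℝ) := by exact_mod_cast hr
      linarith
  -- roots between consecutive z points
  have hroot : ∀ i : Fin d, ∃ y, z i.castSucc < y ∧ y < z i.succ ∧ Q.eval y = 0 := by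
    intro i
    have hab : z i.castSucc < z i.succ := hzmono (Fin.castSucc_lt_succ (i := i))
    have sa := hQz i.castSucc
    have sb := hQz i.succ
    rw [Fin.coe_castSucc] at sa
    rw [Fin.val_succ] at sb
    set m := d - ((i : ℕ) + 1) with hm
    have hsp : d - (i : ℕ) = m + 1 := by have := i.isLt; omega
    rw [hsp, pow_succ] at sa
    have ht : ((-1 : ℝ) ^ m) * ((-1 : ℝ) ^ m) = 1 := by rw [← mul_pow]; norm_num
    have h3 : (((-1 : ℝ) ^ m) * ((-1 : ℝ) ^ m) - 1)
        * (Q.eval (z i.castSucc) * Q.eval (z i.succ)) = 0 := by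
      rw [ht]; ring
    have hopp : Q.eval (z i.castSucc) * Q.eval (z i.succ) < 0 := by
      nlinarith [mul_pos sa sb]
    have hcont : ContinuousOn (fun t => Q.eval t) (Set.Icc (z i.castSucc) (z i.succ)) :=
      (Polynomial.continuous Q).continuousOn
    rcases mul_neg_iff.mp hopp with ⟨hpos, hneg'⟩ | ⟨hneg', hpos⟩
    · obtain ⟨y, hy, hy0⟩ := intermediate_value_Ioo' hab.le hcont
        (Set.mem_Ioo.mpr ⟨hneg', hpos⟩)
      exact ⟨y, hy.1, hy.2, hy0⟩
    · obtain ⟨y, hy, hy0⟩ := intermediate_value_Ioo hab.le hcont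
        (Set.mem_Ioo.mpr ⟨hneg', hpos⟩)
      exact ⟨y, hy.1, hy.2, hy0⟩
  choose Y hY1 hY2 hY3 using hroot
  have hYmono : StrictMono Y := by
    intro i j hij
    have h1 : z i.succ ≤ z j.castSucc := by
      apply hzmono.monotone
      rw [Fin.le_def, Fin.val_succ, Fin.coe_castSucc]
      exact Fin.lt_def.mp hij
    exact lt_of_lt_of_le (hY2 i) (le_trans h1 (hY1 j).le)
  have hYneg : ∀ i, Y i < 0 := fun i =>
    lt_of_lt_of_le (hY2 i) (hzle0 _)
  have hYgt : ∀ i, z 0 < Y i := fun i =>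
    lt_of_le_of_lt (hzmono.monotone (Fin.zero_le _)) (hY1 i)
  -- divide out the found roots
  have hdvd : (∏ i, (X - C (Y i)) : ℝ[X]) ∣ Q :=
    Fintype.prod_dvd_of_coprime (Polynomial.pairwise_coprime_X_sub_C hYmono.injective)
      fun i => Polynomial.dvd_iff_isRoot.mpr (hY3 i)
  obtain ⟨U, hU⟩ := hdvd
  have hPiYmon : (∏ i, (X - C (Y i)) : ℝ[X]).Monic :=
    monic_prod_of_monic _ _ fun i _ => monic_X_sub_C (Y i)
  have hPiYdeg : (∏ i, (X - C (Y i)) : ℝ[X]).natDegree = d := by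
    rw [natDegree_prod_of_monic _ _ fun i _ => monic_X_sub_C (Y i)]
    simp [natDegree_X_sub_C]
  have hU0 : U ≠ 0 := by
    intro h
    rw [h, mul_zero] at hU
    exact hQ0 hU
  have hUdeg : U.natDegree = 1 := by
    have := hQdeg
    rw [hU, natDegree_mul hPiYmon.ne_zero hU0, hPiYdeg] at this
    omega
  have hUlc : U.coeff 1 = c := by
    have hlcQ : Q.leadingCoeff = c := by
      rw [Polynomial.leadingCoeff, hQdeg, hQc]
    rw [hU, leadingCoeff_mul, hPiYmon.leadingCoeff, one_mul] at hlcQ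
    rw [← hUdeg, ← Polynomial.leadingCoeff]
    exact hlcQ
  set y0 : ℝ := -(U.coeff 0) / c with hy0def
  have hUeq : U = C c * (X - C y0) := by
    have h1 := Polynomial.eq_X_add_C_of_natDegree_le_one hUdeg.le
    rw [hUlc] at h1
    have hcu : c * (-(U.coeff 0) / c) = -(U.coeff 0) := by
      rw [mul_comm]; exact div_mul_cancel₀ _ hc.ne'
    rw [h1, hy0def, mul_sub, ← C_mul, hcu, map_neg, sub_neg_eq_add]
  -- y0 < z 0
  have hy0lt : y0 < z 0 := by
    have sa := hQz 0
    have h00 : ((0 : Fin (d+1)) : ℕ) = 0 := rfl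
    rw [h00, Nat.sub_zero] at sa
    have hWpos : 0 < ∏ i, (Y i - z 0) := Finset.prod_pos fun i _ => by linarith [hYgt i]
    have heval : Q.eval (z 0)
        = ((-1 : ℝ) ^ d * ∏ i, (Y i - z 0)) * (c * (z 0 - y0)) := by
      rw [hU, Polynomial.eval_mul, Polynomial.eval_prod, hUeq]
      have h5 : (∏ i, ((X - C (Y i)).eval (z 0))) = (-1 : ℝ) ^ d * ∏ i, (Y i - z 0) := by
        simp only [Polynomial.eval_sub, Polynomial.eval_X, Polynomial.eval_C]
        have h6 := prod_sub_comm (univ : Finset (Fin d)) Y (z 0)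
        simpa using h6
      rw [h5]
      simp only [eval_mul, eval_sub, eval_C, eval_X]
    have ht : ((-1 : ℝ) ^ d) * ((-1 : ℝ) ^ d) = 1 := by rw [← mul_pow]; norm_num
    have hkey : 0 < (∏ i, (Y i - z 0)) * (c * (z 0 - y0)) := by
      rw [heval] at sa
      nlinarith [sa]
    by_contra hcon
    push_neg at hcon
    nlinarith [hkey, mul_nonneg (mul_nonneg hWpos.le hc.le) (sub_nonneg.mpr hcon)]
  -- assemble
  refine ⟨Fin.cons y0 Y, ?_, ?_, ?_⟩
  · intro a b hab
    rcases Fin.eq_zero_or_eq_succ a with ha0 | ⟨i, rfl⟩ <;>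
      rcases Fin.eq_zero_or_eq_succ b with hb0 | ⟨j, rfl⟩
    · subst ha0; subst hb0; exact absurd hab (lt_irrefl _)
    · subst ha0
      simp only [Fin.cons_zero, Fin.cons_succ]
      exact lt_of_lt_of_le hy0lt (le_trans (hzmono.monotone (Fin.zero_le _)) (hY1 j).le)
    · subst hb0; exact absurd hab (Fin.not_lt_zero _)
    · simp only [Fin.cons_succ]
      exact hYmono (Fin.succ_lt_succ_iff.mp hab)
  · intro i
    refine Fin.cases ?_ (fun j => ?_) i
    · simp only [Fin.cons_zero]
      exact lt_of_lt_of_le hy0lt (hzle0 0)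
    · simp only [Fin.cons_succ]
      exact hYneg j
  · show Q = C c * ∏ i : Fin (d+1), (X - C ((Fin.cons y0 Y : Fin (d+1) → ℝ) i))
    rw [Fin.prod_univ_succ]
    simp only [Fin.cons_zero, Fin.cons_succ]
    rw [hU, hUeq]
    ring

lemma base (r : ℕ) : rEulerianPoly r r = C ((r.factorial : ℕ) : ℝ) := by
  unfold rEulerianPoly
  have h0 : ∀ π : Equiv.Perm (Fin r),
      (univ.filter fun i : Fin r => (i : ℕ) + r ≤ (π i : ℕ)).card = 0 := by
    intro π
    rw [Finset.card_eq_zero, Finset.filter_eq_empty_iff]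
    intro i _
    have := (π i).isLt
    omega
  rw [Finset.sum_congr rfl fun π _ => by rw [h0 π, pow_zero]]
  rw [Finset.sum_const, Finset.card_univ, Fintype.card_perm, Fintype.card_fin]
  rw [nsmul_eq_mul, mul_one]
  simp [Polynomial.C_eq_natCast]

lemma aux (r : ℕ) (hr : 1 ≤ r) (m : ℕ) :
    ∃ (x : Fin m → ℝ) (c : ℝ), StrictMono x ∧ (∀ i, x i < 0) ∧ 0 < c ∧
      rEulerianPoly (r + m) r = C c * ∏ i, (X - C (x i)) := by
  induction m with
  | zero =>
    refine ⟨fun i => 0, ((r.factorial : ℕ) : ℝ), ?_, ?_, ?_, ?_⟩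
    · intro a b h; exact absurd h (by exact Fin.elim0 a)
    · exact fun i => Fin.elim0 i
    · exact_mod_cast r.factorial_pos
    · rw [Nat.add_zero, base r]
      simp
  | succ m ih =>
    obtain ⟨x, c, hx, hneg, hc, hP⟩ := ih
    obtain ⟨y, hy, hyneg, hQ⟩ := step hr (by omega) rfl x c hx hneg hc hP
    exact ⟨y, c, hy, hyneg, hc, by rw [show r + (m+1) = (r + m) + 1 by omega, hQ]⟩

end REu

/-- For `1 ≤ r ≤ n`, the `r`-Eulerian polynomial has only real, distinct,
nonpositive roots: it is a positive constant times a product of `n - r`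
distinct linear factors `(t - x_i)` with all `x_i ≤ 0`. -/
theorem rEulerianPoly_real_roots (n r : ℕ) (hr : 1 ≤ r) (hrn : r ≤ n) :
    ∃ (x : Fin (n - r) → ℝ) (c : ℝ), StrictMono x ∧ (∀ i, x i ≤ 0) ∧ 0 < c ∧
      rEulerianPoly n r
        = Polynomial.C c * ∏ i : Fin (n - r), (Polynomial.X - Polynomial.C (x i)) := by
  obtain ⟨x, c, hx, hneg, hc, hP⟩ := REu.aux r hr (n - r)
  rw [show r + (n - r) = n by omega] at hP
  exact ⟨x, c, hx, fun i => (hneg i).le, hc, hP⟩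
end

section
/- For every n ≥ 1, the total number of plateaus over all quasi-Stirling permutations of size n satisfies 2·∑_{w ∈ Q̄_n} plat(w) = (n+1)·(2n)!/(n+1)!; equivalently, the average number of plateaus of an element of Q̄_n is (n+1)/2. -/
open Finset
open scoped Classical

/-- Number of plateaus of a word `w` of length `N`: positions `i` (1-indexed,
`1 ≤ i ≤ N-1`) whose letter equals the next letter. -/
noncomputable def platW {α : Type*} [DecidableEq α] {N : ℕ} (w : Fin N → α) : ℕ :=
  (univ.filter fun i : Fin N =>
    ∃ h : (i : ℕ) + 1 < N, w ⟨(i : ℕ) + 1, h⟩ = w i).card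

namespace QSAux
open List

def NCl (L : List ℕ) : Prop := ∀ a b : ℕ, a ≠ b → ¬ [a,b,a,b] <+ L

noncomputable def QW (A : Finset ℕ) : Finset (List ℕ) :=
  ((A.toList ++ A.toList).permutations.toFinset).filter
    (fun L => (∀ a : ℕ, L.count a = if a ∈ A then 2 else 0) ∧ NCl L)

lemma mem_QW {A : Finset ℕ} {L : List ℕ} :
    L ∈ QW A ↔ (∀ a : ℕ, L.count a = if a ∈ A then 2 else 0) ∧ NCl L := by
  constructor
  · intro h; exact (Finset.mem_filter.1 h).2
  · intro h
    refine Finset.mem_filter.2 ⟨?_, h⟩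
    rw [List.mem_toFinset, List.mem_permutations, List.perm_iff_count]
    intro a
    rw [h.1 a, List.count_append]
    by_cases ha : a ∈ A
    · simp [ha, List.count_eq_one_of_mem A.nodup_toList (Finset.mem_toList.2 ha)]
    · simp [ha, List.count_eq_zero_of_not_mem (fun hc => ha (Finset.mem_toList.1 hc))]

lemma mem_letter {A : Finset ℕ} {L : List ℕ} (h : L ∈ QW A) {x : ℕ} (hx : x ∈ L) : x ∈ A := by
  have := (mem_QW.1 h).1 x
  by_contra hc
  simp [hc] at this
  exact (List.count_pos_iff.2 hx).ne' (this ▸ rfl)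

lemma NCl.sublist {M L : List ℕ} (hs : M <+ L) (h : NCl L) : NCl M :=
  fun a b hab hc => h a b hab (hc.trans hs)

lemma toFinset_of_mem_QW {A : Finset ℕ} {L : List ℕ} (h : L ∈ QW A) : L.toFinset = A := by
  ext x
  simp only [List.mem_toFinset]
  constructor
  · exact fun hx => mem_letter h hx
  · intro hx
    have := (mem_QW.1 h).1 x
    rw [if_pos hx] at this
    exact List.count_pos_iff.1 (by omega)

lemma length_of_mem_QW {A : Finset ℕ} {L : List ℕ} (h : L ∈ QW A) : L.length = 2 * A.card := by
  have h1 : ∑ a ∈ L.toFinset, L.count a = L.length := by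
    classical
    have := Multiset.toFinset_sum_count_eq (L : Multiset ℕ)
    simpa using this
  rw [toFinset_of_mem_QW h] at h1
  rw [← h1]
  rw [Finset.sum_congr rfl (fun a ha => by rw [(mem_QW.1 h).1 a, if_pos ha])]
  simp [mul_comm]

lemma NCl_map {L : List ℕ} (f : ℕ → ℕ) (hf : Set.InjOn f {x | x ∈ L}) (h : NCl L) :
    NCl (L.map f) := by
  intro p q hpq hsub
  rw [List.sublist_map_iff] at hsub
  obtain ⟨l', hl', heq⟩ := hsub
  have hlen := congrArg List.length heq
  rcases l' with _|⟨x1,_|⟨x2,_|⟨x3,_|⟨x4,_|⟨x5,t⟩⟩⟩⟩⟩ <;> simp at hlen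
  simp only [List.map_cons, List.map_nil, List.cons.injEq, and_true] at heq
  obtain ⟨h1, h2, h3, h4⟩ := heq
  have hx1 : x1 ∈ L := hl'.subset (by simp)
  have hx2 : x2 ∈ L := hl'.subset (by simp)
  have hx3 : x3 ∈ L := hl'.subset (by simp)
  have hx4 : x4 ∈ L := hl'.subset (by simp)
  have e13 : x1 = x3 := hf hx1 hx3 (h1.symm.trans h3)
  have e24 : x2 = x4 := hf hx2 hx4 (h2.symm.trans h4)
  have ne12 : x1 ≠ x2 := fun hc => hpq (by rw [h1, h2, hc])
  subst e13; subst e24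
  exact h _ _ ne12 hl'

lemma count_map_injOn {L : List ℕ} {A : Finset ℕ} (f : ℕ → ℕ)
    (hf : Set.InjOn f ↑A) (hL : ∀ x ∈ L, x ∈ A) {a : ℕ} (ha : a ∈ A) :
    (L.map f).count (f a) = L.count a := by
  rw [List.count_eq_countP, List.countP_map, List.count_eq_countP]
  apply List.countP_congr
  intro x hx
  simp only [Function.comp_apply, beq_iff_eq]
  exact ⟨fun he => hf (hL x hx) ha he, fun he => congrArg f he⟩

lemma QW_map {A : Finset ℕ} {L : List ℕ} (f : ℕ → ℕ) (hf : Set.InjOn f ↑A)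
    (h : L ∈ QW A) : L.map f ∈ QW (A.image f) := by
  have hL : ∀ x ∈ L, x ∈ A := fun x hx => mem_letter h hx
  rw [mem_QW]
  refine ⟨?_, NCl_map f (fun x hx y hy => hf (hL x hx) (hL y hy)) (mem_QW.1 h).2⟩
  intro b
  by_cases hb : b ∈ A.image f
  · obtain ⟨a, ha, rfl⟩ := Finset.mem_image.1 hb
    rw [if_pos hb, count_map_injOn f hf hL ha, (mem_QW.1 h).1 a, if_pos ha]
  · rw [if_neg hb, List.count_eq_zero]
    intro hc
    obtain ⟨x, hx, rfl⟩ := List.mem_map.1 hc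
    exact hb (Finset.mem_image.2 ⟨x, hL x hx, rfl⟩)

lemma map_injOn_lists {A : Finset ℕ} (f : ℕ → ℕ) (hf : Set.InjOn f ↑A) :
    ∀ (L M : List ℕ), (∀ x ∈ L, x ∈ A) → (∀ x ∈ M, x ∈ A) → L.map f = M.map f → L = M := by
  intro L
  induction L with
  | nil => intro M _ _ h; cases M <;> simp_all
  | cons x t ih =>
    intro M hL hM h
    cases M with
    | nil => simp at h
    | cons y s =>
      simp only [List.map_cons, List.cons.injEq] at h
      have : x = y := hf (hL x (by simp)) (hM y (by simp)) h.1
      rw [this, ih s (fun z hz => hL z (by simp [hz])) (fun z hz => hM z (by simp [hz])) h.2]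

lemma QW_card_image {A : Finset ℕ} (f : ℕ → ℕ) (hf : Set.InjOn f ↑A) :
    (QW (A.image f)).card = (QW A).card := by
  classical
  symm
  apply Finset.card_bij (fun L _ => L.map f)
  · intro L hL; exact QW_map f hf hL
  · intro L hL M hM h
    exact map_injOn_lists f hf L M (fun x hx => mem_letter hL hx) (fun x hx => mem_letter hM hx) h
  · intro M hM
    -- build inverse
    have hne : (Set.range fun x : ℕ => x).Nonempty := ⟨0, 0, rfl⟩
    set g := Function.invFunOn f ↑A with hg
    have hfg : ∀ b ∈ A.image f, f (g b) = b := by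
      intro b hb
      obtain ⟨a, ha, rfl⟩ := Finset.mem_image.1 hb
      exact Function.invFunOn_eq ⟨a, ha, rfl⟩
    have hgf : ∀ a ∈ A, g (f a) = a := fun a ha => hf.leftInvOn_invFunOn ha
    have hginj : Set.InjOn g ↑(A.image f) := by
      intro x hx y hy hxy
      rw [← hfg x hx, ← hfg y hy, hxy]
    have himg : (A.image f).image g = A := by
      ext x
      constructor
      · intro hx
        obtain ⟨b, hb, rfl⟩ := Finset.mem_image.1 hx
        obtain ⟨a, ha, rfl⟩ := Finset.mem_image.1 hb
        rw [hgf a ha]; exact ha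
      · intro hx
        exact Finset.mem_image.2 ⟨f x, Finset.mem_image.2 ⟨x, hx, rfl⟩, hgf x hx⟩
    refine ⟨M.map g, himg ▸ QW_map g hginj hM, ?_⟩
    rw [List.map_map]
    conv_rhs => rw [← List.map_id M]
    apply List.map_congr_left
    intro x hx
    exact hfg x (mem_letter hM hx)

lemma QW_card_eq_of_card_eq {A B : Finset ℕ} (h : A.card = B.card) :
    (QW A).card = (QW B).card := by
  classical
  -- map A onto range A.card via its order iso, similarly B
  have key : ∀ C : Finset ℕ, (QW C).card = (QW (Finset.range C.card)).card := by
    intro C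
    have e := C.orderIsoOfFin (rfl : C.card = C.card)
    set f : ℕ → ℕ := fun x => if h : x ∈ C then ((e.symm ⟨x, h⟩ : Fin C.card) : ℕ) else 0 with hfdef
    have hfx : ∀ x (hx : x ∈ C), f x = ((e.symm ⟨x, hx⟩ : Fin C.card) : ℕ) := fun x hx => dif_pos hx
    have hf : Set.InjOn f ↑C := by
      intro x hx y hy hxy
      rw [hfx x hx, hfx y hy] at hxy
      have := e.symm.injective (Fin.val_injective hxy)
      exact Subtype.ext_iff.1 this
    have himg : C.image f = Finset.range C.card := by
      ext m
      constructor
      · intro hmem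
        obtain ⟨x, hx, rfl⟩ := Finset.mem_image.1 hmem
        rw [Finset.mem_range, hfx x hx]
        exact (e.symm ⟨x, hx⟩).isLt
      · intro hm
        rw [Finset.mem_range] at hm
        refine Finset.mem_image.2 ⟨(e ⟨m, hm⟩ : ℕ), (e ⟨m, hm⟩).2, ?_⟩
        rw [hfx _ (e ⟨m, hm⟩).2]
        have : (⟨(e ⟨m, hm⟩ : ℕ), (e ⟨m, hm⟩).2⟩ : {x // x ∈ C}) = e ⟨m, hm⟩ := rfl
        rw [this]
        simp
    rw [← himg, QW_card_image f hf]
  rw [key A, key B, h]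

lemma sublist_cons_ne {p a : ℕ} {r t : List ℕ} (h : (p::r) <+ a :: t) (hp : p ≠ a) :
    (p::r) <+ t := by
  rcases List.sublist_cons_iff.1 h with h | ⟨r', heq, _⟩
  · exact h
  · exact absurd (List.cons.injEq .. ▸ heq).1 hp

lemma pair_split {x y : List ℕ} {u v : ℕ} (h : [u,v] <+ x ++ y) :
    [u,v] <+ x ∨ (u ∈ x ∧ v ∈ y) ∨ [u,v] <+ y := by
  rw [List.sublist_append_iff] at h
  obtain ⟨s1, s2, heq, h1, h2⟩ := h
  rcases s1 with _|⟨a1,_|⟨a2,_|⟨a3,t⟩⟩⟩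
  · obtain rfl : s2 = [u,v] := by simpa using heq.symm
    exact Or.inr (Or.inr h2)
  · obtain ⟨rfl, hs2⟩ : a1 = u ∧ s2 = [v] := by simpa using heq.symm
    subst hs2
    exact Or.inr (Or.inl ⟨List.singleton_sublist.1 h1, List.singleton_sublist.1 h2⟩)
  · obtain ⟨rfl, rfl, hs2⟩ : a1 = u ∧ a2 = v ∧ s2 = [] := by simpa using heq.symm
    exact Or.inl h1
  · exact absurd (congrArg List.length heq) (by simp)

lemma triple_split {x y : List ℕ} {u v w : ℕ} (h : [u,v,w] <+ x ++ y) :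
    [u,v,w] <+ x ∨ ([u,v] <+ x ∧ w ∈ y) ∨ (u ∈ x ∧ [v,w] <+ y) ∨ [u,v,w] <+ y := by
  rw [List.sublist_append_iff] at h
  obtain ⟨s1, s2, heq, h1, h2⟩ := h
  rcases s1 with _|⟨a1,_|⟨a2,_|⟨a3,_|⟨a4,t⟩⟩⟩⟩
  · obtain rfl : s2 = [u,v,w] := by simpa using heq.symm
    exact Or.inr (Or.inr (Or.inr h2))
  · obtain ⟨rfl, hs2⟩ : a1 = u ∧ s2 = [v,w] := by simpa using heq.symm
    subst hs2
    exact Or.inr (Or.inr (Or.inl ⟨List.singleton_sublist.1 h1, h2⟩))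
  · obtain ⟨rfl, rfl, hs2⟩ : a1 = u ∧ a2 = v ∧ s2 = [w] := by simpa using heq.symm
    subst hs2
    exact Or.inr (Or.inl ⟨h1, List.singleton_sublist.1 h2⟩)
  · obtain ⟨rfl, rfl, rfl, hs2⟩ : a1 = u ∧ a2 = v ∧ a3 = w ∧ s2 = [] := by simpa using heq.symm
    exact Or.inl h1
  · exact absurd (congrArg List.length heq) (by simp)

lemma quad_split {x y : List ℕ} {p q : ℕ} (h : [p,q,p,q] <+ x ++ y) :
    [p,q,p,q] <+ x ∨ ([p,q,p] <+ x ∧ q ∈ y) ∨ ([p,q] <+ x ∧ [p,q] <+ y) ∨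
    (p ∈ x ∧ [q,p,q] <+ y) ∨ [p,q,p,q] <+ y := by
  rw [List.sublist_append_iff] at h
  obtain ⟨s1, s2, heq, h1, h2⟩ := h
  rcases s1 with _|⟨a1,_|⟨a2,_|⟨a3,_|⟨a4,_|⟨a5,t⟩⟩⟩⟩⟩
  · obtain rfl : s2 = [p,q,p,q] := by simpa using heq.symm
    exact Or.inr (Or.inr (Or.inr (Or.inr h2)))
  · obtain ⟨rfl, hs2⟩ : a1 = p ∧ s2 = [q,p,q] := by simpa using heq.symm
    subst hs2
    exact Or.inr (Or.inr (Or.inr (Or.inl ⟨List.singleton_sublist.1 h1, h2⟩)))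
  · obtain ⟨rfl, rfl, hs2⟩ : a1 = p ∧ a2 = q ∧ s2 = [p,q] := by simpa using heq.symm
    subst hs2
    exact Or.inr (Or.inr (Or.inl ⟨h1, h2⟩))
  · obtain ⟨rfl, rfl, rfl, hs2⟩ : a1 = p ∧ a2 = q ∧ a3 = p ∧ s2 = [q] := by simpa using heq.symm
    subst hs2
    exact Or.inr (Or.inl ⟨h1, List.singleton_sublist.1 h2⟩)
  · obtain ⟨rfl, rfl, rfl, rfl, hs2⟩ : a1 = p ∧ a2 = q ∧ a3 = p ∧ a4 = q ∧ s2 = [] := by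
      simpa using heq.symm
    exact Or.inl h1
  · exact absurd (congrArg List.length heq) (by simp)


lemma NCl_insert_pair {x y : List ℕ} {a : ℕ} (hNC : NCl (x ++ y)) (hax : a ∉ x) (hay : a ∉ y) :
    NCl (x ++ a :: a :: y) := by
  intro p q hpq hsub
  have hmemy : ∀ {r : List ℕ}, a ∈ r → r <+ y → False := fun hm hs => hay (hs.subset hm)
  rcases quad_split hsub with h | ⟨h3, hq⟩ | ⟨hx2, hy2⟩ | ⟨hp, h3⟩ | h
  · exact hNC p q hpq (h.trans (List.sublist_append_left x y))
  · -- [p,q,p] <+ x, q ∈ a::a::y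
    have hqx : q ∈ x := h3.subset (by simp)
    have hqa : q ≠ a := fun hc => hax (hc ▸ hqx)
    have hqy : q ∈ y := by simpa [hqa] using hq
    exact hNC p q hpq (List.Sublist.append h3 (List.singleton_sublist.2 hqy))
  · -- [p,q] <+ x, [p,q] <+ a::a::y
    have hpa : p ≠ a := fun hc => hax (hc ▸ hx2.subset (by simp))
    have : [p,q] <+ y := sublist_cons_ne (sublist_cons_ne hy2 hpa) hpa
    exact hNC p q hpq (List.Sublist.append hx2 this)
  · -- p ∈ x, [q,p,q] <+ a::a::y
    have hpa : p ≠ a := fun hc => hax (hc ▸ hp)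
    by_cases hqa : q = a
    · subst hqa
      -- [q,p,q] <+ q::q::y, p ≠ q
      rcases List.sublist_cons_iff.1 h3 with h' | ⟨r, heq, hr⟩
      · rcases List.sublist_cons_iff.1 h' with h'' | ⟨r, heq, hr⟩
        · exact hmemy (by simp) h''
        · obtain rfl : r = [p,q] := by symm; simpa using heq
          exact hmemy (by simp) hr
      · obtain rfl : r = [p,q] := by symm; simpa using heq
        rcases List.sublist_cons_iff.1 hr with h'' | ⟨r', heq', hr'⟩
        · exact hmemy (by simp) h''
        · simp only [List.cons.injEq] at heq'
          exact hpq heq'.1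
    · have : [q,p,q] <+ y := sublist_cons_ne (sublist_cons_ne h3 hqa) hqa
      exact hNC p q hpq (List.Sublist.append (List.singleton_sublist.2 hp) this)
  · -- [p,q,p,q] <+ a::a::y
    by_cases hpa : p = a
    · subst hpa
      have hqa : q ≠ p := fun hc => hpq hc.symm
      rcases List.sublist_cons_iff.1 h with h' | ⟨r, heq, hr⟩
      · rcases List.sublist_cons_iff.1 h' with h'' | ⟨r, heq, hr⟩
        · exact hmemy (by simp) h''
        · obtain rfl : r = [q,p,q] := by symm; simpa using heq
          exact hmemy (by simp) hr
      · obtain rfl : r = [q,p,q] := by symm; simpa using heq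
        have : [q,p,q] <+ y := sublist_cons_ne hr hqa
        exact hmemy (by simp) this
    · have : [p,q,p,q] <+ y := sublist_cons_ne (sublist_cons_ne h hpa) hpa
      exact hNC p q hpq (this.trans (List.sublist_append_right x y))

lemma NCl_glue {u v : List ℕ} {a : ℕ} (hu : NCl u) (hv : NCl v) (hau : a ∉ u) (hav : a ∉ v)
    (hdisj : ∀ b ∈ u, b ∉ v) : NCl (a :: (u ++ a :: v)) := by
  intro p q hpq hsub
  have hmemv : ∀ {r : List ℕ}, a ∈ r → r <+ v → False := fun hm hs => hav (hs.subset hm)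
  rcases List.sublist_cons_iff.1 hsub with hA | ⟨r, heq, hr⟩
  · -- [p,q,p,q] <+ u ++ a :: v
    rcases quad_split hA with h | ⟨h3, hq⟩ | ⟨hx2, hy2⟩ | ⟨hp, h3⟩ | h
    · exact hu p q hpq h
    · have hqu : q ∈ u := h3.subset (by simp)
      have hqa : q ≠ a := fun hc => hau (hc ▸ hqu)
      have hqv : q ∈ v := by simpa [hqa] using hq
      exact hdisj q hqu hqv
    · have hpu : p ∈ u := hx2.subset (by simp)
      have hpa : p ≠ a := fun hc => hau (hc ▸ hpu)
      have : [p,q] <+ v := sublist_cons_ne hy2 hpa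
      exact hdisj p hpu (this.subset (by simp))
    · have hpa : p ≠ a := fun hc => hau (hc ▸ hp)
      by_cases hqa : q = a
      · subst hqa
        rcases List.sublist_cons_iff.1 h3 with h'' | ⟨r, heq, hr⟩
        · exact hmemv (by simp) h''
        · obtain rfl : r = [p,q] := by symm; simpa using heq
          exact hmemv (by simp) hr
      · have : [q,p,q] <+ v := sublist_cons_ne h3 hqa
        exact hdisj p hp (this.subset (by simp))
    · by_cases hpa : p = a
      · subst hpa
        rcases List.sublist_cons_iff.1 h with h'' | ⟨r, heq, hr⟩
        · exact hmemv (by simp) h''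
        · obtain rfl : r = [q,p,q] := by symm; simpa using heq
          exact hmemv (by simp) hr
      · exact hv p q hpq (sublist_cons_ne h hpa)
  · -- pattern = a :: r
    obtain ⟨rfl, hreq⟩ : p = a ∧ r = [q,p,q] := by
      have h2 := heq
      simp only [List.cons.injEq] at h2
      exact ⟨h2.1, h2.2.symm⟩
    rw [hreq] at hr
    have hqa : q ≠ p := fun hc => hpq hc.symm
    -- hr : [q,p,q] <+ u ++ p :: v, p ∉ u, p ∉ v
    rcases triple_split hr with h | ⟨h2, hw⟩ | ⟨hqu, h2⟩ | h
    · exact hau (h.subset (by simp))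
    · exact hau (h2.subset (by simp))
    · -- q ∈ u, [p,q] <+ p :: v
      rcases List.sublist_cons_iff.1 h2 with h'' | ⟨r', heq', hr'⟩
      · exact hmemv (by simp) h''
      · obtain rfl : r' = [q] := by symm; simpa using heq'
        exact hdisj q hqu (hr'.subset (by simp))
    · rcases List.sublist_cons_iff.1 h with h'' | ⟨r', heq', hr'⟩
      · exact hmemv (by simp) h''
      · simp only [List.cons.injEq] at heq'
        exact hqa heq'.1

lemma exists_first_split {a : ℕ} {l : List ℕ} (h : a ∈ l) :
    ∃ u v, l = u ++ a :: v ∧ a ∉ u := by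
  induction l with
  | nil => simp at h
  | cons x t ih =>
    by_cases hx : x = a
    · exact ⟨[], t, by rw [hx]; rfl, by simp⟩
    · have hat : a ∈ t := by
        rcases List.mem_cons.1 h with h' | h'
        · exact absurd h'.symm hx
        · exact h'
      obtain ⟨u, v, rfl, hu⟩ := ih hat
      exact ⟨x :: u, v, rfl, by simp [hu]; exact fun hc => hx hc.symm⟩

lemma first_split_unique {a : ℕ} {u v u' v' : List ℕ} (h : u ++ a :: v = u' ++ a :: v')
    (hu : a ∉ u) (hu' : a ∉ u') : u = u' ∧ v = v' := by
  induction u generalizing u' with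
  | nil =>
    cases u' with
    | nil => simpa using h
    | cons y s =>
      simp only [List.nil_append, List.cons_append, List.cons.injEq] at h
      exact absurd (by simp [h.1] : a ∈ y :: s) hu'
  | cons x t ih =>
    cases u' with
    | nil =>
      simp only [List.cons_append, List.nil_append, List.cons.injEq] at h
      exact absurd h.1.symm (fun hc => hu (by simp [hc]))
    | cons y s =>
      simp only [List.cons_append, List.cons.injEq] at h
      obtain ⟨rfl, h2⟩ := h
      have := ih h2 (fun hc => hu (by simp [hc])) (fun hc => hu' (by simp [hc]))
      exact ⟨by rw [this.1], this.2⟩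

lemma glue_mem_QW {A : Finset ℕ} {a : ℕ} (ha : a ∈ A) {B : Finset ℕ} (hB : B ⊆ A.erase a)
    {u v : List ℕ} (hu : u ∈ QW B) (hv : v ∈ QW (A.erase a \ B)) :
    a :: (u ++ a :: v) ∈ QW A := by
  have haB : a ∉ B := fun hc => (Finset.mem_erase.1 (hB hc)).1 rfl
  have haD : a ∉ A.erase a \ B := fun hc => (Finset.mem_erase.1 (Finset.mem_sdiff.1 hc).1).1 rfl
  have hau : a ∉ u := fun hc => haB (mem_letter hu hc)
  have hav : a ∉ v := fun hc => haD (mem_letter hv hc)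
  rw [mem_QW]
  constructor
  · intro x
    have cu := (mem_QW.1 hu).1 x
    have cv := (mem_QW.1 hv).1 x
    simp only [List.count_cons, List.count_append]
    by_cases hxa : x = a
    · subst hxa
      rw [List.count_eq_zero.2 hau, List.count_eq_zero.2 hav]
      simp [ha]
    · by_cases hxB : x ∈ B
      · have hxA : x ∈ A := (Finset.mem_erase.1 (hB hxB)).2
        have : x ∉ A.erase a \ B := fun hc => (Finset.mem_sdiff.1 hc).2 hxB
        rw [cu, cv, if_pos hxB, if_neg this]
        simp [hxa, hxA, Ne.symm hxa]
      · by_cases hxA : x ∈ A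
        · have : x ∈ A.erase a \ B := Finset.mem_sdiff.2 ⟨Finset.mem_erase.2 ⟨hxa, hxA⟩, hxB⟩
          rw [cu, cv, if_neg hxB, if_pos this]
          simp [hxa, hxA, Ne.symm hxa]
        · have : x ∉ A.erase a \ B := fun hc => hxA (Finset.mem_erase.1 (Finset.mem_sdiff.1 hc).1).2
          rw [cu, cv, if_neg hxB, if_neg this]
          simp [hxa, hxA, Ne.symm hxa]
  · exact NCl_glue (mem_QW.1 hu).2 (mem_QW.1 hv).2 hau hav
      (fun b hb hb' => (Finset.mem_sdiff.1 (mem_letter hv hb')).2 (mem_letter hu hb))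

lemma QW_decomp {A : Finset ℕ} {w : List ℕ} (hw : w ∈ QW A) (hne : w ≠ []) :
    ∃ a u v, w = a :: (u ++ a :: v) ∧ a ∈ A ∧ a ∉ u ∧ a ∉ v ∧
      u.toFinset ⊆ A.erase a ∧ u ∈ QW (u.toFinset) ∧ v ∈ QW (A.erase a \ u.toFinset) := by
  obtain ⟨a, t, rfl⟩ := List.exists_cons_of_ne_nil hne
  have ha : a ∈ A := mem_letter hw (by simp)
  have hcount : (a :: t).count a = 2 := by rw [(mem_QW.1 hw).1 a, if_pos ha]
  have hat : a ∈ t := by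
    by_contra hc
    rw [List.count_cons_self, List.count_eq_zero.2 hc] at hcount
    omega
  obtain ⟨u, v, rfl, hau⟩ := exists_first_split hat
  have hav : a ∉ v := by
    have h2 := hcount
    simp only [List.count_cons_self, List.count_append, List.count_cons_self,
      List.count_eq_zero.2 hau] at h2
    have : v.count a = 0 := by omega
    exact List.count_eq_zero.1 this
  have hNC : NCl (a :: (u ++ a :: v)) := (mem_QW.1 hw).2
  have hdisj : ∀ b ∈ u, b ∉ v := by
    intro b hbu hbv
    have hba : b ≠ a := fun hc => hau (hc ▸ hbu)
    have hsub : [a,b,a,b] <+ a :: (u ++ a :: v) := by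
      have h1 : [b] <+ u := List.singleton_sublist.2 hbu
      have h2 : [b] <+ v := List.singleton_sublist.2 hbv
      have : ([b] : List ℕ) ++ ([a] ++ [b]) <+ u ++ ([a] ++ v) :=
        List.Sublist.append h1 (List.Sublist.append (List.Sublist.refl [a]) h2)
      have := List.Sublist.append (List.Sublist.refl [a]) this
      simpa using this
    exact hNC a b (fun hc => hba hc.symm) hsub
  have husub : u <+ a :: (u ++ a :: v) :=
    (List.sublist_append_left u (a :: v)).trans (List.sublist_cons_self _ _)
  have hvsub : v <+ a :: (u ++ a :: v) :=
    ((List.sublist_cons_self a v).trans (List.sublist_append_right u (a :: v))).trans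
      (List.sublist_cons_self _ _)
  have hcw : ∀ x, (a :: (u ++ a :: v)).count x = (if x = a then 2 else 0) + u.count x + v.count x := by
    intro x
    simp only [List.count_cons, List.count_append]
    by_cases hxa : x = a
    · subst hxa; rw [List.count_eq_zero.2 hau, List.count_eq_zero.2 hav]; simp
    · simp [Ne.symm hxa, hxa]
  have hvcount : ∀ b ∈ v, v.count b = 2 := by
    intro b hbv
    have hba : b ≠ a := fun hc => hav (hc ▸ hbv)
    have hbu : b ∉ u := fun hc => hdisj b hc hbv
    have := (mem_QW.1 hw).1 b
    rw [hcw b, if_neg hba, List.count_eq_zero.2 hbu, if_pos (mem_letter hw (hvsub.subset hbv))] at this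
    omega
  have hucount : ∀ b ∈ u, u.count b = 2 := by
    intro b hbu
    have hba : b ≠ a := fun hc => hau (hc ▸ hbu)
    have hbv : b ∉ v := hdisj b hbu
    have := (mem_QW.1 hw).1 b
    rw [hcw b, if_neg hba, List.count_eq_zero.2 hbv, if_pos (mem_letter hw (husub.subset hbu))] at this
    omega
  refine ⟨a, u, v, rfl, ha, hau, hav, ?_, ?_, ?_⟩
  · intro b hb
    rw [List.mem_toFinset] at hb
    exact Finset.mem_erase.2 ⟨fun hc => hau (hc ▸ hb), mem_letter hw (husub.subset hb)⟩
  · rw [mem_QW]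
    refine ⟨?_, hNC.sublist husub⟩  -- note: NCl.sublist arg order
    intro x
    by_cases hx : x ∈ u
    · rw [if_pos (List.mem_toFinset.2 hx)]; exact hucount x hx
    · rw [if_neg (fun hc => hx (List.mem_toFinset.1 hc)), List.count_eq_zero.2 hx]
  · rw [mem_QW]
    refine ⟨?_, hNC.sublist hvsub⟩
    intro x
    by_cases hx : x ∈ v
    · have hxa : x ≠ a := fun hc => hav (hc ▸ hx)
      have hxu : x ∉ u := fun hc => hdisj x hc hx
      rw [if_pos (Finset.mem_sdiff.2 ⟨Finset.mem_erase.2 ⟨hxa, mem_letter hw (hvsub.subset hx)⟩,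
        fun hc => hxu (List.mem_toFinset.1 hc)⟩)]
      exact hvcount x hx
    · rw [List.count_eq_zero.2 hx]
      by_cases hxs : x ∈ A.erase a \ u.toFinset
      · -- x ∈ A, x ≠ a, x ∉ u, x ∉ v: count in w is 2 but all parts 0: contradiction
        exfalso
        have := (mem_QW.1 hw).1 x
        obtain ⟨hxe, hxu⟩ := Finset.mem_sdiff.1 hxs
        rw [hcw x, if_neg (Finset.mem_erase.1 hxe).1, if_pos (Finset.mem_erase.1 hxe).2,
          List.count_eq_zero.2 (fun hc => hxu (List.mem_toFinset.2 hc)),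
          List.count_eq_zero.2 hx] at this
        omega
      · rw [if_neg hxs]

lemma QW_card_rec (A : Finset ℕ) (hA : A.Nonempty) :
    (QW A).card
      = ∑ a ∈ A, ∑ B ∈ (A.erase a).powerset, (QW B).card * (QW (A.erase a \ B)).card := by
  classical
  have hrhs : ((A.sigma fun a => ((A.erase a).powerset).sigma fun B =>
      (QW B) ×ˢ (QW (A.erase a \ B))).card)
      = ∑ a ∈ A, ∑ B ∈ (A.erase a).powerset, (QW B).card * (QW (A.erase a \ B)).card := by
    rw [Finset.card_sigma]
    refine Finset.sum_congr rfl fun a _ => ?_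
    rw [Finset.card_sigma]
    exact Finset.sum_congr rfl fun B _ => Finset.card_product _ _
  rw [← hrhs]
  symm
  apply Finset.card_bij
    (fun (x : (_ : ℕ) × (_ : Finset ℕ) × List ℕ × List ℕ) _ => x.1 :: (x.2.2.1 ++ x.1 :: x.2.2.2))
  · rintro ⟨a, B, u, v⟩ hx
    simp only [Finset.mem_sigma, Finset.mem_product] at hx
    obtain ⟨ha, hB, hu, hv⟩ := hx
    exact glue_mem_QW ha (Finset.mem_powerset.1 hB) hu hv
  · rintro ⟨a, B, u, v⟩ hx ⟨a', B', u', v'⟩ hy heq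
    simp only [Finset.mem_sigma, Finset.mem_product] at hx hy
    obtain ⟨ha, hB, hu, hv⟩ := hx
    obtain ⟨ha', hB', hu', hv'⟩ := hy
    simp only [List.cons.injEq] at heq
    obtain ⟨rfl, heq2⟩ := heq
    have hau : a ∉ u := fun hc =>
      (Finset.mem_erase.1 (Finset.mem_powerset.1 hB (toFinset_of_mem_QW hu ▸
        List.mem_toFinset.2 hc))).1 rfl
    have hau' : a ∉ u' := fun hc =>
      (Finset.mem_erase.1 (Finset.mem_powerset.1 hB' (toFinset_of_mem_QW hu' ▸
        List.mem_toFinset.2 hc))).1 rfl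
    obtain ⟨rfl, rfl⟩ := first_split_unique heq2 hau hau'
    have : B = B' := by
      rw [← toFinset_of_mem_QW hu, ← toFinset_of_mem_QW hu']
    subst this
    rfl
  · intro w hw
    have hne : w ≠ [] := by
      intro hc
      obtain ⟨a0, ha0⟩ := hA
      have := (mem_QW.1 hw).1 a0
      rw [if_pos ha0, hc] at this
      simp at this
    obtain ⟨a, u, v, rfl, ha, hau, hav, hsub, hu, hv⟩ := QW_decomp hw hne
    refine ⟨⟨a, u.toFinset, u, v⟩, ?_, rfl⟩
    simp only [Finset.mem_sigma, Finset.mem_product]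
    exact ⟨ha, Finset.mem_powerset.2 hsub, hu, hv⟩

noncomputable def q (m : ℕ) : ℕ := (QW (Finset.range m)).card

lemma QW_card_eq_q (A : Finset ℕ) : (QW A).card = q A.card :=
  QW_card_eq_of_card_eq (by simp)

lemma QW_empty : QW (∅ : Finset ℕ) = {[]} := by
  ext L
  rw [mem_QW]
  simp only [Finset.notMem_empty, if_false, Finset.mem_singleton]
  constructor
  · rintro ⟨hc, -⟩
    cases L with
    | nil => rfl
    | cons x t =>
      have := hc x
      simp at this
  · rintro rfl
    exact ⟨fun a => by simp, fun a b hab hs => by simp at hs⟩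

lemma q_zero : q 0 = 1 := by
  rw [q, Finset.range_zero, QW_empty, Finset.card_singleton]

lemma q_succ (m : ℕ) :
    q (m + 1) = (m + 1) * ∑ k ∈ Finset.range (m + 1), m.choose k * (q k * q (m - k)) := by
  rw [q, QW_card_rec _ (by simp)]
  rw [Finset.sum_congr rfl (fun a ha => ?_), Finset.sum_const, Finset.card_range, smul_eq_mul]
  have hcard : ((Finset.range (m+1)).erase a).card = m := by
    rw [Finset.card_erase_of_mem ha, Finset.card_range]; omega
  rw [Finset.sum_powerset]
  rw [hcard]
  refine Finset.sum_congr rfl fun j hj => ?_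
  rw [Finset.mem_range] at hj
  have : ∀ B ∈ Finset.powersetCard j ((Finset.range (m+1)).erase a),
      (QW B).card * (QW ((Finset.range (m+1)).erase a \ B)).card = q j * q (m - j) := by
    intro B hB
    obtain ⟨hBs, hBc⟩ := Finset.mem_powersetCard.1 hB
    rw [QW_card_eq_q, QW_card_eq_q, hBc, Finset.card_sdiff_of_subset hBs, hcard, hBc]
  rw [Finset.sum_congr rfl this, Finset.sum_const, Finset.card_powersetCard, hcard, smul_eq_mul]

lemma q_eq (m : ℕ) : q m = m.factorial * catalan m := by
  induction m using Nat.strong_induction_on with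
  | _ m ih =>
    match m with
    | 0 => simp [q_zero]
    | (m + 1) =>
      rw [q_succ]
      have : ∀ k ∈ Finset.range (m+1), m.choose k * (q k * q (m - k))
          = m.factorial * (catalan k * catalan (m - k)) := by
        intro k hk
        rw [Finset.mem_range] at hk
        have hk' : k ≤ m := by omega
        rw [ih k (by omega), ih (m - k) (by omega)]
        rw [show m.choose k * (k.factorial * catalan k * ((m-k).factorial * catalan (m-k)))
            = (m.choose k * k.factorial * (m-k).factorial) * (catalan k * catalan (m-k)) by ring,
          Nat.choose_mul_factorial_mul_factorial hk']
      rw [Finset.sum_congr rfl this, ← Finset.mul_sum]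
      rw [show catalan (m+1) = ∑ k ∈ Finset.range (m+1), catalan k * catalan (m - k) by
        rw [catalan_succ]
        exact Fin.sum_univ_eq_sum_range (fun k => catalan k * catalan (m - k)) (m + 1)]
      rw [Nat.factorial_succ]
      ring

lemma cat_fact (m : ℕ) : (m + 1).factorial * (m.factorial * catalan m) = (2 * m).factorial := by
  have h1 : (m + 1) * catalan m = m.centralBinom := by
    rw [catalan_eq_centralBinom_div]
    exact Nat.mul_div_cancel' (Nat.succ_dvd_centralBinom m)
  have h2 : m.centralBinom * (m.factorial * m.factorial) = (2 * m).factorial := by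
    rw [Nat.centralBinom]
    have := Nat.choose_mul_factorial_mul_factorial (show m ≤ 2 * m by omega)
    rw [show 2 * m - m = m by omega] at this
    rw [← this]; ring
  calc (m + 1).factorial * (m.factorial * catalan m)
      = ((m + 1) * catalan m) * (m.factorial * m.factorial) := by
        rw [Nat.factorial_succ]; ring
    _ = (2 * m).factorial := by rw [h1, h2]

noncomputable def platL (L : List ℕ) : ℕ :=
  ((Finset.range (L.length - 1)).filter fun i => L.getD i 0 = L.getD (i+1) 0).card


lemma plat_sum (n : ℕ) (hn : 1 ≤ n) :
    ∑ w ∈ QW (Finset.range n), platL w = n * ((2 * n - 1) * q (n - 1)) := by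
  classical
  set S := (QW (Finset.range n)).sigma
      (fun w => (Finset.range (2*n-1)).filter fun i => w.getD i 0 = w.getD (i+1) 0) with hS
  have hlen : ∀ w ∈ QW (Finset.range n), w.length = 2 * n := by
    intro w hw; rw [length_of_mem_QW hw, Finset.card_range]
  have hsum : ∑ w ∈ QW (Finset.range n), platL w = S.card := by
    rw [hS, Finset.card_sigma]
    refine Finset.sum_congr rfl fun w hw => ?_
    rw [platL, hlen w hw]
  set T := (Finset.range n).sigma
      (fun a => (Finset.range (2*n-1)) ×ˢ QW ((Finset.range n).erase a)) with hT
  have hTcard : T.card = n * ((2 * n - 1) * q (n - 1)) := by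
    rw [hT, Finset.card_sigma]
    rw [Finset.sum_congr rfl (fun a ha => ?_), Finset.sum_const, Finset.card_range, smul_eq_mul]
    rw [Finset.card_product, Finset.card_range, QW_card_eq_q, Finset.card_erase_of_mem ha,
      Finset.card_range]
  rw [hsum, ← hTcard]
  symm
  have husub : ∀ {a : ℕ} {u : List ℕ}, u ∈ QW ((Finset.range n).erase a) → a ∉ u :=
    fun {a u} hu hc => (Finset.mem_erase.1 (mem_letter hu hc)).1 rfl
  have hulen : ∀ {a : ℕ} {u : List ℕ}, u ∈ QW ((Finset.range n).erase a) → a ∈ Finset.range n →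
      u.length = 2 * n - 2 := by
    intro a u hu ha
    rw [length_of_mem_QW hu, Finset.card_erase_of_mem ha, Finset.card_range]
    omega
  apply Finset.card_bij'
    (i := fun (x : (_ : ℕ) × ℕ × List ℕ) _ => (⟨x.2.2.take x.2.1 ++ x.1 :: x.1 :: x.2.2.drop x.2.1, x.2.1⟩ : (_ : List ℕ) × ℕ))
    (j := fun (y : (_ : List ℕ) × ℕ) _ => (⟨y.1.getD y.2 0, (y.2, y.1.take y.2 ++ y.1.drop (y.2+2))⟩ : (_ : ℕ) × ℕ × List ℕ))
  · -- i maps into S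
    rintro ⟨a, i, u⟩ hx
    simp only [hT, Finset.mem_sigma, Finset.mem_product, Finset.mem_range] at hx
    obtain ⟨ha, hi, hu⟩ := hx
    have hau : a ∉ u := husub hu
    have hul : u.length = 2 * n - 2 := hulen hu (Finset.mem_range.2 ha)
    have hti : (u.take i).length = i := by rw [List.length_take]; omega
    have hg1 : (u.take i ++ a :: a :: u.drop i).getD i 0 = a := by
      rw [List.getD_append_right _ _ _ _ (le_of_eq hti), hti]
      simp
    have hg2 : (u.take i ++ a :: a :: u.drop i).getD (i+1) 0 = a := by
      rw [List.getD_append_right _ _ _ _ (hti.le.trans (Nat.le_succ i)), hti,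
        show i + 1 - i = 1 by omega]
      simp
    have hcw' : ∀ x, (u.take i ++ a :: a :: u.drop i).count x
        = u.count x + if x = a then 2 else 0 := by
      intro x
      have hsplit : (u.take i).count x + (u.drop i).count x = u.count x := by
        rw [← List.count_append, List.take_append_drop]
      simp only [List.count_append, List.count_cons]
      by_cases hax : a = x
      · first
        | (simp [hax]; omega)
        | simp [hax]
      · first
        | (simp [hax, show ¬x = a from fun h => hax h.symm]; omega)
        | simp [hax, show ¬x = a from fun h => hax h.symm]
    simp only [hS, Finset.mem_sigma, Finset.mem_filter, Finset.mem_range]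
    refine ⟨?_, by omega, by rw [hg1, hg2]⟩
    rw [mem_QW]
    constructor
    · intro x
      have hcu := (mem_QW.1 hu).1 x
      rw [hcw' x, hcu]
      by_cases hxa : x = a
      · subst hxa
        rw [if_neg (fun hc => (Finset.mem_erase.1 hc).1 rfl), if_pos rfl,
          if_pos (Finset.mem_range.2 ha)]
      · rw [if_neg hxa]
        have hiff : (x ∈ (Finset.range n).erase a) ↔ x ∈ Finset.range n :=
          ⟨fun hc => (Finset.mem_erase.1 hc).2, fun hc => Finset.mem_erase.2 ⟨hxa, hc⟩⟩
        by_cases hxr : x ∈ Finset.range n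
        · rw [if_pos (hiff.2 hxr), if_pos hxr]
        · rw [if_neg (fun hc => hxr (hiff.1 hc)), if_neg hxr]
    · apply NCl_insert_pair
      · rw [List.take_append_drop]; exact (mem_QW.1 hu).2
      · exact fun hc => hau ((List.take_sublist i u).subset hc)
      · exact fun hc => hau ((List.drop_sublist i u).subset hc)
  · -- j maps into T
    rintro ⟨w, i⟩ hy
    simp only [hS, Finset.mem_sigma, Finset.mem_filter, Finset.mem_range] at hy
    obtain ⟨hw, hi, hpl⟩ := hy
    have hwl : w.length = 2 * n := hlen w hw
    have hi1 : i + 1 < w.length := by omega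
    have hi0 : i < w.length := by omega
    obtain ⟨b, hb⟩ : ∃ b, w.getD i 0 = b := ⟨_, rfl⟩
    have haw : b ∈ w := by
      rw [← hb, List.getD_eq_getElem _ _ hi0]
      exact List.getElem_mem hi0
    have ha : b ∈ Finset.range n := mem_letter hw haw
    have hkey : w = w.take i ++ b :: b :: w.drop (i+2) := by
      conv_lhs => rw [← List.take_append_drop i w]
      congr 1
      rw [List.drop_eq_getElem_cons hi0, List.drop_eq_getElem_cons hi1]
      congr 1
      · rw [← hb, List.getD_eq_getElem _ _ hi0]
      · congr 1
        rw [← hb, hpl, List.getD_eq_getElem _ _ hi1]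
    have hcnt : ∀ x, w.count x = (w.take i ++ w.drop (i+2)).count x
        + if x = b then 2 else 0 := by
      intro x
      conv_lhs => rw [hkey]
      simp only [List.count_append, List.count_cons]
      by_cases hax : b = x
      · first
        | (simp [hax]; omega)
        | simp [hax]
      · first
        | (simp [hax, show ¬x = b from fun h => hax h.symm]; omega)
        | simp [hax, show ¬x = b from fun h => hax h.symm]
    have hsubl : w.take i ++ w.drop (i+2) <+ w := by
      conv_rhs => rw [hkey]
      exact List.Sublist.append_left
        ((List.sublist_cons_self _ _).trans (List.sublist_cons_self _ _)) _
    have hca : w.count b = 2 := by rw [(mem_QW.1 hw).1, if_pos ha]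
    simp only [hT, Finset.mem_sigma, Finset.mem_product, Finset.mem_range, hb]
    refine ⟨Finset.mem_range.1 ha, by omega, ?_⟩
    rw [mem_QW]
    refine ⟨?_, NCl.sublist hsubl (mem_QW.1 hw).2⟩
    intro x
    have hcx := hcnt x
    by_cases hxa : x = b
    · subst hxa
      rw [hca, if_pos rfl] at hcx
      rw [if_neg (fun hc => (Finset.mem_erase.1 hc).1 rfl)]
      omega
    · have hwc := (mem_QW.1 hw).1 x
      rw [if_neg hxa] at hcx
      have hiff : (x ∈ (Finset.range n).erase b) ↔ x ∈ Finset.range n :=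
        ⟨fun hc => (Finset.mem_erase.1 hc).2, fun hc => Finset.mem_erase.2 ⟨hxa, hc⟩⟩
      by_cases hxr : x ∈ Finset.range n
      · rw [if_pos (hiff.2 hxr)]; rw [if_pos hxr] at hwc; omega
      · rw [if_neg (fun hc => hxr (hiff.1 hc))]; rw [if_neg hxr] at hwc; omega
  · -- left inverse
    rintro ⟨a, i, u⟩ hx
    simp only [hT, Finset.mem_sigma, Finset.mem_product, Finset.mem_range] at hx
    obtain ⟨ha, hi, hu⟩ := hx
    have hul : u.length = 2 * n - 2 := hulen hu (Finset.mem_range.2 ha)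
    have hti : (u.take i).length = i := by rw [List.length_take]; omega
    have hg1 : (u.take i ++ a :: a :: u.drop i).getD i 0 = a := by
      rw [List.getD_append_right _ _ _ _ (le_of_eq hti), hti]
      simp
    have htk : (u.take i ++ a :: a :: u.drop i).take i = u.take i := List.take_left' hti
    have hdr : (u.take i ++ a :: a :: u.drop i).drop (i + 2) = u.drop i := by
      rw [show u.take i ++ a :: a :: u.drop i = (u.take i ++ [a, a]) ++ u.drop i by simp]
      exact List.drop_left' (by simp [hti])
    dsimp only
    rw [hg1, htk, hdr, List.take_append_drop]
  · -- right inverse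
    rintro ⟨w, i⟩ hy
    simp only [hS, Finset.mem_sigma, Finset.mem_filter, Finset.mem_range] at hy
    obtain ⟨hw, hi, hpl⟩ := hy
    have hwl : w.length = 2 * n := hlen w hw
    have hi1 : i + 1 < w.length := by omega
    have hi0 : i < w.length := by omega
    have hkey : w = w.take i ++ w.getD i 0 :: w.getD i 0 :: w.drop (i+2) := by
      conv_lhs => rw [← List.take_append_drop i w]
      congr 1
      rw [List.drop_eq_getElem_cons hi0, List.drop_eq_getElem_cons hi1]
      congr 1
      · rw [List.getD_eq_getElem _ _ hi0]
      · congr 1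
        rw [hpl, List.getD_eq_getElem _ _ hi1]
    have hti : (w.take i).length = i := by rw [List.length_take]; omega
    have htk : (w.take i ++ w.drop (i+2)).take i = w.take i := List.take_left' hti
    have hdr : (w.take i ++ w.drop (i+2)).drop i = w.drop (i+2) := List.drop_left' hti
    dsimp only
    rw [htk, hdr, ← hkey]

lemma count_ofFn {N : ℕ} (g : Fin N → ℕ) (a : ℕ) :
    (List.ofFn g).count a = (Finset.univ.filter fun i => g i = a).card := by
  classical
  rw [List.ofFn_eq_map]
  have h1 : (List.map g (List.finRange N)).count a
      = Multiset.count a (Multiset.map g (Finset.univ : Finset (Fin N)).val) := by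
    rw [Fin.univ_def]
    simp [List.count]
  rw [h1, Multiset.count_map, Finset.card_def, Finset.filter_val]
  congr 1
  apply Multiset.filter_congr
  intro x _
  exact eq_comm

def toL {n : ℕ} (w : Fin (2*n) → Fin n) : List ℕ := List.ofFn (fun i => (w i : ℕ))

lemma toL_length {n : ℕ} (w : Fin (2*n) → Fin n) : (toL w).length = 2*n := by
  simp [toL]

lemma toL_getD {n : ℕ} (w : Fin (2*n) → Fin n) (i : ℕ) (h : i < 2*n) :
    (toL w).getD i 0 = (w ⟨i, h⟩ : ℕ) := by
  rw [toL, List.getD_eq_getElem _ _ (by simpa using h), List.getElem_ofFn]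

lemma mem_transfer {n : ℕ} (w : Fin (2*n) → Fin n) (hw : w ∈ quasiStirlingSet n) :
    toL w ∈ QW (Finset.range n) := by
  rw [quasiStirlingSet, Finset.mem_filter] at hw
  obtain ⟨-, hcnt, hpat⟩ := hw
  rw [mem_QW]
  constructor
  · intro a
    by_cases ha : a < n
    · have hfeq : (Finset.univ.filter fun i => ((w i : ℕ) = a))
          = (Finset.univ.filter fun i => w i = ⟨a, ha⟩) :=
        Finset.filter_congr (fun i _ => by simp [Fin.ext_iff])
      rw [if_pos (Finset.mem_range.2 ha), toL, count_ofFn, hfeq, hcnt]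
    · rw [if_neg (fun hc => ha (Finset.mem_range.1 hc)), List.count_eq_zero]
      intro hc
      rw [toL, List.mem_ofFn] at hc
      obtain ⟨i, hi⟩ := hc
      exact ha (hi ▸ (w i).isLt)
  · intro a b hab hsub
    rw [List.sublist_iff_exists_fin_orderEmbedding_get_eq] at hsub
    obtain ⟨f, hf⟩ := hsub
    have hlen : (toL w).length = 2*n := toL_length w
    set e : Fin (toL w).length → Fin (2*n) := fun i => ⟨(i : ℕ), hlen ▸ i.isLt⟩ with he
    have hemono : ∀ {i j : Fin (toL w).length}, i < j → e i < e j := fun h => h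
    have hval : ∀ (m : Fin (toL w).length), (toL w).get m = (w (e m) : ℕ) := by
      intro m
      rw [List.get_eq_getElem]
      simp only [toL, List.getElem_ofFn]
      rfl
    have hv0 : (w (e (f ⟨0, by norm_num⟩)) : ℕ) = a := by
      rw [← hval, ← hf ⟨0, by norm_num⟩]; rfl
    have hv1 : (w (e (f ⟨1, by norm_num⟩)) : ℕ) = b := by
      rw [← hval, ← hf ⟨1, by norm_num⟩]; rfl
    have hv2 : (w (e (f ⟨2, by norm_num⟩)) : ℕ) = a := by
      rw [← hval, ← hf ⟨2, by norm_num⟩]; rfl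
    have hv3 : (w (e (f ⟨3, by norm_num⟩)) : ℕ) = b := by
      rw [← hval, ← hf ⟨3, by norm_num⟩]; rfl
    have h01 : e (f ⟨0, by norm_num⟩) < e (f ⟨1, by norm_num⟩) :=
      hemono (f.strictMono (by simp [Fin.mk_lt_mk]))
    have h12 : e (f ⟨1, by norm_num⟩) < e (f ⟨2, by norm_num⟩) :=
      hemono (f.strictMono (by simp [Fin.mk_lt_mk]))
    have h23 : e (f ⟨2, by norm_num⟩) < e (f ⟨3, by norm_num⟩) :=
      hemono (f.strictMono (by simp [Fin.mk_lt_mk]))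
    have h02 : w (e (f ⟨0, by norm_num⟩)) = w (e (f ⟨2, by norm_num⟩)) :=
      Fin.ext (by rw [hv0, hv2])
    have h13 : w (e (f ⟨1, by norm_num⟩)) = w (e (f ⟨3, by norm_num⟩)) :=
      Fin.ext (by rw [hv1, hv3])
    have := hpat _ _ _ _ h01 h12 h23 h02 h13
    apply hab
    rw [← hv0, ← hv1]
    exact congrArg Fin.val this

lemma transfer_surj {n : ℕ} {L : List ℕ} (hL : L ∈ QW (Finset.range n)) :
    ∃ w ∈ quasiStirlingSet n, toL w = L := by
  classical
  have hlen : L.length = 2 * n := by rw [length_of_mem_QW hL, Finset.card_range]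
  have hlt : ∀ i : Fin (2*n), L.getD (i:ℕ) 0 < n := by
    intro i
    have hi : (i:ℕ) < L.length := by rw [hlen]; exact i.isLt
    have : L.getD (i:ℕ) 0 ∈ L := by
      rw [List.getD_eq_getElem _ _ hi]; exact List.getElem_mem hi
    exact Finset.mem_range.1 (mem_letter hL this)
  set w : Fin (2*n) → Fin n := fun i => ⟨L.getD (i:ℕ) 0, hlt i⟩ with hwdef
  have hwv : ∀ i : Fin (2*n), (w i : ℕ) = L.getD (i:ℕ) 0 := fun i => rfl
  have htoL : toL w = L := by
    apply List.ext_getElem (by rw [toL_length, hlen])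
    intro i h1 h2
    simp only [toL, List.getElem_ofFn]
    first
      | rw [List.getD_eq_getElem _ _ h2]
      | rw [hwv, List.getD_eq_getElem _ _ h2]
  refine ⟨w, ?_, htoL⟩
  rw [quasiStirlingSet, Finset.mem_filter]
  refine ⟨Finset.mem_univ _, ?_, ?_⟩
  · intro a
    have hfeq : (Finset.univ.filter fun i => ((w i : ℕ) = (a:ℕ)))
        = (Finset.univ.filter fun i => w i = a) :=
      Finset.filter_congr (fun i _ => by simp [Fin.ext_iff])
    rw [← hfeq, ← count_ofFn]
    have : List.ofFn (fun i => (w i : ℕ)) = L := htoL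
    rw [this, (mem_QW.1 hL).1 (a:ℕ), if_pos (Finset.mem_range.2 a.isLt)]
  · intro i j l p hij hjl hlp h1 h2
    by_contra hne
    have hvne : (w i : ℕ) ≠ (w j : ℕ) := fun hc => hne (Fin.ext hc)
    have hidx : ∀ k : Fin 4, (![(i:ℕ), (j:ℕ), (l:ℕ), (p:ℕ)]) k < L.length := by
      intro k
      rw [hlen]
      fin_cases k
      · exact i.isLt
      · exact j.isLt
      · exact l.isLt
      · exact p.isLt
    have hll : ([(w i : ℕ), (w j : ℕ), (w i : ℕ), (w j : ℕ)] : List ℕ).length = 4 := rfl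
    have hmono4 : ∀ (s t : Fin 4), s < t →
        (![(i:ℕ), (j:ℕ), (l:ℕ), (p:ℕ)]) s < (![(i:ℕ), (j:ℕ), (l:ℕ), (p:ℕ)]) t := by
      intro s t hst
      fin_cases s <;> fin_cases t <;>
        first
          | exact absurd hst (by decide)
          | exact hij
          | exact hjl
          | exact hlp
          | exact hij.trans hjl
          | exact hjl.trans hlp
          | exact (hij.trans hjl).trans hlp
    have hgv : ∀ (m : ℕ) (hm : m < L.length), L.get ⟨m, hm⟩ = L.getD m 0 := by
      intro m hm
      rw [List.get_eq_getElem, List.getD_eq_getElem _ _ hm]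
    have hvi : L.getD (i:ℕ) 0 = (w i : ℕ) := rfl
    have hvj : L.getD (j:ℕ) 0 = (w j : ℕ) := rfl
    have hvl : L.getD (l:ℕ) 0 = (w i : ℕ) := by
      rw [show L.getD (l:ℕ) 0 = (w l : ℕ) from rfl, ← h1]
    have hvp : L.getD (p:ℕ) 0 = (w j : ℕ) := by
      rw [show L.getD (p:ℕ) 0 = (w p : ℕ) from rfl, ← h2]
    have hget4 : ∀ (s : Fin 4),
        L.get ⟨(![(i:ℕ), (j:ℕ), (l:ℕ), (p:ℕ)]) s, hidx s⟩
          = (![(w i : ℕ), (w j : ℕ), (w i : ℕ), (w j : ℕ)]) s := by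
      intro s
      fin_cases s
      · exact (hgv _ _).trans hvi
      · exact (hgv _ _).trans hvj
      · exact (hgv _ _).trans hvl
      · exact (hgv _ _).trans hvp
    have hsub : [(w i : ℕ), (w j : ℕ), (w i : ℕ), (w j : ℕ)] <+ L := by
      rw [List.sublist_iff_exists_fin_orderEmbedding_get_eq]
      refine ⟨OrderEmbedding.ofStrictMono
        (fun k => (⟨(![(i:ℕ), (j:ℕ), (l:ℕ), (p:ℕ)]) (Fin.cast hll k), hidx _⟩ : Fin L.length))
        (fun k k' hkk' => ?_) , fun ix => ?_⟩
      · rw [Fin.mk_lt_mk]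
        exact hmono4 (Fin.cast hll k) (Fin.cast hll k') hkk'
      · show _ = L.get ⟨(![(i:ℕ), (j:ℕ), (l:ℕ), (p:ℕ)]) (Fin.cast hll ix), hidx _⟩
        rw [hget4 (Fin.cast hll ix)]
        fin_cases ix <;> rfl
    exact (mem_QW.1 hL).2 _ _ hvne hsub

lemma plat_transfer {n : ℕ} (w : Fin (2*n) → Fin n) : platW w = platL (toL w) := by
  classical
  rw [platW, platL, toL_length]
  apply Finset.card_bij (fun (i : Fin (2*n)) _ => (i : ℕ))
  · intro i hi
    obtain ⟨-, hlt, heq⟩ : i ∈ Finset.univ ∧ ∃ h : (i:ℕ)+1 < 2*n, w ⟨(i:ℕ)+1, h⟩ = w i := by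
      simpa using Finset.mem_filter.1 hi
    refine Finset.mem_filter.2 ⟨Finset.mem_range.2 (by omega), ?_⟩
    rw [toL_getD _ _ (by omega), toL_getD _ _ hlt]
    have : (⟨(i:ℕ), by omega⟩ : Fin (2*n)) = i := rfl
    rw [this, ← heq]
  · intro a _ b _ h
    exact Fin.ext h
  · intro j hj
    obtain ⟨hjr, heq⟩ := Finset.mem_filter.1 hj
    rw [Finset.mem_range] at hjr
    have hj2 : j + 1 < 2*n := by omega
    have hj1 : j < 2*n := by omega
    refine ⟨⟨j, hj1⟩, Finset.mem_filter.2 ⟨Finset.mem_univ _, ⟨hj2, ?_⟩⟩, rfl⟩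
    apply Fin.ext
    have := heq
    rw [toL_getD _ _ hj1, toL_getD _ _ hj2] at this
    exact this.symm

end QSAux

/-- The total number of plateaus over all quasi-Stirling permutations of size
`n` satisfies `2 · ∑_{w ∈ Q̄_n} plat(w) = (n+1) · (2n)!/(n+1)!`; equivalently,
the average number of plateaus is `(n+1)/2`. -/
theorem average_plateaus_quasiStirling (n : ℕ) (hn : 1 ≤ n) :
    2 * ∑ w ∈ quasiStirlingSet n, (platW w : ℚ)
      = ((n : ℚ) + 1) * (2 * n).factorial / (n + 1).factorial := by
  classical
  have hsum : ∑ w ∈ quasiStirlingSet n, (platW w : ℚ)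
      = ((∑ L ∈ QSAux.QW (Finset.range n), QSAux.platL L : ℕ) : ℚ) := by
    push_cast
    apply Finset.sum_bij (fun w _ => QSAux.toL w)
    · intro w hw
      exact QSAux.mem_transfer w hw
    · intro w hw w' hw' h
      have := List.ofFn_inj.1 h
      funext i
      exact Fin.ext (congrFun this i)
    · intro L hL
      obtain ⟨w, hw, hwe⟩ := QSAux.transfer_surj hL
      exact ⟨w, hw, hwe⟩
    · intro w hw
      rw [QSAux.plat_transfer]
  rw [hsum, QSAux.plat_sum n hn, QSAux.q_eq]
  obtain ⟨m, rfl⟩ : ∃ m, n = m + 1 := ⟨n - 1, by omega⟩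
  have hk : 2 * ((m+1) * ((2*(m+1) - 1) * ((m+1-1).factorial * catalan (m+1-1))))
      * ((m+1)+1).factorial = ((m+1)+1) * (2*(m+1)).factorial := by
    rw [show m+1-1 = m from rfl, show 2*(m+1)-1 = 2*m+1 by omega]
    have h1 := QSAux.cat_fact m
    have h2 : ((m+1)+1).factorial = (m+2) * (m+1).factorial := by
      rw [show (m+1)+1 = m+2 from rfl, Nat.factorial_succ]
    have h3 : (2*(m+1)).factorial = (2*m+2) * ((2*m+1) * (2*m).factorial) := by
      rw [show 2*(m+1) = (2*m+1)+1 by ring, Nat.factorial_succ, Nat.factorial_succ,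
        show (2*m+1)+1 = 2*m+2 by ring]
    rw [h2, h3, ← h1]
    ring
  rw [eq_div_iff (by exact_mod_cast Nat.factorial_ne_zero (m+1+1) : ((m+1+1 : ℕ).factorial : ℚ) ≠ 0)]
  exact_mod_cast hk
end
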